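/- arXiv:1612.02090 — 6 statements merged into one kernel-verified Lean document; each statement's English description precedes it below -/
import Mathlib

section
/- Inverse-probability-of-censoring-weighting identification: let X : Ω → ℝ^k be a random vector such that C is independent of the pair (Y, X), and suppose S_C(Y) > 0 ℙ-almost surely. Then for every measurable g : ℝ × ℝ^k → ℝ with g(Y, X) integrable, the random variable 1{Y ≤ C} · g(Y, X) / S_C(Y) is integrable and E[1{Y ≤ C} · g(Y, X) / S_C(Y)] = E[g(Y, X)]. (This is the core identification mechanism behind the Kaplan–Meier integrals in the paper's Lemma 1: on the event {Y ≤ C} one has Q = Y.) -/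
open MeasureTheory ProbabilityTheory

/-- **Inverse-probability-of-censoring-weighting identification.**
If the censoring variable `C` is independent of the pair `(Y, X)` and `S_C(Y) > 0` a.s.,
where `S_C(s) = ℙ(C ≥ s)`, then for every measurable `g` with `g (Y, X)` integrable, the
random variable `1{Y ≤ C} · g(Y, X) / S_C(Y)` is integrable and its expectation equals
`E[g(Y, X)]`. -/
theorem ipcw_identification
    {Ω : Type*} [MeasurableSpace Ω]
    (μ : Measure Ω) [IsProbabilityMeasure μ] {k : ℕ}
    (Y : Ω → ℝ) (hY : Measurable Y)
    (C : Ω → ℝ) (hC : Measurable C)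
    (X : Ω → (Fin k → ℝ)) (hX : Measurable X)
    (hindep : IndepFun C (fun ω => (Y ω, X ω)) μ)
    (hpos : ∀ᵐ ω ∂μ, 0 < (μ {ω' | Y ω ≤ C ω'}).toReal)
    (g : ℝ × (Fin k → ℝ) → ℝ) (hg : Measurable g)
    (hgint : Integrable (fun ω => g (Y ω, X ω)) μ) :
    Integrable
      (fun ω => (if Y ω ≤ C ω then (1 : ℝ) else 0) * g (Y ω, X ω)
          / (μ {ω' | Y ω ≤ C ω'}).toReal) μ ∧
    (∫ ω, (if Y ω ≤ C ω then (1 : ℝ) else 0) * g (Y ω, X ω)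
          / (μ {ω' | Y ω ≤ C ω'}).toReal ∂μ)
      = ∫ ω, g (Y ω, X ω) ∂μ := by
  set T : Ω → ℝ × (Fin k → ℝ) := fun ω => (Y ω, X ω) with hTdef
  have hTm : Measurable T := hY.prodMk hX
  set ν : Measure ℝ := μ.map C with hνdef
  have hνp : IsProbabilityMeasure ν := Measure.isProbabilityMeasure_map hC.aemeasurable
  set ρ : Measure (ℝ × (Fin k → ℝ)) := μ.map T with hρdef
  have hρp : IsProbabilityMeasure ρ := Measure.isProbabilityMeasure_map hTm.aemeasurable
  set S : ℝ → ℝ := fun y => (ν (Set.Ici y)).toReal with hSdef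
  have hSm : Measurable S := by
    apply Measurable.ennreal_toReal
    exact Antitone.measurable (fun a b hab => measure_mono (Set.Ici_subset_Ici.mpr hab))
  have hset : ∀ y : ℝ, (μ {ω' | y ≤ C ω'}).toReal = S y := by
    intro y
    rw [hSdef]
    congr 1
    rw [hνdef, Measure.map_apply hC measurableSet_Ici]
    rfl
  set F : (ℝ × (Fin k → ℝ)) × ℝ → ℝ :=
    fun q => (if q.1.1 ≤ q.2 then (1 : ℝ) else 0) * g q.1 / S q.1.1 with hFdef
  have hFm : Measurable F := by
    apply Measurable.div
    · apply Measurable.mul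
      · exact Measurable.ite (measurableSet_le (measurable_fst.comp measurable_fst)
          measurable_snd) measurable_const measurable_const
      · exact hg.comp measurable_fst
    · exact hSm.comp (measurable_fst.comp measurable_fst)
  -- map equality
  have hmap : μ.map (fun ω => (T ω, C ω)) = ρ.prod ν :=
    (indepFun_iff_map_prod_eq_prod_map_map hTm.aemeasurable hC.aemeasurable).mp hindep.symm
  -- positivity transported to ρ
  have hposρ : ∀ᵐ p ∂ρ, 0 < S p.1 := by
    have hms : MeasurableSet {p : ℝ × (Fin k → ℝ) | 0 < S p.1} :=
      measurableSet_lt measurable_const (hSm.comp measurable_fst)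
    refine (ae_map_iff hTm.aemeasurable hms).mpr ?_
    filter_upwards [hpos] with ω hω
    show 0 < S (Y ω)
    rw [← hset (Y ω)]; exact hω
  have hgρ : Integrable g ρ :=
    (integrable_map_measure hg.aestronglyMeasurable hTm.aemeasurable).mpr hgint
  -- for each p with 0 < S p.1 : integrability and integral of slice
  have hslice_int : ∀ p : ℝ × (Fin k → ℝ), 0 < S p.1 →
      Integrable (fun c => F (p, c)) ν := by
    intro p hp
    have : (fun c => F (p, c)) =
        fun c => (Set.Ici p.1).indicator (1 : ℝ → ℝ) c * (g p / S p.1) := by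
      funext c
      by_cases hc : p.1 ≤ c <;> simp [hFdef, Set.indicator_apply, hc, mul_div_assoc]
    rw [this]
    exact ((integrable_const (1:ℝ)).indicator measurableSet_Ici).mul_const _
  have hslice_eq : ∀ p : ℝ × (Fin k → ℝ), 0 < S p.1 →
      (∫ c, F (p, c) ∂ν) = g p := by
    intro p hp
    have h1 : (fun c => F (p, c)) =
        fun c => (Set.Ici p.1).indicator (1 : ℝ → ℝ) c * (g p / S p.1) := by
      funext c
      by_cases hc : p.1 ≤ c <;> simp [hFdef, Set.indicator_apply, hc, mul_div_assoc]
    rw [h1, integral_mul_const, integral_indicator_one measurableSet_Ici]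
    rw [show ν.real (Set.Ici p.1) = S p.1 from rfl]
    field_simp
  have hslice_norm : ∀ p : ℝ × (Fin k → ℝ), 0 < S p.1 →
      (∫ c, ‖F (p, c)‖ ∂ν) = ‖g p‖ := by
    intro p hp
    have h1 : (fun c => ‖F (p, c)‖) =
        fun c => (Set.Ici p.1).indicator (1 : ℝ → ℝ) c * (‖g p‖ / S p.1) := by
      funext c
      by_cases hc : p.1 ≤ c <;>
        simp [hFdef, Set.indicator_apply, hc, abs_div, abs_of_pos hp, mul_div_assoc,
          Real.norm_eq_abs]
    rw [h1, integral_mul_const, integral_indicator_one measurableSet_Ici]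
    rw [show ν.real (Set.Ici p.1) = S p.1 from rfl]
    field_simp
  have hFasm : AEStronglyMeasurable F (ρ.prod ν) := hFm.aestronglyMeasurable
  have hFint : Integrable F (ρ.prod ν) := by
    rw [integrable_prod_iff hFasm]
    constructor
    · filter_upwards [hposρ] with p hp using hslice_int p hp
    · apply Integrable.congr hgρ.norm
      filter_upwards [hposρ] with p hp
      exact (hslice_norm p hp).symm
  have hpairm : Measurable (fun ω => (T ω, C ω)) := hTm.prodMk hC
  have hFintμ : Integrable (fun ω => F (T ω, C ω)) μ := by
    have : Integrable F (μ.map fun ω => (T ω, C ω)) := hmap ▸ hFint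
    exact (integrable_map_measure hFm.aestronglyMeasurable hpairm.aemeasurable).mp this
  have heq : (fun ω => (if Y ω ≤ C ω then (1 : ℝ) else 0) * g (Y ω, X ω)
      / (μ {ω' | Y ω ≤ C ω'}).toReal) = fun ω => F (T ω, C ω) := by
    funext ω
    simp only [hFdef, hTdef]
    rw [hset (Y ω)]
  constructor
  · rw [heq]; exact hFintμ
  · rw [heq]
    have h1 : (∫ ω, F (T ω, C ω) ∂μ) = ∫ q, F q ∂(ρ.prod ν) := by
      rw [← hmap, integral_map hpairm.aemeasurable hFm.aestronglyMeasurable]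
    rw [h1, integral_prod F hFint]
    have h2 : (∫ p, (∫ c, F (p, c) ∂ν) ∂ρ) = ∫ p, g p ∂ρ := by
      apply integral_congr_ae
      filter_upwards [hposρ] with p hp using hslice_eq p hp
    rw [h2, hρdef, integral_map hTm.aemeasurable hg.aestronglyMeasurable]
end

section
/- Joint identification under selection on observables and independent censoring: assume additionally that C : Ω → ℝ is independent of the quadruple (Y(0), Y(1), T, X), and let Q = min(Y, C), δ = 1{Y ≤ C}, S_C(s) = ℙ(C ≥ s). Suppose S_C(Y(1)) > 0 and S_C(Y(0)) > 0 ℙ-almost surely. Then for every measurable h : ℝ × ℝ^k → ℝ with h(Y(1), X) and h(Y(0), X) integrable: E[(T · δ / (p(X) · S_C(Q))) · h(Q, X)] = E[h(Y(1), X)] and E[((1 − T) · δ / ((1 − p(X)) · S_C(Q))) · h(Q, X)] = E[h(Y(0), X)]. (This realizes the paper's Lemma 1 in the special case, explicitly allowed by the paper, where the censoring variable is independent of outcomes, treatment and covariates.) -/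
open MeasureTheory ProbabilityTheory

/-- If `T` is `{0,1}`-valued, it equals the indicator of `T ⁻¹' {1}`. -/
lemma aux_indicator_eq {Ω : Type*} (T : Ω → ℝ) (hT01 : ∀ ω, T ω = 0 ∨ T ω = 1) :
    (T ⁻¹' {1}).indicator (fun _ => (1 : ℝ)) = T := by
  funext ω
  rcases hT01 ω with h | h <;> simp [Set.indicator, Set.mem_preimage, h]

/-- Under conditional independence of `(Y0, Y1)` and `T` given `σ(X)`, the conditional
expectation of `T` given the larger σ-algebra `σ((Y0,Y1), X)` is still `p ∘ X`. -/
lemma condexp_join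
    {Ω : Type*} [mΩ : MeasurableSpace Ω] [StandardBorelSpace Ω]
    (μ : Measure Ω) [IsProbabilityMeasure μ] {k : ℕ}
    (X : Ω → (Fin k → ℝ)) (hX : Measurable X)
    (T : Ω → ℝ) (hT : Measurable T) (hT01 : ∀ ω, T ω = 0 ∨ T ω = 1)
    (Y0 Y1 : Ω → ℝ) (hY0 : Measurable Y0) (hY1 : Measurable Y1)
    (hunconf : CondIndepFun (MeasurableSpace.comap X inferInstance) hX.comap_le
      (fun ω => (Y0 ω, Y1 ω)) T μ)
    (p : (Fin k → ℝ) → ℝ) (hp : Measurable p)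
    (hpX : (fun ω => p (X ω)) =ᵐ[μ] μ[T | MeasurableSpace.comap X inferInstance])
    (hb : ∀ᵐ ω ∂μ, |p (X ω)| ≤ 1) :
    (fun ω => p (X ω)) =ᵐ[μ]
      μ[T | MeasurableSpace.comap (fun ω => ((Y0 ω, Y1 ω), X ω)) inferInstance] := by
  set V : Ω → (ℝ × ℝ) × (Fin k → ℝ) := fun ω => ((Y0 ω, Y1 ω), X ω) with hV_def
  have hP : Measurable (fun ω => (Y0 ω, Y1 ω)) := hY0.prodMk hY1
  have hV : Measurable V := hP.prodMk hX
  have hm : MeasurableSpace.comap X inferInstance ≤ mΩ := hX.comap_le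
  have hm₂ : MeasurableSpace.comap V inferInstance ≤ mΩ := hV.comap_le
  have hTabs : ∀ ω, ‖T ω‖ ≤ 1 := by
    intro ω; rcases hT01 ω with h | h <;> simp [h]
  have hintT : Integrable T μ :=
    (integrable_const (1 : ℝ)).mono' hT.aestronglyMeasurable
      (Filter.Eventually.of_forall hTabs)
  have hintp : Integrable (fun ω => p (X ω)) μ :=
    (integrable_const (1 : ℝ)).mono' (hp.comp hX).aestronglyMeasurable
      (by filter_upwards [hb] with ω hω; simpa using hω)
  have htot : ∫ ω, p (X ω) ∂μ = ∫ ω, T ω ∂μ := by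
    rw [integral_congr_ae hpX, integral_condExp hm]
  -- key: equality of set integrals on all `m₂`-measurable sets
  have hkey : ∀ s : Set Ω, MeasurableSet[MeasurableSpace.comap V inferInstance] s →
      ∫ ω in s, p (X ω) ∂μ = ∫ ω in s, T ω ∂μ := by
    have hgen : MeasurableSpace.comap V inferInstance = MeasurableSpace.generateFrom
        ((fun a => V ⁻¹' a) '' Set.image2 (· ×ˢ ·)
          { s : Set (ℝ × ℝ) | MeasurableSet s }
          { t : Set (Fin k → ℝ) | MeasurableSet t }) := by
      conv_lhs => rw [← generateFrom_prod, MeasurableSpace.comap_generateFrom]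
    have hpi : IsPiSystem ((fun a => V ⁻¹' a) '' Set.image2 (· ×ˢ ·)
        { s : Set (ℝ × ℝ) | MeasurableSet s }
        { t : Set (Fin k → ℝ) | MeasurableSet t }) :=
      isPiSystem_prod.comap V
    intro s hs
    refine MeasurableSpace.induction_on_inter (m := MeasurableSpace.comap V inferInstance)
      (C := fun s _ => ∫ ω in s, p (X ω) ∂μ = ∫ ω in s, T ω ∂μ) hgen hpi ?_ ?_ ?_ ?_ s hs
    · simp
    · rintro t ⟨u', ⟨u, hu, v, hv, rfl⟩, rfl⟩
      have hsets : (fun a => V ⁻¹' a) ((fun x1 x2 => x1 ×ˢ x2) u v)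
          = ((fun ω => (Y0 ω, Y1 ω)) ⁻¹' u) ∩ (X ⁻¹' v) := by
        ext ω; simp [hV_def, Set.mem_prod]
      rw [hsets]
      set A : Set Ω := (fun ω => (Y0 ω, Y1 ω)) ⁻¹' u with hA_def
      set B : Set Ω := X ⁻¹' v with hB_def
      set t0 : Set Ω := T ⁻¹' {1} with ht0_def
      have hA : MeasurableSet A := hP hu
      have ht0 : MeasurableSet t0 := hT (measurableSet_singleton 1)
      have hBm : MeasurableSet[MeasurableSpace.comap X inferInstance] B := ⟨v, hv, rfl⟩
      have hB : MeasurableSet B := hm _ hBm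
      have hTind : t0.indicator (fun _ => (1 : ℝ)) = T := aux_indicator_eq T hT01
      have hCI : (μ⟦A ∩ t0 | MeasurableSpace.comap X inferInstance⟧) =ᵐ[μ]
          fun ω => (μ⟦A | MeasurableSpace.comap X inferInstance⟧) ω * (μ⟦t0 | MeasurableSpace.comap X inferInstance⟧) ω :=
        (condIndepFun_iff_condExp_inter_preimage_eq_mul hP hT).1 hunconf u {1} hu
          (measurableSet_singleton 1)
      have ht0p : (μ⟦t0 | MeasurableSpace.comap X inferInstance⟧) =ᵐ[μ] fun ω => p (X ω) := by
        rw [hTind]; exact hpX.symm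
      have hind_At0 : Integrable ((A ∩ t0).indicator (fun _ => (1 : ℝ))) μ :=
        (integrable_const 1).indicator (hA.inter ht0)
      have hindA : Integrable (A.indicator fun ω => p (X ω)) μ := hintp.indicator hA
      have hpm : StronglyMeasurable[MeasurableSpace.comap X inferInstance] (fun ω => p (X ω)) :=
        (hp.comp (measurable_iff_comap_le.mpr le_rfl)).stronglyMeasurable
      have hprod : A.indicator (fun ω => p (X ω))
          = (fun ω => p (X ω)) * A.indicator (fun _ => (1 : ℝ)) := by
        funext ω
        by_cases hω : ω ∈ A <;> simp [Set.indicator, hω]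
      have hmul := condExp_mul_of_stronglyMeasurable_left (μ := μ) hpm
        (by rw [← hprod]; exact hindA) ((integrable_const 1).indicator hA)
      refine Eq.symm ?_
      calc ∫ ω in A ∩ B, T ω ∂μ
          = ∫ ω in A ∩ B, (t0.indicator fun _ => (1 : ℝ)) ω ∂μ := by rw [hTind]
        _ = ∫ ω in (A ∩ B) ∩ t0, (1 : ℝ) ∂μ := setIntegral_indicator ht0
        _ = (μ ((A ∩ t0) ∩ B)).toReal := by
            rw [setIntegral_const, smul_eq_mul, mul_one, Set.inter_right_comm, measureReal_def]
        _ = ∫ ω in B, ((A ∩ t0).indicator fun _ => (1 : ℝ)) ω ∂μ := by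
            rw [setIntegral_indicator (hA.inter ht0), setIntegral_const, smul_eq_mul,
              mul_one, Set.inter_comm, measureReal_def]
        _ = ∫ ω in B, (μ⟦A ∩ t0 | MeasurableSpace.comap X inferInstance⟧) ω ∂μ := (setIntegral_condExp hm hind_At0 hBm).symm
        _ = ∫ ω in B, (μ⟦A | MeasurableSpace.comap X inferInstance⟧) ω * p (X ω) ∂μ := by
            apply setIntegral_congr_ae hB
            filter_upwards [hCI, ht0p] with ω h1 h2 _
            rw [h1, h2]
        _ = ∫ ω in B, (μ[(fun ω => p (X ω)) * A.indicator (fun _ => (1 : ℝ)) | MeasurableSpace.comap X inferInstance]) ω ∂μ := by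
            apply setIntegral_congr_ae hB
            filter_upwards [hmul] with ω h1 _
            rw [h1, Pi.mul_apply]; ring
        _ = ∫ ω in B, ((fun ω => p (X ω)) * A.indicator (fun _ => (1 : ℝ))) ω ∂μ :=
            setIntegral_condExp hm (by rw [← hprod]; exact hindA) hBm
        _ = ∫ ω in B, (A.indicator fun ω => p (X ω)) ω ∂μ := by rw [← hprod]
        _ = ∫ ω in B ∩ A, p (X ω) ∂μ := setIntegral_indicator hA
        _ = ∫ ω in A ∩ B, p (X ω) ∂μ := by rw [Set.inter_comm]
    · intro t htm₂ hCt
      have htm : MeasurableSet[mΩ] t := hm₂ t htm₂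
      have h1 := integral_add_compl htm hintp
      have h2 := integral_add_compl htm hintT
      linarith
    · intro f hdisj hfm hCf
      have hfm' : ∀ i, MeasurableSet[mΩ] (f i) := fun i => hm₂ _ (hfm i)
      rw [integral_iUnion hfm' hdisj hintp.integrableOn,
        integral_iUnion hfm' hdisj hintT.integrableOn]
      exact tsum_congr hCf
  have hGm₂ : Measurable[MeasurableSpace.comap V inferInstance] (fun ω => p (X ω)) := by
    have hVm₂ : Measurable[MeasurableSpace.comap V inferInstance] V :=
      measurable_iff_comap_le.mpr le_rfl
    exact (hp.comp measurable_snd).comp hVm₂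
  exact ae_eq_condExp_of_forall_setIntegral_eq hm₂ hintT
    (fun s _ _ => hintp.integrableOn) (fun s hs _ => hkey s hs)
    ⟨fun ω => p (X ω), hGm₂.stronglyMeasurable, Filter.EventuallyEq.rfl⟩

/-- The IPW step: integrating `A · g(Ys, X)/q(X)` against `μ` gives `∫ g(Ys, X)` when
`q ∘ X` is a version of `E[A | σ((Y0,Y1),X)]` and `q ∘ X ≥ ε` a.s. -/
lemma ipw_step
    {Ω : Type*} [mΩ : MeasurableSpace Ω]
    (μ : Measure Ω) [IsProbabilityMeasure μ] {k : ℕ}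
    (X : Ω → (Fin k → ℝ)) (hX : Measurable X)
    (Y0 Y1 : Ω → ℝ) (hY0 : Measurable Y0) (hY1 : Measurable Y1)
    (A : Ω → ℝ) (hA : Measurable A) (hA01 : ∀ ω, A ω = 0 ∨ A ω = 1)
    (q : (Fin k → ℝ) → ℝ) (hq : Measurable q)
    (ε : ℝ) (hε : 0 < ε) (hqlb : ∀ᵐ ω ∂μ, ε ≤ q (X ω))
    (hce : (fun ω => q (X ω)) =ᵐ[μ]
      μ[A | MeasurableSpace.comap (fun ω => ((Y0 ω, Y1 ω), X ω)) inferInstance])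
    (g : ℝ × (Fin k → ℝ) → ℝ) (hg : Measurable g)
    (Ys : Ω → ℝ) (hYs : Ys = Y0 ∨ Ys = Y1)
    (hint : Integrable (fun ω => g (Ys ω, X ω)) μ) :
    ∫ ω, A ω * (g (Ys ω, X ω) / q (X ω)) ∂μ = ∫ ω, g (Ys ω, X ω) ∂μ := by
  set V : Ω → (ℝ × ℝ) × (Fin k → ℝ) := fun ω => ((Y0 ω, Y1 ω), X ω) with hV_def
  have hV : Measurable V := (hY0.prodMk hY1).prodMk hX
  have hm₂ : MeasurableSpace.comap V inferInstance ≤ mΩ := hV.comap_le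
  have hYsm : Measurable Ys := by rcases hYs with rfl | rfl; exacts [hY0, hY1]
  set G : Ω → ℝ := fun ω => g (Ys ω, X ω) / q (X ω) with hG_def
  have hGm₂ : Measurable[MeasurableSpace.comap V inferInstance] G := by
    have hVm₂ : Measurable[MeasurableSpace.comap V inferInstance] V :=
      measurable_iff_comap_le.mpr le_rfl
    rcases hYs with rfl | rfl
    · exact ((hg.comp ((measurable_fst.comp measurable_fst).prodMk measurable_snd)).div
        (hq.comp measurable_snd)).comp hVm₂
    · exact ((hg.comp ((measurable_snd.comp measurable_fst).prodMk measurable_snd)).div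
        (hq.comp measurable_snd)).comp hVm₂
  have hGmeas : Measurable G := (hg.comp (hYsm.prodMk hX)).div (hq.comp hX)
  have hbd : ∀ᵐ ω ∂μ, ‖(G * A) ω‖ ≤ ε⁻¹ * ‖g (Ys ω, X ω)‖ := by
    filter_upwards [hqlb] with ω hqω
    rcases hA01 ω with h0 | h1
    · simp only [Pi.mul_apply, h0, mul_zero, norm_zero]
      positivity
    · simp only [Pi.mul_apply, h1, mul_one, hG_def]
      rw [norm_div, inv_mul_eq_div]
      gcongr
      · rw [Real.norm_eq_abs, abs_of_pos (hε.trans_le hqω)]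
        exact hqω
  have hGA : Integrable (G * A) μ :=
    (hint.norm.const_mul ε⁻¹).mono' ((hGmeas.mul hA).aestronglyMeasurable) hbd
  have hintA : Integrable A μ :=
    (integrable_const (1 : ℝ)).mono' hA.aestronglyMeasurable
      (Filter.Eventually.of_forall fun ω => by rcases hA01 ω with h | h <;> simp [h])
  have hmul := condExp_mul_of_stronglyMeasurable_left hGm₂.stronglyMeasurable hGA hintA
  calc ∫ ω, A ω * (g (Ys ω, X ω) / q (X ω)) ∂μ
      = ∫ ω, (G * A) ω ∂μ := by
        refine integral_congr_ae (Filter.Eventually.of_forall fun ω => ?_)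
        simp [hG_def, Pi.mul_apply, mul_comm]
    _ = ∫ ω, (μ[G * A | MeasurableSpace.comap V inferInstance]) ω ∂μ := (integral_condExp hm₂).symm
    _ = ∫ ω, G ω * (μ[A | MeasurableSpace.comap V inferInstance]) ω ∂μ := by
        refine integral_congr_ae ?_
        filter_upwards [hmul] with ω hω
        rw [hω, Pi.mul_apply]
    _ = ∫ ω, G ω * q (X ω) ∂μ := by
        refine integral_congr_ae ?_
        filter_upwards [hce] with ω hω
        rw [← hω]
    _ = ∫ ω, g (Ys ω, X ω) ∂μ := by
        refine integral_congr_ae ?_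
        filter_upwards [hqlb] with ω hω
        have hne : q (X ω) ≠ 0 := ne_of_gt (hε.trans_le hω)
        simp only [hG_def]
        exact div_mul_cancel₀ _ hne

/-- The censoring step: under independence of `C` and `(Ys, A, X)`, the IPCW-weighted
integral reduces to the uncensored weighted integral. -/
lemma censor_step
    {Ω : Type*} [mΩ : MeasurableSpace Ω]
    (μ : Measure Ω) [IsProbabilityMeasure μ] {k : ℕ}
    (X : Ω → (Fin k → ℝ)) (hX : Measurable X)
    (A : Ω → ℝ) (hA : Measurable A) (hA01 : ∀ ω, A ω = 0 ∨ A ω = 1)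
    (Ys Y : Ω → ℝ) (hYs : Measurable Ys)
    (hYA : ∀ ω, A ω = 1 → Y ω = Ys ω)
    (q : (Fin k → ℝ) → ℝ) (hq : Measurable q)
    (ε : ℝ) (hε : 0 < ε) (hqlb : ∀ᵐ ω ∂μ, ε ≤ q (X ω))
    (C : Ω → ℝ) (hC : Measurable C)
    (hindep : IndepFun C (fun ω => (Ys ω, A ω, X ω)) μ)
    (hpos : ∀ᵐ ω ∂μ, 0 < (μ {ω' | Ys ω ≤ C ω'}).toReal)
    (Q : Ω → ℝ) (hQ : ∀ ω, Q ω = min (Y ω) (C ω))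
    (δ : Ω → ℝ) (hδ : ∀ ω, δ ω = if Y ω ≤ C ω then (1 : ℝ) else 0)
    (g : ℝ × (Fin k → ℝ) → ℝ) (hg : Measurable g)
    (hint : Integrable (fun ω => g (Ys ω, X ω)) μ) :
    ∫ ω, (A ω * δ ω / (q (X ω) * (μ {ω' | Q ω ≤ C ω'}).toReal)) * g (Q ω, X ω) ∂μ
      = ∫ ω, A ω * (g (Ys ω, X ω) / q (X ω)) ∂μ := by
  set S : ℝ → ℝ := fun s => (μ (C ⁻¹' Set.Ici s)).toReal with hS_def
  have hSdef : ∀ s, (μ {ω' | s ≤ C ω'}).toReal = S s := fun _ => rfl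
  have hS : Measurable S := by
    refine Antitone.measurable (fun s s' hss' => ?_)
    exact ENNReal.toReal_mono (measure_ne_top μ _)
      (measure_mono (Set.preimage_mono (Set.Ici_subset_Ici.2 hss')))
  set V : Ω → ℝ × ℝ × (Fin k → ℝ) := fun ω => (Ys ω, A ω, X ω) with hV_def
  have hV : Measurable V := hYs.prodMk (hA.prodMk hX)
  set K : ℝ × ℝ × (Fin k → ℝ) → ℝ := fun z => z.2.1 * (g (z.1, z.2.2) / q z.2.2) with hK_def
  have hKmeas : Measurable K :=
    (measurable_fst.comp measurable_snd).mul
      ((hg.comp (measurable_fst.prodMk (measurable_snd.comp measurable_snd))).div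
        (hq.comp (measurable_snd.comp measurable_snd)))
  set Φ : ℝ × (ℝ × ℝ × (Fin k → ℝ)) → ℝ :=
    fun z => (if z.2.1 ≤ z.1 then (1 : ℝ) else 0) * (K z.2 / S z.2.1) with hΦ_def
  have hΦ : Measurable Φ := by
    refine Measurable.mul ?_ ?_
    · exact Measurable.ite (measurableSet_le (measurable_fst.comp measurable_snd)
        measurable_fst) measurable_const measurable_const
    · exact (hKmeas.comp measurable_snd).div (hS.comp (measurable_fst.comp measurable_snd))
  set ρC : Measure ℝ := μ.map C with hρC_def
  set ρV : Measure (ℝ × ℝ × (Fin k → ℝ)) := μ.map V with hρV_def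
  haveI : IsProbabilityMeasure ρC := Measure.isProbabilityMeasure_map hC.aemeasurable
  haveI : IsProbabilityMeasure ρV := Measure.isProbabilityMeasure_map hV.aemeasurable
  have hmap : μ.map (fun ω => (C ω, V ω)) = ρC.prod ρV :=
    (indepFun_iff_map_prod_eq_prod_map_map hC.aemeasurable hV.aemeasurable).1 hindep
  -- pointwise identity
  have hpt : ∀ ω, (A ω * δ ω / (q (X ω) * S (Q ω))) * g (Q ω, X ω) = Φ (C ω, V ω) := by
    intro ω
    rcases hA01 ω with h0 | h1
    · simp [hΦ_def, hK_def, hV_def, h0]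
    · by_cases hyc : Y ω ≤ C ω
      · have hys : Y ω = Ys ω := hYA ω h1
        have hQω : Q ω = Ys ω := by rw [hQ ω, min_eq_left hyc, hys]
        have hind : Ys ω ≤ C ω := hys ▸ hyc
        simp only [hΦ_def, hK_def, hV_def, hδ ω, if_pos hyc, if_pos hind, h1, hQω]
        ring
      · have hys : ¬ Ys ω ≤ C ω := by
          rw [← hYA ω h1]; exact hyc
        simp [hΦ_def, hK_def, hV_def, hδ ω, hyc, hys]
  -- inner integrals
  have hsec : ∀ v : ℝ × ℝ × (Fin k → ℝ),
      (fun c => Φ (c, v)) = (Set.Ici v.1).indicator (fun _ => K v / S v.1) := by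
    intro v
    funext c
    by_cases hc : v.1 ≤ c <;> simp [hΦ_def, Set.indicator, hc, Set.mem_Ici]
  have hsecn : ∀ v : ℝ × ℝ × (Fin k → ℝ),
      (fun c => ‖Φ (c, v)‖) = (Set.Ici v.1).indicator (fun _ => ‖K v / S v.1‖) := by
    intro v
    funext c
    by_cases hc : v.1 ≤ c <;> simp [hΦ_def, Set.indicator, hc, Set.mem_Ici]
  have hmapIci : ∀ s : ℝ, (ρC (Set.Ici s)).toReal = S s := by
    intro s
    rw [hρC_def, Measure.map_apply hC measurableSet_Ici]
  have hinner : ∀ v : ℝ × ℝ × (Fin k → ℝ),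
      ∫ c, Φ (c, v) ∂ρC = S v.1 * (K v / S v.1) := by
    intro v
    rw [hsec v, integral_indicator_const _ measurableSet_Ici, smul_eq_mul, measureReal_def, hmapIci]
  have hinnern : ∀ v : ℝ × ℝ × (Fin k → ℝ),
      ∫ c, ‖Φ (c, v)‖ ∂ρC = S v.1 * ‖K v / S v.1‖ := by
    intro v
    rw [hsecn v, integral_indicator_const _ measurableSet_Ici, smul_eq_mul, measureReal_def, hmapIci]
  -- a.e. positivity of S on ρV
  have hposV : ∀ᵐ v ∂ρV, 0 < S v.1 := by
    have hmset : MeasurableSet {v : ℝ × ℝ × (Fin k → ℝ) | 0 < S v.1} :=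
      measurableSet_lt measurable_const (hS.comp measurable_fst)
    rw [hρV_def]
    exact (ae_map_iff hV.aemeasurable hmset).2 hpos
  -- integrability of K on ρV
  have hKint : Integrable K ρV := by
    rw [hρV_def, integrable_map_measure hKmeas.aestronglyMeasurable hV.aemeasurable]
    have hKV : (K ∘ V) = fun ω => A ω * (g (Ys ω, X ω) / q (X ω)) := rfl
    rw [hKV]
    refine (hint.norm.const_mul ε⁻¹).mono'
      ((hA.mul ((hg.comp (hYs.prodMk hX)).div (hq.comp hX))).aestronglyMeasurable) ?_
    filter_upwards [hqlb] with ω hqω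
    rcases hA01 ω with h0 | h1
    · simp only [h0, zero_mul, norm_zero]
      positivity
    · simp only [h1, one_mul]
      rw [norm_div, inv_mul_eq_div]
      gcongr
      · rw [Real.norm_eq_abs, abs_of_pos (hε.trans_le hqω)]
        exact hqω
  have hΦint : Integrable Φ (ρC.prod ρV) := by
    refine (integrable_prod_iff' hΦ.aestronglyMeasurable).2
      ⟨Filter.Eventually.of_forall fun v => ?_, ?_⟩
    · rw [hsec v]
      exact (integrable_const _).indicator measurableSet_Ici
    · refine hKint.norm.congr ?_
      filter_upwards [hposV] with v hv
      rw [hinnern v, norm_div, Real.norm_eq_abs (S v.1), abs_of_pos hv, mul_comm,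
        div_mul_cancel₀ _ (ne_of_gt hv)]
  -- main computation
  calc ∫ ω, (A ω * δ ω / (q (X ω) * (μ {ω' | Q ω ≤ C ω'}).toReal)) * g (Q ω, X ω) ∂μ
      = ∫ ω, Φ (C ω, V ω) ∂μ := by
        simp only [hSdef]
        exact integral_congr_ae (Filter.Eventually.of_forall hpt)
    _ = ∫ z, Φ z ∂(μ.map fun ω => (C ω, V ω)) :=
        (integral_map (hC.prodMk hV).aemeasurable hΦ.aestronglyMeasurable).symm
    _ = ∫ z, Φ z ∂(ρC.prod ρV) := by rw [hmap]
    _ = ∫ v, ∫ c, Φ (c, v) ∂ρC ∂ρV := integral_prod_symm Φ hΦint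
    _ = ∫ v, S v.1 * (K v / S v.1) ∂ρV :=
        integral_congr_ae (Filter.Eventually.of_forall hinner)
    _ = ∫ v, K v ∂ρV := by
        refine integral_congr_ae ?_
        filter_upwards [hposV] with v hv
        rw [mul_comm, div_mul_cancel₀ _ (ne_of_gt hv)]
    _ = ∫ ω, K (V ω) ∂μ := by
        rw [hρV_def]
        exact integral_map hV.aemeasurable hKmeas.aestronglyMeasurable
    _ = ∫ ω, A ω * (g (Ys ω, X ω) / q (X ω)) ∂μ := rfl

/-- **Joint identification under selection on observables and independent censoring.**
Under unconfoundedness and overlap, if moreover `C` is independent of the quadruple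
`(Y(0), Y(1), T, X)` and `S_C(Y(1)) > 0`, `S_C(Y(0)) > 0` a.s., then with `Q = min(Y, C)`
and `δ = 1{Y ≤ C}`, for every measurable `h` with `h(Y(1), X)` and `h(Y(0), X)` integrable,
`E[(T·δ/(p(X)·S_C(Q)))·h(Q, X)] = E[h(Y(1), X)]` and
`E[((1−T)·δ/((1−p(X))·S_C(Q)))·h(Q, X)] = E[h(Y(0), X)]`. -/
theorem ipw_ipcw_joint_identification
    {Ω : Type*} [MeasurableSpace Ω] [StandardBorelSpace Ω] [Nonempty Ω]
    (μ : Measure Ω) [IsProbabilityMeasure μ] {k : ℕ}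
    (X : Ω → (Fin k → ℝ)) (hX : Measurable X)
    (T : Ω → ℝ) (hT : Measurable T) (hT01 : ∀ ω, T ω = 0 ∨ T ω = 1)
    (Y0 Y1 Y : Ω → ℝ) (hY0 : Measurable Y0) (hY1 : Measurable Y1)
    (hY : ∀ ω, Y ω = T ω * Y1 ω + (1 - T ω) * Y0 ω)
    (hunconf : CondIndepFun (MeasurableSpace.comap X inferInstance) hX.comap_le
      (fun ω => (Y0 ω, Y1 ω)) T μ)
    (ε : ℝ) (hε : 0 < ε) (hε2 : ε ≤ 1 / 2)
    (p : (Fin k → ℝ) → ℝ) (hp : Measurable p)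
    (hpX : (fun ω => p (X ω)) =ᵐ[μ] μ[T | MeasurableSpace.comap X inferInstance])
    (hoverlap : ∀ᵐ ω ∂μ, ε ≤ p (X ω) ∧ p (X ω) ≤ 1 - ε)
    (C : Ω → ℝ) (hC : Measurable C)
    (hindep : IndepFun C (fun ω => (Y0 ω, Y1 ω, T ω, X ω)) μ)
    (hpos1 : ∀ᵐ ω ∂μ, 0 < (μ {ω' | Y1 ω ≤ C ω'}).toReal)
    (hpos0 : ∀ᵐ ω ∂μ, 0 < (μ {ω' | Y0 ω ≤ C ω'}).toReal)
    (Q : Ω → ℝ) (hQ : ∀ ω, Q ω = min (Y ω) (C ω))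
    (δ : Ω → ℝ) (hδ : ∀ ω, δ ω = if Y ω ≤ C ω then (1 : ℝ) else 0)
    (h : ℝ × (Fin k → ℝ) → ℝ) (hh : Measurable h)
    (hint1 : Integrable (fun ω => h (Y1 ω, X ω)) μ)
    (hint0 : Integrable (fun ω => h (Y0 ω, X ω)) μ) :
    (∫ ω, (T ω * δ ω / (p (X ω) * (μ {ω' | Q ω ≤ C ω'}).toReal)) * h (Q ω, X ω) ∂μ)
        = (∫ ω, h (Y1 ω, X ω) ∂μ) ∧
    (∫ ω, ((1 - T ω) * δ ω / ((1 - p (X ω)) * (μ {ω' | Q ω ≤ C ω'}).toReal)) * h (Q ω, X ω) ∂μ)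
        = (∫ ω, h (Y0 ω, X ω) ∂μ) := by
  have hb : ∀ᵐ ω ∂μ, |p (X ω)| ≤ 1 := by
    filter_upwards [hoverlap] with ω ⟨h1, h2⟩
    rw [abs_le]
    constructor <;> linarith
  have hqlb1 : ∀ᵐ ω ∂μ, ε ≤ p (X ω) := by
    filter_upwards [hoverlap] with ω hω; exact hω.1
  have hqlb0 : ∀ᵐ ω ∂μ, ε ≤ 1 - p (X ω) := by
    filter_upwards [hoverlap] with ω hω; linarith [hω.2]
  have hce1 := condexp_join μ X hX T hT hT01 Y0 Y1 hY0 hY1 hunconf p hp hpX hb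
  -- conditional expectation of `1 - T`
  have hm₂ : MeasurableSpace.comap (fun ω => ((Y0 ω, Y1 ω), X ω)) inferInstance ≤ _ :=
    ((hY0.prodMk hY1).prodMk hX).comap_le
  have hintT : Integrable T μ :=
    (integrable_const (1 : ℝ)).mono' hT.aestronglyMeasurable
      (Filter.Eventually.of_forall fun ω => by rcases hT01 ω with h' | h' <;> simp [h'])
  have hce0 : (fun ω => 1 - p (X ω)) =ᵐ[μ]
      μ[(fun ω => 1 - T ω) |
        MeasurableSpace.comap (fun ω => ((Y0 ω, Y1 ω), X ω)) inferInstance] := by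
    have h1 : (fun ω => (1 : ℝ) - T ω) = (fun _ => (1 : ℝ)) - T := rfl
    rw [h1]
    have hsub := condExp_sub
      (m := MeasurableSpace.comap (fun ω => ((Y0 ω, Y1 ω), X ω)) inferInstance)
      (integrable_const (1 : ℝ)) hintT
    filter_upwards [hsub, hce1] with ω hω h2
    rw [hω, Pi.sub_apply, condExp_const hm₂, ← h2]
  -- treated arm
  have hA01' : ∀ ω, (1 - T ω) = 0 ∨ (1 - T ω) = 1 := by
    intro ω
    rcases hT01 ω with h' | h'
    · right; rw [h']; ring
    · left; rw [h']; ring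
  have hindep1 : IndepFun C (fun ω => (Y1 ω, T ω, X ω)) μ := by
    have hφ : Measurable (fun z : ℝ × ℝ × ℝ × (Fin k → ℝ) => (z.2.1, z.2.2.1, z.2.2.2)) :=
      (measurable_fst.comp measurable_snd).prodMk
        ((measurable_fst.comp (measurable_snd.comp measurable_snd)).prodMk
          (measurable_snd.comp (measurable_snd.comp measurable_snd)))
    exact hindep.comp measurable_id hφ
  have hindep0 : IndepFun C (fun ω => (Y0 ω, 1 - T ω, X ω)) μ := by
    have hφ : Measurable (fun z : ℝ × ℝ × ℝ × (Fin k → ℝ) =>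
        (z.1, 1 - z.2.2.1, z.2.2.2)) :=
      measurable_fst.prodMk
        ((measurable_const.sub (measurable_fst.comp (measurable_snd.comp measurable_snd))).prodMk
          (measurable_snd.comp (measurable_snd.comp measurable_snd)))
    exact hindep.comp measurable_id hφ
  have hYA1 : ∀ ω, T ω = 1 → Y ω = Y1 ω := by
    intro ω h1; rw [hY ω, h1]; ring
  have hYA0 : ∀ ω, (1 - T ω) = 1 → Y ω = Y0 ω := by
    intro ω h1
    have hT0 : T ω = 0 := by linarith
    rw [hY ω, hT0]; ring
  constructor
  · have e1 := censor_step μ X hX T hT hT01 Y1 Y hY1 hYA1 p hp ε hε hqlb1 C hC hindep1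
      hpos1 Q hQ δ hδ h hh hint1
    have e2 := ipw_step μ X hX Y0 Y1 hY0 hY1 T hT hT01 p hp ε hε hqlb1 hce1 h hh Y1
      (Or.inr rfl) hint1
    exact e1.trans e2
  · have e1 := censor_step μ X hX (fun ω => 1 - T ω) (measurable_const.sub hT) hA01'
      Y0 Y hY0 hYA0 (fun x => 1 - p x) (measurable_const.sub hp) ε hε hqlb0 C hC hindep0
      hpos0 Q hQ δ hδ h hh hint0
    have e2 := ipw_step μ X hX Y0 Y1 hY0 hY1 (fun ω => 1 - T ω) (measurable_const.sub hT)
      hA01' (fun x => 1 - p x) (measurable_const.sub hp) ε hε hqlb0 hce0 h hh Y0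
      (Or.inl rfl) hint0
    exact e1.trans e2
end

section
/- Characterization of the null of zero conditional distribution treatment effect without censoring (combination of the paper's Lemmas 1 and 2 with indicator weights): under unconfoundedness and overlap, the following are equivalent: (a) for every y ∈ ℝ, E[1{Y(1) ≤ y} | σ(X)] = E[1{Y(0) ≤ y} | σ(X)] ℙ-almost surely; (b) for every y ∈ ℝ and every x ∈ ℝ^k, E[(T / p(X) − (1 − T) / (1 − p(X))) · 1{Y ≤ y} · 1{X ≤ x}] = 0. -/
open MeasureTheory ProbabilityTheory


lemma rect_comap_eq_generateFrom {Ω : Type*} [MeasurableSpace Ω] {k : ℕ}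
    (X : Ω → (Fin k → ℝ)) :
    MeasurableSpace.comap X inferInstance =
      MeasurableSpace.generateFrom
        {A | ∃ x : Fin k → ℝ, A = {ω | ∀ j, X ω j ≤ x j}} := by
  have h1 : MeasurableSpace.generateFrom
      (Set.pi Set.univ '' Set.pi Set.univ fun _ : Fin k =>
        Set.range (Set.Iic : ℝ → Set ℝ))
      = (inferInstance : MeasurableSpace (Fin k → ℝ)) := by
    refine generateFrom_eq_pi (fun i => ?_) (fun i => ?_)
    · exact ((BorelSpace.measurable_eq (α := ℝ)).trans (borel_eq_generateFrom_Iic ℝ)).symm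
    · refine ⟨fun n => Set.Iic (n : ℝ), fun n => ⟨n, rfl⟩, ?_⟩
      ext z
      simp only [Set.mem_iUnion, Set.mem_Iic, Set.mem_univ, iff_true]
      exact ⟨Nat.ceil z, Nat.le_ceil z⟩
  rw [← h1, MeasurableSpace.comap_generateFrom]
  congr 1
  ext A
  constructor
  · rintro ⟨B, ⟨g, hg, rfl⟩, rfl⟩
    choose x hx using fun i => hg i (Set.mem_univ i)
    refine ⟨x, ?_⟩
    ext ω
    simp only [Set.mem_preimage, Set.mem_pi, Set.mem_univ, forall_true_left, Set.mem_setOf_eq]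
    exact forall_congr' fun j => by rw [← hx j]; rfl
  · rintro ⟨x, rfl⟩
    refine ⟨Set.pi Set.univ fun j => Set.Iic (x j),
      ⟨fun j => Set.Iic (x j), fun j _ => ⟨x j, rfl⟩, rfl⟩, ?_⟩
    ext ω
    simp [Set.mem_pi, Pi.le_def]

lemma isPiSystem_rect {Ω : Type*} {k : ℕ} (X : Ω → (Fin k → ℝ)) :
    IsPiSystem {A | ∃ x : Fin k → ℝ, A = {ω | ∀ j, X ω j ≤ x j}} := by
  rintro _ ⟨x, rfl⟩ _ ⟨x', rfl⟩ -
  refine ⟨fun j => min (x j) (x' j), ?_⟩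
  ext ω
  simp only [Set.mem_inter_iff, Set.mem_setOf_eq, le_min_iff]
  exact ⟨fun ⟨h1, h2⟩ j => ⟨h1 j, h2 j⟩, fun h => ⟨fun j => (h j).1, fun j => (h j).2⟩⟩

lemma term_integrable {Ω : Type*} {m : MeasurableSpace Ω} [mΩ : MeasurableSpace Ω]
    (μ : Measure Ω) [IsProbabilityMeasure μ] (hm : m ≤ mΩ)
    (q g : Ω → ℝ) (hq : Measurable[m] q)
    (hgaem : AEStronglyMeasurable g μ) (hgbd : ∀ᵐ ω ∂μ, ‖g ω‖ ≤ 1)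
    (A : Set Ω) (hA : MeasurableSet[m] A)
    (ε : ℝ) (hε : 0 < ε) (hq_ae : ∀ᵐ ω ∂μ, ε ≤ q ω) :
    Integrable (fun ω => A.indicator (fun _ => (1:ℝ)) ω / q ω * g ω) μ := by
  have hh1m : StronglyMeasurable[m] fun ω => A.indicator (fun _ => (1:ℝ)) ω / q ω :=
    ((measurable_const.indicator hA).div hq).stronglyMeasurable
  refine Integrable.mono' (integrable_const (ε⁻¹)) ?_ ?_
  · exact (hh1m.mono hm).aestronglyMeasurable.mul hgaem
  · filter_upwards [hq_ae, hgbd] with ω h1q hgw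
    have hq0 : 0 < q ω := lt_of_lt_of_le hε h1q
    have hb : ‖A.indicator (fun _ => (1:ℝ)) ω / q ω‖ ≤ ε⁻¹ := by
      rw [Real.norm_eq_abs, abs_div, abs_of_pos hq0]
      have hi : |A.indicator (fun _ => (1:ℝ)) ω| ≤ 1 := by
        by_cases h : ω ∈ A <;> simp [Set.indicator, h]
      calc |A.indicator (fun _ => (1:ℝ)) ω| / q ω ≤ 1 / q ω := by gcongr
        _ ≤ 1 / ε := by gcongr
        _ = ε⁻¹ := one_div ε
    calc ‖A.indicator (fun _ => (1:ℝ)) ω / q ω * g ω‖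
        = ‖A.indicator (fun _ => (1:ℝ)) ω / q ω‖ * ‖g ω‖ := norm_mul _ _
      _ ≤ ε⁻¹ * 1 := mul_le_mul hb hgw (norm_nonneg _) (by positivity)
      _ = ε⁻¹ := mul_one _

lemma term_integral {Ω : Type*} {m : MeasurableSpace Ω} [mΩ : MeasurableSpace Ω]
    (μ : Measure Ω) [IsProbabilityMeasure μ] (hm : m ≤ mΩ)
    (q g F : Ω → ℝ) (hq : Measurable[m] q)
    (hgint : Integrable g μ) (hgbd : ∀ᵐ ω ∂μ, ‖g ω‖ ≤ 1)
    (hkey : μ[g|m] =ᵐ[μ] fun ω => q ω * F ω)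
    (A : Set Ω) (hA : MeasurableSet[m] A)
    (ε : ℝ) (hε : 0 < ε) (hq_ae : ∀ᵐ ω ∂μ, ε ≤ q ω) :
    ∫ ω, (A.indicator (fun _ => (1:ℝ)) ω / q ω) * g ω ∂μ = ∫ ω in A, F ω ∂μ := by
  set h1 : Ω → ℝ := fun ω => A.indicator (fun _ => (1:ℝ)) ω / q ω with hh1
  have hh1m : StronglyMeasurable[m] h1 :=
    ((measurable_const.indicator hA).div hq).stronglyMeasurable
  have hint : Integrable (h1 * g) μ :=
    term_integrable μ hm q g hq hgint.1 hgbd A hA ε hε hq_ae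
  calc ∫ ω, (A.indicator (fun _ => (1:ℝ)) ω / q ω) * g ω ∂μ
      = ∫ ω, (μ[h1 * g|m]) ω ∂μ := (integral_condExp hm).symm
    _ = ∫ ω, h1 ω * (μ[g|m]) ω ∂μ := by
        refine integral_congr_ae ?_
        filter_upwards [condExp_mul_of_stronglyMeasurable_left hh1m hint hgint] with ω h
        exact h
    _ = ∫ ω, A.indicator (fun _ => (1:ℝ)) ω * F ω ∂μ := by
        refine integral_congr_ae ?_
        filter_upwards [hkey, hq_ae] with ω hk hq1
        rw [hk]
        have hq0 : q ω ≠ 0 := (lt_of_lt_of_le hε hq1).ne'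
        simp only [hh1]
        field_simp
    _ = ∫ ω in A, F ω ∂μ := by
        rw [← integral_indicator (hm A hA)]
        congr 1; funext ω
        by_cases h : ω ∈ A <;> simp [Set.indicator, h]


theorem zero_conditional_DTE_aux
    {Ω : Type*} {m : MeasurableSpace Ω} [mΩ : MeasurableSpace Ω] [StandardBorelSpace Ω]
    [Nonempty Ω]
    (μ : Measure Ω) [IsProbabilityMeasure μ] {k : ℕ}
    (X : Ω → (Fin k → ℝ)) (hX : Measurable X)
    (hm : m ≤ mΩ) (hmeq : m = MeasurableSpace.comap X inferInstance)
    (T : Ω → ℝ) (hT : Measurable T) (hT01 : ∀ ω, T ω = 0 ∨ T ω = 1)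
    (Y0 Y1 Y : Ω → ℝ) (hY0 : Measurable Y0) (hY1 : Measurable Y1)
    (hY : ∀ ω, Y ω = T ω * Y1 ω + (1 - T ω) * Y0 ω)
    (hunconf : CondIndepFun m hm (fun ω => (Y0 ω, Y1 ω)) T μ)
    (ε : ℝ) (hε : 0 < ε) (hε2 : ε ≤ 1 / 2)
    (p : (Fin k → ℝ) → ℝ) (hp : Measurable p)
    (hpX : (fun ω => p (X ω)) =ᵐ[μ] μ[T | m])
    (hoverlap : ∀ᵐ ω ∂μ, ε ≤ p (X ω) ∧ p (X ω) ≤ 1 - ε) :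
    (∀ y : ℝ,
        μ[(fun ω => if Y1 ω ≤ y then (1 : ℝ) else 0) | m]
          =ᵐ[μ]
        μ[(fun ω => if Y0 ω ≤ y then (1 : ℝ) else 0) | m])
      ↔
    (∀ (y : ℝ) (x : Fin k → ℝ),
        (∫ ω, (T ω / p (X ω) - (1 - T ω) / (1 - p (X ω)))
            * (if Y ω ≤ y then (1 : ℝ) else 0)
            * (if ∀ j, X ω j ≤ x j then (1 : ℝ) else 0) ∂μ) = 0) := by
  classical
  -- notation
  set f1 : ℝ → Ω → ℝ := fun y ω => if Y1 ω ≤ y then (1 : ℝ) else 0 with hf1def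
  set f0 : ℝ → Ω → ℝ := fun y ω => if Y0 ω ≤ y then (1 : ℝ) else 0 with hf0def
  set g1 : ℝ → Ω → ℝ := fun y ω => T ω * (if Y1 ω ≤ y then (1 : ℝ) else 0) with hg1def
  set g0 : ℝ → Ω → ℝ := fun y ω => (1 - T ω) * (if Y0 ω ≤ y then (1 : ℝ) else 0) with hg0def
  set A : (Fin k → ℝ) → Set Ω := fun x => {ω | ∀ j, X ω j ≤ x j} with hAdef
  -- basic facts
  have hover1 : ∀ᵐ ω ∂μ, ε ≤ p (X ω) := by filter_upwards [hoverlap] with ω h; exact h.1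
  have hover0 : ∀ᵐ ω ∂μ, ε ≤ 1 - p (X ω) := by
    filter_upwards [hoverlap] with ω h; linarith [h.2]
  have hpXm : Measurable[m] (fun ω => p (X ω)) := by
    rw [hmeq]; exact hp.comp (fun s hs => ⟨s, hs, rfl⟩)
  have hpXm' : Measurable[m] (fun ω => 1 - p (X ω)) := measurable_const.sub hpXm
  have hAm : ∀ x, MeasurableSet[m] (A x) := by
    intro x
    rw [hmeq]
    refine ⟨Set.pi Set.univ fun j => Set.Iic (x j),
      MeasurableSet.univ_pi fun j => measurableSet_Iic, ?_⟩
    ext ω; simp [Set.mem_pi, hAdef, Pi.le_def]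
  have hTbd : ∀ ω, ‖T ω‖ ≤ 1 := by
    intro ω; rcases hT01 ω with h | h <;> simp [h]
  have hTint : Integrable T μ :=
    Integrable.mono' (integrable_const 1) hT.aestronglyMeasurable
      (Filter.Eventually.of_forall hTbd)
  have hind1 : ∀ y, Measurable (f1 y) := fun y =>
    Measurable.ite (hY1 measurableSet_Iic) measurable_const measurable_const
  have hind0 : ∀ y, Measurable (f0 y) := fun y =>
    Measurable.ite (hY0 measurableSet_Iic) measurable_const measurable_const
  have hg1bd : ∀ y, ∀ᵐ ω ∂μ, ‖g1 y ω‖ ≤ 1 := by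
    intro y
    refine Filter.Eventually.of_forall fun ω => ?_
    rcases hT01 ω with h | h <;> by_cases hy : Y1 ω ≤ y <;>
      simp [hg1def, h, hy]
  have hg0bd : ∀ y, ∀ᵐ ω ∂μ, ‖g0 y ω‖ ≤ 1 := by
    intro y
    refine Filter.Eventually.of_forall fun ω => ?_
    rcases hT01 ω with h | h <;> by_cases hy : Y0 ω ≤ y <;>
      simp [hg0def, h, hy]
  have hg1int : ∀ y, Integrable (g1 y) μ := fun y =>
    Integrable.mono' (integrable_const 1) (hT.mul (hind1 y)).aestronglyMeasurable (hg1bd y)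
  have hg0int : ∀ y, Integrable (g0 y) μ := fun y =>
    Integrable.mono' (integrable_const 1)
      ((measurable_const.sub hT).mul (hind0 y)).aestronglyMeasurable (hg0bd y)
  -- conditional independence consequences
  have key1 : ∀ y, μ[g1 y | m] =ᵐ[μ] fun ω => p (X ω) * (μ[f1 y | m]) ω := by
    intro y
    have hCI := (condIndepFun_iff_condExp_inter_preimage_eq_mul (hY0.prodMk hY1) hT).mp hunconf
      (Set.univ ×ˢ Set.Iic y) {1} (MeasurableSet.univ.prod measurableSet_Iic)
      (measurableSet_singleton 1)
    have e1 : Set.indicator ((fun ω => (Y0 ω, Y1 ω)) ⁻¹' (Set.univ ×ˢ Set.Iic y) ∩ T ⁻¹' {1})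
        (fun _ => (1:ℝ)) = g1 y := by
      funext ω
      rcases hT01 ω with h | h <;> by_cases hy : Y1 ω ≤ y <;>
        simp [Set.indicator, Set.mem_prod, Set.mem_preimage, Set.mem_singleton_iff,
          h, hy, hg1def]
    have e2 : Set.indicator ((fun ω => (Y0 ω, Y1 ω)) ⁻¹' (Set.univ ×ˢ Set.Iic y))
        (fun _ => (1:ℝ)) = f1 y := by
      funext ω
      by_cases hy : Y1 ω ≤ y <;> simp [Set.indicator, Set.mem_prod, hy, hf1def]
    have e3 : Set.indicator (T ⁻¹' {1}) (fun _ => (1:ℝ)) = T := by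
      funext ω
      rcases hT01 ω with h | h <;>
        simp [Set.indicator, Set.mem_preimage, Set.mem_singleton_iff, h]
    rw [e1, e2, e3] at hCI
    filter_upwards [hCI, hpX] with ω h1 h2
    rw [h1, ← h2]
    ring
  have key0 : ∀ y, μ[g0 y | m] =ᵐ[μ] fun ω => (1 - p (X ω)) * (μ[f0 y | m]) ω := by
    intro y
    have hCI := (condIndepFun_iff_condExp_inter_preimage_eq_mul (hY0.prodMk hY1) hT).mp hunconf
      (Set.Iic y ×ˢ Set.univ) {0} ((measurableSet_Iic).prod MeasurableSet.univ)
      (measurableSet_singleton 0)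
    have e1 : Set.indicator ((fun ω => (Y0 ω, Y1 ω)) ⁻¹' (Set.Iic y ×ˢ Set.univ) ∩ T ⁻¹' {0})
        (fun _ => (1:ℝ)) = g0 y := by
      funext ω
      rcases hT01 ω with h | h <;> by_cases hy : Y0 ω ≤ y <;>
        simp [Set.indicator, Set.mem_prod, Set.mem_preimage, Set.mem_singleton_iff,
          h, hy, hg0def]
    have e2 : Set.indicator ((fun ω => (Y0 ω, Y1 ω)) ⁻¹' (Set.Iic y ×ˢ Set.univ))
        (fun _ => (1:ℝ)) = f0 y := by
      funext ω
      by_cases hy : Y0 ω ≤ y <;> simp [Set.indicator, Set.mem_prod, hy, hf0def]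
    have e3 : Set.indicator (T ⁻¹' {0}) (fun _ => (1:ℝ)) = fun ω => 1 - T ω := by
      funext ω
      rcases hT01 ω with h | h <;>
        simp [Set.indicator, Set.mem_preimage, Set.mem_singleton_iff, h]
    have hsub : μ[(fun ω => 1 - T ω)|m] =ᵐ[μ] fun ω => 1 - p (X ω) := by
      have h := condExp_sub (m := m) (μ := μ) (integrable_const (1:ℝ)) hTint
      have e : (fun ω : Ω => 1 - T ω) = (fun _ => (1:ℝ)) - T := rfl
      rw [e]
      filter_upwards [h, hpX] with ω hω h2
      rw [hω]
      simp only [Pi.sub_apply, condExp_const hm, ← h2]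
    rw [e1, e2, e3] at hCI
    filter_upwards [hCI, hsub] with ω h1 h2
    rw [h1, h2]
    ring
  -- the core identity
  have core : ∀ (y : ℝ) (x : Fin k → ℝ),
      (∫ ω, (T ω / p (X ω) - (1 - T ω) / (1 - p (X ω)))
          * (if Y ω ≤ y then (1 : ℝ) else 0)
          * (if ∀ j, X ω j ≤ x j then (1 : ℝ) else 0) ∂μ)
        = ∫ ω in A x, ((μ[f1 y | m]) ω - (μ[f0 y | m]) ω) ∂μ := by
    intro y x
    have hptw : ∀ ω, (T ω / p (X ω) - (1 - T ω) / (1 - p (X ω)))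
          * (if Y ω ≤ y then (1:ℝ) else 0) * (if ∀ j, X ω j ≤ x j then (1:ℝ) else 0)
        = ((A x).indicator (fun _ => (1:ℝ)) ω / p (X ω)) * g1 y ω
          - ((A x).indicator (fun _ => (1:ℝ)) ω / (1 - p (X ω))) * g0 y ω := by
      intro ω
      have hind : (A x).indicator (fun _ => (1:ℝ)) ω
          = (if ∀ j, X ω j ≤ x j then (1:ℝ) else 0) := by
        by_cases h : ∀ j, X ω j ≤ x j <;> simp [hAdef, Set.indicator, Set.mem_setOf_eq, h]
      rw [hind]
      rcases hT01 ω with h | h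
      · have hYe : (if Y ω ≤ y then (1:ℝ) else 0) = (if Y0 ω ≤ y then (1:ℝ) else 0) := by
          rw [hY ω, h]; norm_num
        rw [hYe]
        simp only [hg1def, hg0def, h]
        ring
      · have hYe : (if Y ω ≤ y then (1:ℝ) else 0) = (if Y1 ω ≤ y then (1:ℝ) else 0) := by
          rw [hY ω, h]; norm_num
        rw [hYe]
        simp only [hg1def, hg0def, h]
        ring
    have hint1 : Integrable
        (fun ω => (A x).indicator (fun _ => (1:ℝ)) ω / p (X ω) * g1 y ω) μ :=
      term_integrable μ hm _ _ hpXm (hg1int y).1 (hg1bd y) (A x) (hAm x) ε hε hover1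
    have hint0 : Integrable
        (fun ω => (A x).indicator (fun _ => (1:ℝ)) ω / (1 - p (X ω)) * g0 y ω) μ :=
      term_integrable μ hm _ _ hpXm' (hg0int y).1 (hg0bd y) (A x) (hAm x) ε hε hover0
    calc (∫ ω, (T ω / p (X ω) - (1 - T ω) / (1 - p (X ω)))
            * (if Y ω ≤ y then (1:ℝ) else 0) * (if ∀ j, X ω j ≤ x j then (1:ℝ) else 0) ∂μ)
        = ∫ ω, ((A x).indicator (fun _ => (1:ℝ)) ω / p (X ω) * g1 y ω
            - (A x).indicator (fun _ => (1:ℝ)) ω / (1 - p (X ω)) * g0 y ω) ∂μ :=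
          integral_congr_ae (Filter.Eventually.of_forall hptw)
      _ = (∫ ω, (A x).indicator (fun _ => (1:ℝ)) ω / p (X ω) * g1 y ω ∂μ)
          - ∫ ω, (A x).indicator (fun _ => (1:ℝ)) ω / (1 - p (X ω)) * g0 y ω ∂μ :=
          integral_sub hint1 hint0
      _ = (∫ ω in A x, (μ[f1 y | m]) ω ∂μ) - ∫ ω in A x, (μ[f0 y | m]) ω ∂μ := by
          rw [term_integral μ hm _ _ _ hpXm (hg1int y) (hg1bd y) (key1 y) (A x) (hAm x)
              ε hε hover1,
            term_integral μ hm _ _ _ hpXm' (hg0int y) (hg0bd y) (key0 y) (A x) (hAm x)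
              ε hε hover0]
      _ = ∫ ω in A x, ((μ[f1 y | m]) ω - (μ[f0 y | m]) ω) ∂μ :=
          (integral_sub integrable_condExp.integrableOn integrable_condExp.integrableOn).symm
  constructor
  · intro ha y x
    rw [core y x]
    have h0 : ∀ᵐ ω ∂μ, (μ[f1 y | m]) ω - (μ[f0 y | m]) ω = 0 := by
      filter_upwards [ha y] with ω h; rw [h, sub_self]
    calc ∫ ω in A x, ((μ[f1 y | m]) ω - (μ[f0 y | m]) ω) ∂μ
        = ∫ _ω in A x, (0 : ℝ) ∂μ := integral_congr_ae (ae_restrict_of_ae h0)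
      _ = 0 := integral_zero _ _
  · intro hb y
    set D : Ω → ℝ := fun ω => (μ[f1 y | m]) ω - (μ[f0 y | m]) ω with hDdef
    have hDint : Integrable D μ := integrable_condExp.sub integrable_condExp
    have hbasic : ∀ x, ∫ ω in A x, D ω ∂μ = 0 := by
      intro x; rw [← core y x]; exact hb y x
    have htotal : ∫ ω, D ω ∂μ = 0 := by
      have hmono : Monotone fun n : ℕ => A (fun _ => (n : ℝ)) := by
        intro a b hab ω hω j
        exact le_trans (hω j) (by show (a:ℝ) ≤ (b:ℝ); exact_mod_cast hab)
      have hunion : (⋃ n : ℕ, A (fun _ => (n : ℝ))) = Set.univ := by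
        ext ω
        simp only [Set.mem_iUnion, Set.mem_univ, iff_true, hAdef, Set.mem_setOf_eq]
        refine ⟨Nat.ceil (∑ j, |X ω j|), fun j => ?_⟩
        calc X ω j ≤ |X ω j| := le_abs_self _
          _ ≤ ∑ i, |X ω i| := Finset.single_le_sum (f := fun i => |X ω i|) (fun i _ => abs_nonneg _) (Finset.mem_univ j)
          _ ≤ Nat.ceil (∑ i, |X ω i|) := Nat.le_ceil _
      have ht := tendsto_setIntegral_of_monotone (fun n : ℕ => hm _ (hAm _)) hmono
        (hDint.integrableOn)
      rw [hunion, Measure.restrict_univ] at ht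
      have ht2 : Filter.Tendsto (fun n : ℕ => ∫ ω in A (fun _ => (n : ℝ)), D ω ∂μ)
          Filter.atTop (nhds 0) := by
        simp only [hbasic]; exact tendsto_const_nhds
      exact tendsto_nhds_unique ht ht2
    have hall : ∀ s, MeasurableSet[m] s → ∫ ω in s, D ω ∂μ = 0 := by
      intro s hs
      refine MeasurableSpace.induction_on_inter (m := m) (C := fun t _ => ∫ ω in t, D ω ∂μ = 0)
        (hmeq.trans (rect_comap_eq_generateFrom X)) (isPiSystem_rect X) (by show ∫ ω in (∅ : Set Ω), D ω ∂μ = 0; rw [Measure.restrict_empty, integral_zero_measure])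
        ?_ ?_ ?_ s hs
      · rintro t ⟨x, rfl⟩
        exact hbasic x
      · intro t ht hct
        have hadd := integral_add_compl (hm t ht) hDint
        rw [hct] at hadd
        rw [← htotal, ← hadd, zero_add]
      · intro f hdisj hmeas hC
        rw [integral_iUnion (fun i => hm _ (hmeas i)) hdisj hDint.integrableOn]
        simp [hC]
    have hD0 : D =ᵐ[μ] 0 := by
      haveI : SigmaFinite (μ.trim hm) := inferInstance
      refine ae_eq_zero_of_forall_setIntegral_eq_of_finStronglyMeasurable_trim hm
        (fun s _ _ => hDint.integrableOn) (fun s hs _ => hall s hs) ?_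
      exact (stronglyMeasurable_condExp.sub stronglyMeasurable_condExp).finStronglyMeasurable _
    filter_upwards [hD0] with ω h
    have : (μ[f1 y | m]) ω - (μ[f0 y | m]) ω = 0 := h
    linarith

/-- **Characterization of the null of zero conditional distribution treatment effect,
no censoring** (combination of the paper's Lemmas 1 and 2 with indicator weights):
under unconfoundedness and overlap, `E[1{Y(1) ≤ y} | σ(X)] = E[1{Y(0) ≤ y} | σ(X)]` a.s.
for all `y` iff `E[(T/p(X) − (1−T)/(1−p(X))) · 1{Y ≤ y} · 1{X ≤ x}] = 0` for all `y, x`. -/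
theorem zero_conditional_DTE_characterization
    {Ω : Type*} [MeasurableSpace Ω] [StandardBorelSpace Ω] [Nonempty Ω]
    (μ : Measure Ω) [IsProbabilityMeasure μ] {k : ℕ}
    (X : Ω → (Fin k → ℝ)) (hX : Measurable X)
    (T : Ω → ℝ) (hT : Measurable T) (hT01 : ∀ ω, T ω = 0 ∨ T ω = 1)
    (Y0 Y1 Y : Ω → ℝ) (hY0 : Measurable Y0) (hY1 : Measurable Y1)
    (hY : ∀ ω, Y ω = T ω * Y1 ω + (1 - T ω) * Y0 ω)
    (hunconf : CondIndepFun (MeasurableSpace.comap X inferInstance) hX.comap_le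
      (fun ω => (Y0 ω, Y1 ω)) T μ)
    (ε : ℝ) (hε : 0 < ε) (hε2 : ε ≤ 1 / 2)
    (p : (Fin k → ℝ) → ℝ) (hp : Measurable p)
    (hpX : (fun ω => p (X ω)) =ᵐ[μ] μ[T | MeasurableSpace.comap X inferInstance])
    (hoverlap : ∀ᵐ ω ∂μ, ε ≤ p (X ω) ∧ p (X ω) ≤ 1 - ε) :
    (∀ y : ℝ,
        μ[(fun ω => if Y1 ω ≤ y then (1 : ℝ) else 0) | MeasurableSpace.comap X inferInstance]
          =ᵐ[μ]
        μ[(fun ω => if Y0 ω ≤ y then (1 : ℝ) else 0) | MeasurableSpace.comap X inferInstance])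
      ↔
    (∀ (y : ℝ) (x : Fin k → ℝ),
        (∫ ω, (T ω / p (X ω) - (1 - T ω) / (1 - p (X ω)))
            * (if Y ω ≤ y then (1 : ℝ) else 0)
            * (if ∀ j, X ω j ≤ x j then (1 : ℝ) else 0) ∂μ) = 0) := by
  exact zero_conditional_DTE_aux μ X hX hX.comap_le rfl T hT hT01 Y0 Y1 Y hY0 hY1 hY
    hunconf ε hε hε2 p hp hpX hoverlap
end

section
/- Characterization of the null of zero restricted conditional average treatment effect without censoring (the identification underlying the paper's Theorem 5): under unconfoundedness and overlap, assume in addition Y(0) ≥ 0 and Y(1) ≥ 0 ℙ-almost surely, and fix τ̄ ∈ ℝ. Then E[Y(1)·1{Y(1) ≤ τ̄} | σ(X)] = E[Y(0)·1{Y(0) ≤ τ̄} | σ(X)] ℙ-almost surely if and only if for every x ∈ ℝ^k, E[(T / p(X) − (1 − T) / (1 − p(X))) · Y · 1{Y ≤ τ̄} · 1{X ≤ x}] = 0. -/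
open MeasureTheory ProbabilityTheory

lemma measurableSet_below {k : ℕ} (x : Fin k → ℝ) :
    MeasurableSet {z : Fin k → ℝ | ∀ j, z j ≤ x j} := by
  have h : {z : Fin k → ℝ | ∀ j, z j ≤ x j}
      = ⋂ j, (fun z : Fin k → ℝ => z j) ⁻¹' Set.Iic (x j) := by
    ext z; simp [Set.mem_iInter]
  rw [h]
  exact MeasurableSet.iInter fun j => (measurable_pi_apply j) measurableSet_Iic

lemma exists_nat_bound {k : ℕ} (z : Fin k → ℝ) : ∃ n : ℕ, ∀ j, z j ≤ n := by
  obtain ⟨M, hM⟩ := (Set.finite_range z).bddAbove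
  obtain ⟨n, hn⟩ := exists_nat_ge M
  exact ⟨n, fun j => le_trans (hM (Set.mem_range_self j)) hn⟩

lemma pi_eq_generateFrom_below (k : ℕ) :
    (inferInstance : MeasurableSpace (Fin k → ℝ)) =
      MeasurableSpace.generateFrom
        {S : Set (Fin k → ℝ) | ∃ x : Fin k → ℝ, S = {z | ∀ j, z j ≤ x j}} := by
  refine le_antisymm ?_ (MeasurableSpace.generateFrom_le ?_)
  · show MeasurableSpace.pi ≤ _
    refine iSup_le fun j => ?_
    have hre : Real.measurableSpace
        = MeasurableSpace.generateFrom (Set.range Set.Iic) :=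
      borel_eq_generateFrom_Iic ℝ
    show MeasurableSpace.comap (fun z : Fin k → ℝ => z j) Real.measurableSpace ≤ _
    rw [hre, MeasurableSpace.comap_generateFrom]
    refine MeasurableSpace.generateFrom_le ?_
    rintro t ⟨u, ⟨a, rfl⟩, rfl⟩
    have h : (fun z : Fin k → ℝ => z j) ⁻¹' Set.Iic a
        = ⋃ n : ℕ, {z : Fin k → ℝ | ∀ i, z i ≤ (fun i => if i = j then a else n) i} := by
      ext z
      simp only [Set.mem_preimage, Set.mem_Iic, Set.mem_iUnion, Set.mem_setOf_eq]
      constructor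
      · intro hz
        obtain ⟨n, hn⟩ := exists_nat_bound z
        refine ⟨n, fun i => ?_⟩
        by_cases h : i = j
        · subst h; simpa using hz
        · simpa [h] using hn i
      · rintro ⟨n, hn⟩
        simpa using hn j
    rw [h]
    exact MeasurableSet.iUnion fun n =>
      MeasurableSpace.measurableSet_generateFrom ⟨_, rfl⟩
  · rintro S ⟨x, rfl⟩; exact measurableSet_below x

/-- **Characterization of the null of zero restricted conditional average treatment effect,
no censoring** (the identification underlying the paper's Theorem 5): under unconfoundedness,
overlap and nonnegative potential outcomes, for fixed `τ̄`,
`E[Y(1)·1{Y(1) ≤ τ̄} | σ(X)] = E[Y(0)·1{Y(0) ≤ τ̄} | σ(X)]` a.s. iff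
`E[(T/p(X) − (1−T)/(1−p(X))) · Y · 1{Y ≤ τ̄} · 1{X ≤ x}] = 0` for every `x`. -/
theorem zero_restricted_CATE_characterization
    {Ω : Type*} [MeasurableSpace Ω] [StandardBorelSpace Ω] [Nonempty Ω]
    (μ : Measure Ω) [IsProbabilityMeasure μ] {k : ℕ}
    (X : Ω → (Fin k → ℝ)) (hX : Measurable X)
    (T : Ω → ℝ) (hT : Measurable T) (hT01 : ∀ ω, T ω = 0 ∨ T ω = 1)
    (Y0 Y1 Y : Ω → ℝ) (hY0 : Measurable Y0) (hY1 : Measurable Y1)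
    (hY : ∀ ω, Y ω = T ω * Y1 ω + (1 - T ω) * Y0 ω)
    (hunconf : CondIndepFun (MeasurableSpace.comap X inferInstance) hX.comap_le
      (fun ω => (Y0 ω, Y1 ω)) T μ)
    (ε : ℝ) (hε : 0 < ε) (hε2 : ε ≤ 1 / 2)
    (p : (Fin k → ℝ) → ℝ) (hp : Measurable p)
    (hpX : (fun ω => p (X ω)) =ᵐ[μ] μ[T | MeasurableSpace.comap X inferInstance])
    (hoverlap : ∀ᵐ ω ∂μ, ε ≤ p (X ω) ∧ p (X ω) ≤ 1 - ε)
    (hpos0 : ∀ᵐ ω ∂μ, 0 ≤ Y0 ω) (hpos1 : ∀ᵐ ω ∂μ, 0 ≤ Y1 ω)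
    (τ : ℝ) :
    (μ[(fun ω => Y1 ω * (if Y1 ω ≤ τ then (1 : ℝ) else 0)) |
          MeasurableSpace.comap X inferInstance]
        =ᵐ[μ]
      μ[(fun ω => Y0 ω * (if Y0 ω ≤ τ then (1 : ℝ) else 0)) |
          MeasurableSpace.comap X inferInstance])
      ↔
    (∀ x : Fin k → ℝ,
        (∫ ω, (T ω / p (X ω) - (1 - T ω) / (1 - p (X ω)))
            * (Y ω * (if Y ω ≤ τ then (1 : ℝ) else 0))
            * (if ∀ j, X ω j ≤ x j then (1 : ℝ) else 0) ∂μ) = 0) := by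
  classical
  have hm : MeasurableSpace.comap X inferInstance ≤ ‹MeasurableSpace Ω› := hX.comap_le
  have hXm : Measurable[MeasurableSpace.comap X inferInstance] X := measurable_iff_comap_le.mpr le_rfl
  set V : Ω → ℝ × ℝ := fun ω => (Y0 ω, Y1 ω) with hVdef
  have hV : Measurable V := hY0.prodMk hY1
  have hT1 : ∀ ω, ‖T ω‖ ≤ 1 := by
    intro ω; rcases hT01 ω with h | h <;> simp [h]
  have hp01 : ∀ᵐ ω ∂μ, ‖p (X ω)‖ ≤ 1 := by
    filter_upwards [hoverlap] with ω hω
    obtain ⟨h1, h2⟩ := hω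
    rw [Real.norm_eq_abs, abs_le]; constructor <;> linarith
  have hb2 : ∀ (a b A B : ℝ), ‖a‖ ≤ A → ‖b‖ ≤ B → ‖a * b‖ ≤ A * B := by
    intro a b A B ha hb
    rw [norm_mul]
    exact mul_le_mul ha hb (norm_nonneg _) ((norm_nonneg a).trans ha)
  have hb3 : ∀ (a b c A B C' : ℝ), ‖a‖ ≤ A → ‖b‖ ≤ B → ‖c‖ ≤ C' →
      ‖a * b * c‖ ≤ A * B * C' := by
    intro a b c A B C' ha hb hc
    exact hb2 _ _ _ _ (hb2 _ _ _ _ ha hb) hc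
  have hInt : ∀ (φ : Ω → ℝ) (K : ℝ), AEStronglyMeasurable φ μ →
      (∀ᵐ ω ∂μ, ‖φ ω‖ ≤ K) → Integrable φ μ :=
    fun φ K hφ hK => (integrable_const K).mono' hφ hK
  -- factorization from conditional independence
  have hTind : T = Set.indicator (T ⁻¹' {1}) (fun _ => (1:ℝ)) := by
    funext ω; rcases hT01 ω with h0 | h0 <;>
      simp [Set.indicator_apply, Set.mem_preimage, h0]
  have hfact : ∀ s : Set (ℝ × ℝ), MeasurableSet s →
      (μ[Set.indicator (V ⁻¹' s ∩ T ⁻¹' {1}) (fun _ => (1:ℝ)) | MeasurableSpace.comap X inferInstance]) =ᵐ[μ]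
        fun ω => (μ[Set.indicator (V ⁻¹' s) (fun _ => (1:ℝ)) | MeasurableSpace.comap X inferInstance]) ω * p (X ω) := by
    intro s hs
    have h := (condIndepFun_iff_condExp_inter_preimage_eq_mul
      (hm' := hX.comap_le) hV hT).mp hunconf s {1} hs (measurableSet_singleton 1)
    have hTcond : (μ[Set.indicator (T ⁻¹' {1}) (fun _ => (1:ℝ)) | MeasurableSpace.comap X inferInstance]) =ᵐ[μ]
        fun ω => p (X ω) := by
      rw [← hTind]; exact hpX.symm
    refine h.trans ?_
    filter_upwards [hTcond] with ω hω
    rw [hω]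
  have key : ∀ (ζ : Ω → ℝ), StronglyMeasurable[MeasurableSpace.comap X inferInstance] ζ → ∀ C : ℝ, (∀ ω, ‖ζ ω‖ ≤ C) →
      ∀ (g : ℝ × ℝ → ℝ), Measurable g → ∀ D : ℝ, (∀ v, ‖g v‖ ≤ D) →
      ∫ ω, T ω * g (V ω) * ζ ω ∂μ = ∫ ω, g (V ω) * (p (X ω) * ζ ω) ∂μ := by
    intro ζ hζ C hC
    have hζsm : StronglyMeasurable ζ := hζ.mono hm
    have hsetv : ∀ s : Set (ℝ × ℝ), MeasurableSet s →
        ∫ ω, T ω * Set.indicator s (fun _ => (1:ℝ)) (V ω) * ζ ω ∂μ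
          = ∫ ω, Set.indicator s (fun _ => (1:ℝ)) (V ω) * (p (X ω) * ζ ω) ∂μ := by
      intro s hs
      have hDm : MeasurableSet (V ⁻¹' s ∩ T ⁻¹' {1}) :=
        (hV hs).inter (hT (measurableSet_singleton 1))
      have hsm' : MeasurableSet (V ⁻¹' s) := hV hs
      have hiD : Integrable (Set.indicator (V ⁻¹' s ∩ T ⁻¹' {1}) (fun _ => (1:ℝ))) μ :=
        (integrable_const (1:ℝ)).indicator hDm
      have hiS : Integrable (Set.indicator (V ⁻¹' s) (fun _ => (1:ℝ))) μ :=
        (integrable_const (1:ℝ)).indicator hsm'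
      have e1 : μ[(fun ω => ζ ω * Set.indicator (V ⁻¹' s ∩ T ⁻¹' {1}) (fun _ => (1:ℝ)) ω) | MeasurableSpace.comap X inferInstance]
          =ᵐ[μ] fun ω => ζ ω * (μ[Set.indicator (V ⁻¹' s ∩ T ⁻¹' {1}) (fun _ => (1:ℝ)) | MeasurableSpace.comap X inferInstance]) ω :=
        condExp_stronglyMeasurable_mul_of_bound hm hζ hiD C (Filter.Eventually.of_forall hC)
      have e2 : μ[(fun ω => (p (X ω) * ζ ω) * Set.indicator (V ⁻¹' s) (fun _ => (1:ℝ)) ω) | MeasurableSpace.comap X inferInstance]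
          =ᵐ[μ] fun ω => (p (X ω) * ζ ω) * (μ[Set.indicator (V ⁻¹' s) (fun _ => (1:ℝ)) | MeasurableSpace.comap X inferInstance]) ω := by
        refine condExp_stronglyMeasurable_mul_of_bound hm ?_ hiS C ?_
        · exact ((hp.comp hXm).stronglyMeasurable).mul hζ
        · filter_upwards [hp01] with ω hω
          calc ‖p (X ω) * ζ ω‖ = ‖p (X ω)‖ * ‖ζ ω‖ := norm_mul _ _
          _ ≤ 1 * C := mul_le_mul hω (hC ω) (norm_nonneg _) zero_le_one
          _ = C := one_mul C
      calc
        ∫ ω, T ω * Set.indicator s (fun _ => (1:ℝ)) (V ω) * ζ ω ∂μ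
            = ∫ ω, ζ ω * Set.indicator (V ⁻¹' s ∩ T ⁻¹' {1}) (fun _ => (1:ℝ)) ω ∂μ := by
              refine integral_congr_ae (Filter.Eventually.of_forall fun ω => ?_)
              rcases hT01 ω with h0 | h0 <;>
                by_cases hmem : V ω ∈ s <;>
                  simp [Set.indicator_apply, hmem, h0, mul_comm]
        _ = ∫ ω, (μ[(fun ω => ζ ω * Set.indicator (V ⁻¹' s ∩ T ⁻¹' {1}) (fun _ => (1:ℝ)) ω) | MeasurableSpace.comap X inferInstance]) ω ∂μ :=
              (integral_condExp hm).symm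
        _ = ∫ ω, ζ ω * (μ[Set.indicator (V ⁻¹' s ∩ T ⁻¹' {1}) (fun _ => (1:ℝ)) | MeasurableSpace.comap X inferInstance]) ω ∂μ :=
              integral_congr_ae e1
        _ = ∫ ω, (p (X ω) * ζ ω) * (μ[Set.indicator (V ⁻¹' s) (fun _ => (1:ℝ)) | MeasurableSpace.comap X inferInstance]) ω ∂μ := by
              refine integral_congr_ae ?_
              filter_upwards [hfact s hs] with ω hω
              rw [hω]; ring
        _ = ∫ ω, (μ[(fun ω => (p (X ω) * ζ ω) * Set.indicator (V ⁻¹' s) (fun _ => (1:ℝ)) ω) | MeasurableSpace.comap X inferInstance]) ω ∂μ :=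
              (integral_congr_ae e2).symm
        _ = ∫ ω, (p (X ω) * ζ ω) * Set.indicator (V ⁻¹' s) (fun _ => (1:ℝ)) ω ∂μ :=
              integral_condExp hm
        _ = ∫ ω, Set.indicator s (fun _ => (1:ℝ)) (V ω) * (p (X ω) * ζ ω) ∂μ := by
              refine integral_congr_ae (Filter.Eventually.of_forall fun ω => ?_)
              by_cases hmem : V ω ∈ s <;> simp [Set.indicator_apply, hmem, mul_comm]
    have hsimple : ∀ g : MeasureTheory.SimpleFunc (ℝ × ℝ) ℝ,
        ∫ ω, T ω * g (V ω) * ζ ω ∂μ = ∫ ω, g (V ω) * (p (X ω) * ζ ω) ∂μ := by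
      intro g
      induction g using MeasureTheory.SimpleFunc.induction with
      | const c hs =>
        rename_i s
        have hcoe : ∀ v, (MeasureTheory.SimpleFunc.piecewise s hs
            (MeasureTheory.SimpleFunc.const _ c) (MeasureTheory.SimpleFunc.const _ 0)) v
            = c * Set.indicator s (fun _ => (1:ℝ)) v := by
          intro v; by_cases h : v ∈ s <;>
            simp [MeasureTheory.SimpleFunc.piecewise_apply, Set.indicator_apply, h]
        calc ∫ ω, T ω * (MeasureTheory.SimpleFunc.piecewise s hs
              (MeasureTheory.SimpleFunc.const _ c) (MeasureTheory.SimpleFunc.const _ 0)) (V ω) * ζ ω ∂μ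
            = ∫ ω, c * (T ω * Set.indicator s (fun _ => (1:ℝ)) (V ω) * ζ ω) ∂μ := by
              refine integral_congr_ae (Filter.Eventually.of_forall fun ω => ?_)
              simp only [hcoe]; ring
        _ = c * ∫ ω, T ω * Set.indicator s (fun _ => (1:ℝ)) (V ω) * ζ ω ∂μ :=
              integral_const_mul _ _
        _ = c * ∫ ω, Set.indicator s (fun _ => (1:ℝ)) (V ω) * (p (X ω) * ζ ω) ∂μ := by
              rw [hsetv s hs]
        _ = ∫ ω, c * (Set.indicator s (fun _ => (1:ℝ)) (V ω) * (p (X ω) * ζ ω)) ∂μ :=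
              (integral_const_mul _ _).symm
        _ = ∫ ω, (MeasureTheory.SimpleFunc.piecewise s hs
              (MeasureTheory.SimpleFunc.const _ c) (MeasureTheory.SimpleFunc.const _ 0)) (V ω) * (p (X ω) * ζ ω) ∂μ := by
              refine integral_congr_ae (Filter.Eventually.of_forall fun ω => ?_)
              simp only [hcoe]; ring
      | add hdis h1 h2 =>
        rename_i f1 f2
        obtain ⟨C1, hC1⟩ := f1.exists_forall_norm_le
        obtain ⟨C2, hC2⟩ := f2.exists_forall_norm_le
        have m1 : AEStronglyMeasurable (fun ω => T ω * f1 (V ω) * ζ ω) μ :=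
          ((hT.mul (f1.measurable.comp hV)).mul hζsm.measurable).aestronglyMeasurable
        have m2 : AEStronglyMeasurable (fun ω => T ω * f2 (V ω) * ζ ω) μ :=
          ((hT.mul (f2.measurable.comp hV)).mul hζsm.measurable).aestronglyMeasurable
        have i1 : Integrable (fun ω => T ω * f1 (V ω) * ζ ω) μ :=
          hInt _ (1 * C1 * C) m1 (Filter.Eventually.of_forall fun ω =>
            hb3 _ _ _ _ _ _ (hT1 ω) (hC1 (V ω)) (hC ω))
        have i2 : Integrable (fun ω => T ω * f2 (V ω) * ζ ω) μ :=
          hInt _ (1 * C2 * C) m2 (Filter.Eventually.of_forall fun ω =>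
            hb3 _ _ _ _ _ _ (hT1 ω) (hC2 (V ω)) (hC ω))
        have m1' : AEStronglyMeasurable (fun ω => f1 (V ω) * (p (X ω) * ζ ω)) μ :=
          ((f1.measurable.comp hV).mul ((hp.comp hX).mul hζsm.measurable)).aestronglyMeasurable
        have m2' : AEStronglyMeasurable (fun ω => f2 (V ω) * (p (X ω) * ζ ω)) μ :=
          ((f2.measurable.comp hV).mul ((hp.comp hX).mul hζsm.measurable)).aestronglyMeasurable
        have i1' : Integrable (fun ω => f1 (V ω) * (p (X ω) * ζ ω)) μ := by
          refine hInt _ (C1 * (1 * C)) m1' ?_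
          filter_upwards [hp01] with ω hω
          exact hb2 _ _ _ _ (hC1 (V ω)) (hb2 _ _ _ _ hω (hC ω))
        have i2' : Integrable (fun ω => f2 (V ω) * (p (X ω) * ζ ω)) μ := by
          refine hInt _ (C2 * (1 * C)) m2' ?_
          filter_upwards [hp01] with ω hω
          exact hb2 _ _ _ _ (hC2 (V ω)) (hb2 _ _ _ _ hω (hC ω))
        calc ∫ ω, T ω * (f1 + f2) (V ω) * ζ ω ∂μ
            = ∫ ω, (T ω * f1 (V ω) * ζ ω + T ω * f2 (V ω) * ζ ω) ∂μ := by
              refine integral_congr_ae (Filter.Eventually.of_forall fun ω => ?_)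
              simp only [MeasureTheory.SimpleFunc.coe_add, Pi.add_apply]; ring
        _ = (∫ ω, T ω * f1 (V ω) * ζ ω ∂μ) + ∫ ω, T ω * f2 (V ω) * ζ ω ∂μ :=
              integral_add i1 i2
        _ = (∫ ω, f1 (V ω) * (p (X ω) * ζ ω) ∂μ) + ∫ ω, f2 (V ω) * (p (X ω) * ζ ω) ∂μ := by
              rw [h1, h2]
        _ = ∫ ω, (f1 (V ω) * (p (X ω) * ζ ω) + f2 (V ω) * (p (X ω) * ζ ω)) ∂μ :=
              (integral_add i1' i2').symm
        _ = ∫ ω, (f1 + f2) (V ω) * (p (X ω) * ζ ω) ∂μ := by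
              refine integral_congr_ae (Filter.Eventually.of_forall fun ω => ?_)
              simp only [MeasureTheory.SimpleFunc.coe_add, Pi.add_apply]; ring
    intro g hg D hD
    set gn : ℕ → MeasureTheory.SimpleFunc (ℝ × ℝ) ℝ :=
      fun n => MeasureTheory.SimpleFunc.approxOn g hg Set.univ 0 (Set.mem_univ 0) n with hgndef
    have hgn_tend : ∀ v, Filter.Tendsto (fun n => gn n v) Filter.atTop (nhds (g v)) := by
      intro v
      exact MeasureTheory.SimpleFunc.tendsto_approxOn hg (Set.mem_univ 0) (by simp)
    have hgn_bd : ∀ n v, ‖gn n v‖ ≤ D + D := fun n v =>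
      (MeasureTheory.SimpleFunc.norm_approxOn_zero_le hg (Set.mem_univ 0) v n).trans
        (add_le_add (hD v) (hD v))
    have L1 : Filter.Tendsto (fun n => ∫ ω, T ω * gn n (V ω) * ζ ω ∂μ)
        Filter.atTop (nhds (∫ ω, T ω * g (V ω) * ζ ω ∂μ)) := by
      refine tendsto_integral_of_dominated_convergence (fun _ => 1 * (D + D) * C) ?_ ?_ ?_ ?_
      · intro n
        exact ((hT.mul ((gn n).measurable.comp hV)).mul hζsm.measurable).aestronglyMeasurable
      · exact integrable_const _
      · intro n
        exact Filter.Eventually.of_forall fun ω =>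
          hb3 _ _ _ _ _ _ (hT1 ω) (hgn_bd n (V ω)) (hC ω)
      · refine Filter.Eventually.of_forall fun ω => ?_
        exact ((hgn_tend (V ω)).const_mul (T ω)).mul_const (ζ ω)
    have L2 : Filter.Tendsto (fun n => ∫ ω, gn n (V ω) * (p (X ω) * ζ ω) ∂μ)
        Filter.atTop (nhds (∫ ω, g (V ω) * (p (X ω) * ζ ω) ∂μ)) := by
      refine tendsto_integral_of_dominated_convergence (fun _ => (D + D) * (1 * C)) ?_ ?_ ?_ ?_
      · intro n
        exact (((gn n).measurable.comp hV).mul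
          ((hp.comp hX).mul hζsm.measurable)).aestronglyMeasurable
      · exact integrable_const _
      · intro n
        filter_upwards [hp01] with ω hω
        exact hb2 _ _ _ _ (hgn_bd n (V ω)) (hb2 _ _ _ _ hω (hC ω))
      · refine Filter.Eventually.of_forall fun ω => ?_
        exact (hgn_tend (V ω)).mul_const _
    exact tendsto_nhds_unique L1 (L2.congr fun n => (hsimple (gn n)).symm)
  -- clamped propensity and outcome transforms
  have hε2' : ε ≤ 1 - ε := by linarith
  set q : (Fin k → ℝ) → ℝ := fun z => max ε (min (p z) (1 - ε)) with hqdef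
  have hq : Measurable q := measurable_const.max (hp.min measurable_const)
  have hqε : ∀ z, ε ≤ q z := fun z => le_max_left _ _
  have hq1 : ∀ z, q z ≤ 1 - ε := fun z => max_le hε2' (min_le_right _ _)
  have hq0 : ∀ z, 0 < q z := fun z => lt_of_lt_of_le hε (hqε z)
  have hq1' : ∀ z, ε ≤ 1 - q z := fun z => by have := hq1 z; linarith
  have hqp : ∀ᵐ ω ∂μ, q (X ω) = p (X ω) := by
    filter_upwards [hoverlap] with ω hω
    obtain ⟨h1, h2⟩ := hω
    rw [hqdef]
    simp only
    rw [min_eq_left h2, max_eq_right h1]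
  set G1 : Ω → ℝ := fun ω => Y1 ω * (if Y1 ω ≤ τ then (1:ℝ) else 0) with hG1def
  set G0 : Ω → ℝ := fun ω => Y0 ω * (if Y0 ω ≤ τ then (1:ℝ) else 0) with hG0def
  have hG1m : Measurable G1 := hY1.mul
    (Measurable.ite (measurableSet_le hY1 measurable_const) measurable_const measurable_const)
  have hG0m : Measurable G0 := hY0.mul
    (Measurable.ite (measurableSet_le hY0 measurable_const) measurable_const measurable_const)
  have hG1b : ∀ᵐ ω ∂μ, ‖G1 ω‖ ≤ max τ 0 := by
    filter_upwards [hpos1] with ω h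
    rw [hG1def]
    by_cases hle : Y1 ω ≤ τ
    · simp only [if_pos hle, mul_one, Real.norm_eq_abs, abs_of_nonneg h]
      exact le_trans hle (le_max_left _ _)
    · simp only [if_neg hle, mul_zero, norm_zero]
      exact le_max_right _ _
  have hG0b : ∀ᵐ ω ∂μ, ‖G0 ω‖ ≤ max τ 0 := by
    filter_upwards [hpos0] with ω h
    rw [hG0def]
    by_cases hle : Y0 ω ≤ τ
    · simp only [if_pos hle, mul_one, Real.norm_eq_abs, abs_of_nonneg h]
      exact le_trans hle (le_max_left _ _)
    · simp only [if_neg hle, mul_zero, norm_zero]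
      exact le_max_right _ _
  have hG1int : Integrable G1 μ := hInt _ _ hG1m.aestronglyMeasurable hG1b
  have hG0int : Integrable G0 μ := hInt _ _ hG0m.aestronglyMeasurable hG0b
  set gg1 : ℝ × ℝ → ℝ := fun v => max v.2 0 * (if v.2 ≤ τ then (1:ℝ) else 0) with hgg1def
  set gg0 : ℝ × ℝ → ℝ := fun v => max v.1 0 * (if v.1 ≤ τ then (1:ℝ) else 0) with hgg0def
  have hgg1 : Measurable gg1 := (measurable_snd.max measurable_const).mul
    (Measurable.ite (measurableSet_le measurable_snd measurable_const)
      measurable_const measurable_const)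
  have hgg0 : Measurable gg0 := (measurable_fst.max measurable_const).mul
    (Measurable.ite (measurableSet_le measurable_fst measurable_const)
      measurable_const measurable_const)
  have hgg1b : ∀ v, ‖gg1 v‖ ≤ max τ 0 := by
    intro v
    simp only [hgg1def]
    by_cases h : v.2 ≤ τ
    · rw [if_pos h, mul_one, Real.norm_eq_abs, abs_of_nonneg (le_max_right v.2 0)]
      exact max_le (le_trans h (le_max_left τ 0)) (le_max_right τ 0)
    · simp only [if_neg h, mul_zero, norm_zero]
      exact le_max_right _ _
  have hgg0b : ∀ v, ‖gg0 v‖ ≤ max τ 0 := by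
    intro v
    simp only [hgg0def]
    by_cases h : v.1 ≤ τ
    · rw [if_pos h, mul_one, Real.norm_eq_abs, abs_of_nonneg (le_max_right v.1 0)]
      exact max_le (le_trans h (le_max_left τ 0)) (le_max_right τ 0)
    · simp only [if_neg h, mul_zero, norm_zero]
      exact le_max_right _ _
  have hgg1V : ∀ᵐ ω ∂μ, gg1 (V ω) = G1 ω := by
    filter_upwards [hpos1] with ω h
    rw [hgg1def, hG1def, hVdef]
    simp only
    rw [max_eq_left h]
  have hgg0V : ∀ᵐ ω ∂μ, gg0 (V ω) = G0 ω := by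
    filter_upwards [hpos0] with ω h
    rw [hgg0def, hG0def, hVdef]
    simp only
    rw [max_eq_left h]
  have hIx : ∀ x : Fin k → ℝ,
      (∫ ω, (T ω / p (X ω) - (1 - T ω) / (1 - p (X ω)))
          * (Y ω * (if Y ω ≤ τ then (1:ℝ) else 0))
          * (if ∀ j, X ω j ≤ x j then (1:ℝ) else 0) ∂μ)
        = (∫ ω in X ⁻¹' {z | ∀ j, z j ≤ x j}, G1 ω ∂μ)
          - ∫ ω in X ⁻¹' {z | ∀ j, z j ≤ x j}, G0 ω ∂μ := by
    intro x
    set S : Set (Fin k → ℝ) := {z | ∀ j, z j ≤ x j} with hSdef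
    have hS : MeasurableSet S := measurableSet_below x
    have hA : MeasurableSet (X ⁻¹' S) := hX hS
    set ζ1 : Ω → ℝ := fun ω => (if X ω ∈ S then (1:ℝ) else 0) * (q (X ω))⁻¹ with hζ1def
    set ζ0 : Ω → ℝ := fun ω => (if X ω ∈ S then (1:ℝ) else 0) * (1 - q (X ω))⁻¹ with hζ0def
    have hζ1m : StronglyMeasurable[MeasurableSpace.comap X inferInstance] ζ1 :=
      ((((Measurable.ite hS measurable_const measurable_const).mul hq.inv).comp
        hXm)).stronglyMeasurable
    have hζ0m : StronglyMeasurable[MeasurableSpace.comap X inferInstance] ζ0 :=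
      ((((Measurable.ite hS measurable_const measurable_const).mul
        ((measurable_const.sub hq).inv)).comp hXm)).stronglyMeasurable
    have hind1 : ∀ ω, ‖(if X ω ∈ S then (1:ℝ) else 0)‖ ≤ 1 := by
      intro ω; split <;> simp
    have hζ1C : ∀ ω, ‖ζ1 ω‖ ≤ 1 * ε⁻¹ := by
      intro ω
      rw [hζ1def]
      refine hb2 _ _ _ _ (hind1 ω) ?_
      rw [Real.norm_eq_abs, abs_of_nonneg (inv_nonneg.mpr (hq0 _).le)]
      exact inv_anti₀ hε (hqε _)
    have hζ0C : ∀ ω, ‖ζ0 ω‖ ≤ 1 * ε⁻¹ := by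
      intro ω
      rw [hζ0def]
      refine hb2 _ _ _ _ (hind1 ω) ?_
      have h0 : 0 < 1 - q (X ω) := lt_of_lt_of_le hε (hq1' _)
      rw [Real.norm_eq_abs, abs_of_nonneg (inv_nonneg.mpr h0.le)]
      exact inv_anti₀ hε (hq1' _)
    have hζ1sm : StronglyMeasurable ζ1 := hζ1m.mono hm
    have hζ0sm : StronglyMeasurable ζ0 := hζ0m.mono hm
    -- integrability of the pieces
    have iTg1ζ : Integrable (fun ω => T ω * gg1 (V ω) * ζ1 ω) μ :=
      hInt _ (1 * (max τ 0) * (1 * ε⁻¹))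
        (((hT.mul (hgg1.comp hV)).mul hζ1sm.measurable).aestronglyMeasurable)
        (Filter.Eventually.of_forall fun ω =>
          hb3 _ _ _ _ _ _ (hT1 ω) (hgg1b (V ω)) (hζ1C ω))
    have iTg0ζ : Integrable (fun ω => T ω * gg0 (V ω) * ζ0 ω) μ :=
      hInt _ (1 * (max τ 0) * (1 * ε⁻¹))
        (((hT.mul (hgg0.comp hV)).mul hζ0sm.measurable).aestronglyMeasurable)
        (Filter.Eventually.of_forall fun ω =>
          hb3 _ _ _ _ _ _ (hT1 ω) (hgg0b (V ω)) (hζ0C ω))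
    have ig0ζ : Integrable (fun ω => gg0 (V ω) * ζ0 ω) μ :=
      hInt _ ((max τ 0) * (1 * ε⁻¹))
        (((hgg0.comp hV).mul hζ0sm.measurable).aestronglyMeasurable)
        (Filter.Eventually.of_forall fun ω => hb2 _ _ _ _ (hgg0b (V ω)) (hζ0C ω))
    have ig0pζ : Integrable (fun ω => gg0 (V ω) * (p (X ω) * ζ0 ω)) μ := by
      refine hInt _ ((max τ 0) * (1 * (1 * ε⁻¹)))
        (((hgg0.comp hV).mul ((hp.comp hX).mul hζ0sm.measurable)).aestronglyMeasurable) ?_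
      filter_upwards [hp01] with ω hω
      exact hb2 _ _ _ _ (hgg0b (V ω)) (hb2 _ _ _ _ hω (hζ0C ω))
    have i1Tg0ζ : Integrable (fun ω => (1 - T ω) * (gg0 (V ω) * ζ0 ω)) μ := by
      refine hInt _ (2 * ((max τ 0) * (1 * ε⁻¹)))
        (((measurable_const.sub hT).mul
          ((hgg0.comp hV).mul hζ0sm.measurable)).aestronglyMeasurable) ?_
      refine Filter.Eventually.of_forall fun ω => hb2 _ _ _ _ ?_
        (hb2 _ _ _ _ (hgg0b (V ω)) (hζ0C ω))
      rcases hT01 ω with h0 | h0 <;> simp [h0]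
    have E1 := key ζ1 hζ1m (1 * ε⁻¹) hζ1C gg1 hgg1 (max τ 0) hgg1b
    have E0 := key ζ0 hζ0m (1 * ε⁻¹) hζ0C gg0 hgg0 (max τ 0) hgg0b
    have R1 : ∫ ω, gg1 (V ω) * (p (X ω) * ζ1 ω) ∂μ = ∫ ω in X ⁻¹' S, G1 ω ∂μ := by
      rw [← integral_indicator hA]
      refine integral_congr_ae ?_
      filter_upwards [hoverlap, hqp, hgg1V] with ω h12 h3 h4
      obtain ⟨h1, h2⟩ := h12
      by_cases hmem : X ω ∈ S
      · have hpne : p (X ω) ≠ 0 := (lt_of_lt_of_le hε h1).ne'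
        rw [hζ1def]
        simp only [if_pos hmem, Set.indicator_of_mem (show ω ∈ X ⁻¹' S from hmem)]
        rw [h4, h3]
        field_simp
      · rw [hζ1def]
        simp only [if_neg hmem,
          Set.indicator_of_notMem (show ω ∉ X ⁻¹' S from hmem)]
        ring
    have R0 : ∫ ω, (1 - T ω) * (gg0 (V ω) * ζ0 ω) ∂μ = ∫ ω in X ⁻¹' S, G0 ω ∂μ := by
      have step1 : ∫ ω, (1 - T ω) * (gg0 (V ω) * ζ0 ω) ∂μ
          = (∫ ω, gg0 (V ω) * ζ0 ω ∂μ) - ∫ ω, T ω * gg0 (V ω) * ζ0 ω ∂μ := by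
        rw [← integral_sub ig0ζ iTg0ζ]
        refine integral_congr_ae (Filter.Eventually.of_forall fun ω => ?_)
        ring
      rw [step1, E0, ← integral_sub ig0ζ ig0pζ, ← integral_indicator hA]
      refine integral_congr_ae ?_
      filter_upwards [hoverlap, hqp, hgg0V] with ω h12 h3 h4
      obtain ⟨h1, h2⟩ := h12
      by_cases hmem : X ω ∈ S
      · have hpne1 : 1 - p (X ω) ≠ 0 := by
          have : 0 < 1 - p (X ω) := by linarith
          exact this.ne'
        rw [hζ0def]
        simp only [if_pos hmem, Set.indicator_of_mem (show ω ∈ X ⁻¹' S from hmem)]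
        rw [h4, h3]
        field_simp
      · rw [hζ0def]
        simp only [if_neg hmem,
          Set.indicator_of_notMem (show ω ∉ X ⁻¹' S from hmem)]
        ring
    have Hptw : (fun ω => (T ω / p (X ω) - (1 - T ω) / (1 - p (X ω)))
          * (Y ω * (if Y ω ≤ τ then (1:ℝ) else 0))
          * (if ∀ j, X ω j ≤ x j then (1:ℝ) else 0))
        =ᵐ[μ] fun ω => T ω * gg1 (V ω) * ζ1 ω - (1 - T ω) * (gg0 (V ω) * ζ0 ω) := by
      filter_upwards [hoverlap, hpos0, hpos1, hqp] with ω h12 hY0p hY1p h3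
      obtain ⟨h1, h2⟩ := h12
      have hpne : p (X ω) ≠ 0 := (lt_of_lt_of_le hε h1).ne'
      have hpne1 : 1 - p (X ω) ≠ 0 := by
        have : 0 < 1 - p (X ω) := by linarith
        exact this.ne'
      simp only [hζ1def, hζ0def, hgg1def, hgg0def, hVdef, hY ω]
      rw [h3]
      rcases hT01 ω with h0 | h0 <;> by_cases hmem : X ω ∈ S
      · rw [if_pos hmem, if_pos (show (∀ j, X ω j ≤ x j) from hmem), h0]
        simp only [zero_mul, one_mul, zero_add, sub_zero, zero_div, zero_sub, mul_one]
        rw [max_eq_left hY0p]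
        field_simp
        try (split <;> simp)
      · rw [if_neg hmem, if_neg (show ¬ (∀ j, X ω j ≤ x j) from hmem)]
        ring
      · rw [if_pos hmem, if_pos (show (∀ j, X ω j ≤ x j) from hmem), h0]
        simp only [one_mul, sub_self, zero_mul, add_zero, zero_div, sub_zero, mul_one]
        rw [max_eq_left hY1p]
        field_simp
        try (split <;> simp)
      · rw [if_neg hmem, if_neg (show ¬ (∀ j, X ω j ≤ x j) from hmem)]
        ring
    calc (∫ ω, (T ω / p (X ω) - (1 - T ω) / (1 - p (X ω)))
          * (Y ω * (if Y ω ≤ τ then (1:ℝ) else 0))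
          * (if ∀ j, X ω j ≤ x j then (1:ℝ) else 0) ∂μ)
        = ∫ ω, (T ω * gg1 (V ω) * ζ1 ω - (1 - T ω) * (gg0 (V ω) * ζ0 ω)) ∂μ :=
          integral_congr_ae Hptw
    _ = (∫ ω, T ω * gg1 (V ω) * ζ1 ω ∂μ) - ∫ ω, (1 - T ω) * (gg0 (V ω) * ζ0 ω) ∂μ :=
          integral_sub iTg1ζ i1Tg0ζ
    _ = (∫ ω in X ⁻¹' S, G1 ω ∂μ) - ∫ ω in X ⁻¹' S, G0 ω ∂μ := by
          rw [E1, R1, R0]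
  constructor
  · intro hcond x
    rw [hIx x]
    have hAm : MeasurableSet[MeasurableSpace.comap X inferInstance] (X ⁻¹' {z : Fin k → ℝ | ∀ j, z j ≤ x j}) :=
      ⟨_, measurableSet_below x, rfl⟩
    have e1 := setIntegral_condExp hm hG1int hAm
    have e0 := setIntegral_condExp hm hG0int hAm
    have e2 : ∫ ω in X ⁻¹' {z : Fin k → ℝ | ∀ j, z j ≤ x j}, (μ[G1|MeasurableSpace.comap X inferInstance]) ω ∂μ
        = ∫ ω in X ⁻¹' {z : Fin k → ℝ | ∀ j, z j ≤ x j}, (μ[G0|MeasurableSpace.comap X inferInstance]) ω ∂μ :=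
      setIntegral_congr_ae (hm _ hAm) (hcond.mono fun ω h _ => h)
    rw [← e1, e2, e0, sub_self]
  · intro h
    have hbasic : ∀ x : Fin k → ℝ,
        ∫ ω in X ⁻¹' {z | ∀ j, z j ≤ x j}, G1 ω ∂μ
          = ∫ ω in X ⁻¹' {z | ∀ j, z j ≤ x j}, G0 ω ∂μ := by
      intro x
      have hx := h x
      rw [hIx x] at hx
      linarith
    have huniv : ∫ ω, G1 ω ∂μ = ∫ ω, G0 ω ∂μ := by
      have hmono : Monotone (fun n : ℕ => X ⁻¹' {z : Fin k → ℝ | ∀ j, z j ≤ (n:ℝ)}) := by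
        intro a b hab ω hω j
        exact le_trans (hω j) (by exact_mod_cast hab)
      have hunion : (⋃ n : ℕ, X ⁻¹' {z : Fin k → ℝ | ∀ j, z j ≤ (n:ℝ)}) = Set.univ := by
        ext ω
        simp only [Set.mem_iUnion, Set.mem_univ, iff_true, Set.mem_preimage, Set.mem_setOf_eq]
        exact exists_nat_bound (X ω)
      have hms : ∀ n : ℕ, MeasurableSet (X ⁻¹' {z : Fin k → ℝ | ∀ j, z j ≤ (n:ℝ)}) :=
        fun n => hX (measurableSet_below _)
      have L1 := tendsto_setIntegral_of_monotone hms hmono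
        (by rw [hunion]; exact integrableOn_univ.mpr hG1int)
      have L0 := tendsto_setIntegral_of_monotone hms hmono
        (by rw [hunion]; exact integrableOn_univ.mpr hG0int)
      have heq : ∫ ω in ⋃ n : ℕ, X ⁻¹' {z : Fin k → ℝ | ∀ j, z j ≤ (n:ℝ)}, G1 ω ∂μ
          = ∫ ω in ⋃ n : ℕ, X ⁻¹' {z : Fin k → ℝ | ∀ j, z j ≤ (n:ℝ)}, G0 ω ∂μ :=
        tendsto_nhds_unique L1 (L0.congr fun n => (hbasic fun _ => (n:ℝ)).symm)
      rwa [hunion, Measure.restrict_univ] at heq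
    have hBset : ∀ B : Set Ω, MeasurableSet[MeasurableSpace.comap X inferInstance] B →
        ∫ ω in B, G1 ω ∂μ = ∫ ω in B, G0 ω ∂μ := by
      have hgen : MeasurableSpace.comap X inferInstance
          = MeasurableSpace.generateFrom
              {B : Set Ω | ∃ x : Fin k → ℝ, B = X ⁻¹' {z | ∀ j, z j ≤ x j}} := by
        conv_lhs => rw [show (inferInstance : MeasurableSpace (Fin k → ℝ))
          = MeasurableSpace.generateFrom
              {S : Set (Fin k → ℝ) | ∃ x : Fin k → ℝ, S = {z | ∀ j, z j ≤ x j}}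
          from pi_eq_generateFrom_below k]
        rw [MeasurableSpace.comap_generateFrom]
        congr 1
        ext B
        constructor
        · rintro ⟨S, ⟨x, rfl⟩, rfl⟩
          exact ⟨x, rfl⟩
        · rintro ⟨x, rfl⟩
          exact ⟨_, ⟨x, rfl⟩, rfl⟩
      have hpi : IsPiSystem {B : Set Ω | ∃ x : Fin k → ℝ, B = X ⁻¹' {z | ∀ j, z j ≤ x j}} := by
        rintro _ ⟨x, rfl⟩ _ ⟨y, rfl⟩ -
        refine ⟨fun j => min (x j) (y j), ?_⟩
        ext ω
        simp [le_min_iff, forall_and]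
      intro B hB
      refine MeasurableSpace.induction_on_inter (m := MeasurableSpace.comap X inferInstance)
        (C := fun B _ => ∫ ω in B, G1 ω ∂μ = ∫ ω in B, G0 ω ∂μ)
        hgen hpi ?_ ?_ ?_ ?_ B hB
      · simp
      · rintro B ⟨x, rfl⟩
        exact hbasic x
      · intro t htm ht
        have h1 := integral_add_compl (hm t htm) hG1int
        have h0 := integral_add_compl (hm t htm) hG0int
        rw [huniv] at h1
        linarith
      · intro f hdisj hfm hfC
        rw [integral_iUnion (fun i => hm _ (hfm i)) hdisj hG1int.integrableOn,
          integral_iUnion (fun i => hm _ (hfm i)) hdisj hG0int.integrableOn]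
        exact tsum_congr hfC
    have hfin := ae_eq_condExp_of_forall_setIntegral_eq hm hG1int
        (fun s _ _ => integrable_condExp.integrableOn)
        (fun s hs _ => by rw [setIntegral_condExp hm hG0int hs, ← hBset s hs])
        (StronglyMeasurable.aestronglyMeasurable stronglyMeasurable_condExp)
    exact hfin.symm
end

section
/- Characterization of the null of homogeneous restricted conditional average treatment effect without censoring (the identification underlying the paper's Theorem 6): under unconfoundedness and overlap, assume in addition Y(0) ≥ 0 and Y(1) ≥ 0 ℙ-almost surely, fix τ̄ ∈ ℝ, and let Δ := E[(T / p(X) − (1 − T) / (1 − p(X))) · Y · 1{Y ≤ τ̄}]. Then there exists a constant c ∈ ℝ with E[Y(1)·1{Y(1) ≤ τ̄} | σ(X)] − E[Y(0)·1{Y(0) ≤ τ̄} | σ(X)] = c ℙ-almost surely if and only if for every x ∈ ℝ^k, E[(T / p(X) − (1 − T) / (1 − p(X))) · Y · 1{Y ≤ τ̄} · 1{X ≤ x}] = Δ · ℙ(X ≤ x). -/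
open MeasureTheory ProbabilityTheory Set Filter

section AuxLemmas

variable {Ω : Type*} {m : MeasurableSpace Ω} [mΩ : MeasurableSpace Ω]
  {μ : Measure Ω} [IsProbabilityMeasure μ]

lemma aux_abs_mul_le {a b A B : ℝ} (ha : |a| ≤ A) (hb : |b| ≤ B) : |a * b| ≤ A * B := by
  rw [abs_mul]
  exact mul_le_mul ha hb (abs_nonneg _) (le_trans (abs_nonneg _) ha)

lemma aux_integrable_of_bound {f : Ω → ℝ} (hf : AEStronglyMeasurable f μ) (C : ℝ)
    (h : ∀ᵐ ω ∂μ, |f ω| ≤ C) : Integrable f μ :=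
  (integrable_const C).mono' hf (h.mono fun ω hω => by simpa [Real.norm_eq_abs] using hω)

lemma aux_integral_mul_condexp (hm : m ≤ mΩ) {f u : Ω → ℝ}
    (hf : Integrable f μ) (hu : StronglyMeasurable[m] u) {C : ℝ}
    (hC : ∀ᵐ ω ∂μ, |u ω| ≤ C) :
    ∫ ω, u ω * f ω ∂μ = ∫ ω, u ω * (μ[f|m]) ω ∂μ := by
  haveI := isFiniteMeasure_trim (μ := μ) hm
  have huae : AEStronglyMeasurable u μ := (hu.mono hm).aestronglyMeasurable
  have hCnorm : ∀ᵐ ω ∂μ, ‖u ω‖ ≤ C := hC.mono fun ω hω => by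
    simpa [Real.norm_eq_abs] using hω
  have hint1 : Integrable (u * f) μ := hf.bdd_mul huae hCnorm
  have hmul := condExp_mul_of_stronglyMeasurable_left (μ := μ) hu hint1 hf
  calc ∫ ω, u ω * f ω ∂μ = ∫ ω, (μ[u * f|m]) ω ∂μ := (integral_condExp hm).symm
    _ = ∫ ω, (u * μ[f|m]) ω ∂μ := integral_congr_ae hmul
    _ = ∫ ω, u ω * (μ[f|m]) ω ∂μ := rfl

/-- Key product identity: if `Z` and the `{0,1}`-valued `T` are conditionally independent
given `m`, then in integrals against bounded `m`-measurable factors, `T` may be replaced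
by its conditional expectation. -/
lemma aux_key_product [StandardBorelSpace Ω] (hm : m ≤ mΩ)
    {Z : Ω → ℝ × ℝ} (hZ : Measurable Z) {T : Ω → ℝ} (hT : Measurable T)
    (hT01 : ∀ ω, T ω = 0 ∨ T ω = 1)
    (hindep : CondIndepFun m hm Z T μ)
    {φ : ℝ × ℝ → ℝ} (hφ : Measurable φ) {M : ℝ} (hφ0 : ∀ y, 0 ≤ φ y) (hφM : ∀ y, φ y ≤ M)
    {u : Ω → ℝ} (hu : StronglyMeasurable[m] u) {C : ℝ} (hC0 : 0 ≤ C) (hC : ∀ ω, |u ω| ≤ C) :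
    ∫ ω, u ω * (T ω * φ (Z ω)) ∂μ = ∫ ω, ((μ[T|m]) ω * u ω) * φ (Z ω) ∂μ := by
  haveI := isFiniteMeasure_trim (μ := μ) hm
  have hM0 : 0 ≤ M := le_trans (hφ0 (0, 0)) (hφM (0, 0))
  set A : Set Ω := T ⁻¹' {1} with hAdef
  have hA : MeasurableSet A := hT (measurableSet_singleton 1)
  have hTind : ∀ ω, T ω = A.indicator (fun _ => (1 : ℝ)) ω := by
    intro ω
    rcases hT01 ω with h | h <;> simp [Set.indicator_apply, hAdef, h]
  -- conditional expectation of `T`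
  set q : Ω → ℝ := μ[A.indicator (fun _ => (1 : ℝ))|m] with hqdef
  have hTq : μ[T|m] =ᵐ[μ] q := by
    rw [show T = A.indicator (fun _ => (1 : ℝ)) from funext hTind]
  have hqsm : StronglyMeasurable[m] q := stronglyMeasurable_condExp
  have hintA : Integrable (A.indicator fun _ => (1 : ℝ)) μ :=
    (integrable_const 1).indicator hA
  have hq0 : 0 ≤ᵐ[μ] q :=
    condExp_nonneg (Eventually.of_forall fun ω =>
      Set.indicator_nonneg (fun _ _ => zero_le_one) ω)
  have hq1 : q ≤ᵐ[μ] fun _ => (1 : ℝ) := by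
    have h := condExp_mono (μ := μ) (m := m) hintA (integrable_const (1 : ℝ))
      (Eventually.of_forall fun ω => by
        by_cases h : ω ∈ A <;> simp [Set.indicator_apply, h])
    rwa [condExp_const hm] at h
  have hqabs : ∀ᵐ ω ∂μ, |q ω| ≤ 1 := by
    filter_upwards [hq0, hq1] with ω h0 h1
    rw [abs_of_nonneg h0]; exact h1
  -- step 1 : conditional independence for sets
  have step1 : ∀ B : Set (ℝ × ℝ), MeasurableSet B →
      (μ[((Z ⁻¹' B) ∩ A).indicator (fun _ => (1 : ℝ))|m]) =ᵐ[μ]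
        fun ω => (μ[(Z ⁻¹' B).indicator (fun _ => (1 : ℝ))|m]) ω * q ω := by
    intro B hB
    exact (condIndepFun_iff_condExp_inter_preimage_eq_mul hZ hT).mp hindep B {1} hB
      (measurableSet_singleton 1)
  -- core computation for indicators
  have core : ∀ B : Set (ℝ × ℝ), MeasurableSet B →
      ∫ ω, u ω * (A ∩ Z ⁻¹' B).indicator (fun _ => (1 : ℝ)) ω ∂μ
        = ∫ ω, (q ω * u ω) * (Z ⁻¹' B).indicator (fun _ => (1 : ℝ)) ω ∂μ := by
    intro B hB
    have hintB : Integrable ((A ∩ Z ⁻¹' B).indicator fun _ => (1 : ℝ)) μ :=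
      (integrable_const 1).indicator (hA.inter (hZ hB))
    have hintB' : Integrable ((Z ⁻¹' B).indicator fun _ => (1 : ℝ)) μ :=
      (integrable_const 1).indicator (hZ hB)
    have h1 := aux_integral_mul_condexp hm hintB hu (Eventually.of_forall hC)
    have h4 := aux_integral_mul_condexp (u := fun ω => q ω * u ω) hm hintB' (hqsm.mul hu)
      (C := C) (by
        filter_upwards [hqabs] with ω hω
        calc |q ω * u ω| ≤ 1 * C := aux_abs_mul_le hω (hC ω)
          _ = C := one_mul C)
    have h2 : ∫ ω, u ω * (μ[(A ∩ Z ⁻¹' B).indicator (fun _ => (1 : ℝ))|m]) ω ∂μ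
        = ∫ ω, u ω * ((μ[(Z ⁻¹' B).indicator (fun _ => (1 : ℝ))|m]) ω * q ω) ∂μ := by
      refine integral_congr_ae ?_
      have := step1 B hB
      rw [Set.inter_comm A (Z ⁻¹' B)]
      filter_upwards [this] with ω hω
      rw [hω]
    have h3 : ∫ ω, u ω * ((μ[(Z ⁻¹' B).indicator (fun _ => (1 : ℝ))|m]) ω * q ω) ∂μ
        = ∫ ω, (q ω * u ω) * (μ[(Z ⁻¹' B).indicator (fun _ => (1 : ℝ))|m]) ω ∂μ := by
      refine integral_congr_ae (Eventually.of_forall fun ω => by ring)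
    rw [h1, h2, h3, ← h4]
  -- simple function case
  have hsimple : ∀ ψ : SimpleFunc (ℝ × ℝ) ℝ,
      ∫ ω, u ω * (T ω * ψ (Z ω)) ∂μ = ∫ ω, (q ω * u ω) * ψ (Z ω) ∂μ := by
    intro ψ
    induction ψ using SimpleFunc.induction with
    | const c hs =>
      rename_i B
      have hB := hs
      have e1 : ∀ ω, u ω * (T ω * (SimpleFunc.piecewise B hB
            (SimpleFunc.const _ c) (SimpleFunc.const _ 0)) (Z ω))
          = c * (u ω * (A ∩ Z ⁻¹' B).indicator (fun _ => (1 : ℝ)) ω) := by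
        intro ω
        rcases hT01 ω with h | h <;> by_cases hzB : Z ω ∈ B <;>
          simp [Set.indicator_apply, h, hzB, hAdef, Set.mem_inter_iff] <;> ring
      have e2 : ∀ ω, (q ω * u ω) * (SimpleFunc.piecewise B hB
            (SimpleFunc.const _ c) (SimpleFunc.const _ 0)) (Z ω)
          = c * ((q ω * u ω) * (Z ⁻¹' B).indicator (fun _ => (1 : ℝ)) ω) := by
        intro ω
        by_cases hzB : Z ω ∈ B <;> simp [Set.indicator_apply, hzB] <;> ring
      calc ∫ ω, u ω * (T ω * (SimpleFunc.piecewise B hB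
              (SimpleFunc.const _ c) (SimpleFunc.const _ 0)) (Z ω)) ∂μ
          = ∫ ω, c * (u ω * (A ∩ Z ⁻¹' B).indicator (fun _ => (1 : ℝ)) ω) ∂μ :=
            integral_congr_ae (Eventually.of_forall e1)
        _ = c * ∫ ω, u ω * (A ∩ Z ⁻¹' B).indicator (fun _ => (1 : ℝ)) ω ∂μ :=
            integral_const_mul _ _
        _ = c * ∫ ω, (q ω * u ω) * (Z ⁻¹' B).indicator (fun _ => (1 : ℝ)) ω ∂μ := by
            rw [core B hB]
        _ = ∫ ω, c * ((q ω * u ω) * (Z ⁻¹' B).indicator (fun _ => (1 : ℝ)) ω) ∂μ :=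
            (integral_const_mul _ _).symm
        _ = _ := integral_congr_ae (Eventually.of_forall fun ω => (e2 ω).symm)
    | add _hdisj hf hg =>
      rename_i f g
      obtain ⟨Cf, hCf⟩ := (f.map fun t => |t|).exists_forall_le
      obtain ⟨Cg, hCg⟩ := (g.map fun t => |t|).exists_forall_le
      simp only [SimpleFunc.coe_map, Function.comp_apply] at hCf hCg
      have hTabs : ∀ ω, |T ω| ≤ 1 := fun ω => by
        rcases hT01 ω with h | h <;> simp [h]
      have intf1 : Integrable (fun ω => u ω * (T ω * f (Z ω))) μ := by
        refine aux_integrable_of_bound (((hu.mono hm).measurable.mul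
          (hT.mul (f.measurable.comp hZ))).aestronglyMeasurable) (C * (1 * Cf))
          (Eventually.of_forall fun ω => aux_abs_mul_le (hC ω)
            (aux_abs_mul_le (hTabs ω) (hCf (Z ω))))
      have intg1 : Integrable (fun ω => u ω * (T ω * g (Z ω))) μ := by
        refine aux_integrable_of_bound (((hu.mono hm).measurable.mul
          (hT.mul (g.measurable.comp hZ))).aestronglyMeasurable) (C * (1 * Cg))
          (Eventually.of_forall fun ω => aux_abs_mul_le (hC ω)
            (aux_abs_mul_le (hTabs ω) (hCg (Z ω))))
      have intf2 : Integrable (fun ω => (q ω * u ω) * f (Z ω)) μ := by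
        refine aux_integrable_of_bound (((hqsm.mono hm).measurable.mul
          (hu.mono hm).measurable).mul (f.measurable.comp hZ)).aestronglyMeasurable
          ((1 * C) * Cf) ?_
        filter_upwards [hqabs] with ω hω
        exact aux_abs_mul_le (aux_abs_mul_le hω (hC ω)) (hCf (Z ω))
      have intg2 : Integrable (fun ω => (q ω * u ω) * g (Z ω)) μ := by
        refine aux_integrable_of_bound (((hqsm.mono hm).measurable.mul
          (hu.mono hm).measurable).mul (g.measurable.comp hZ)).aestronglyMeasurable
          ((1 * C) * Cg) ?_
        filter_upwards [hqabs] with ω hω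
        exact aux_abs_mul_le (aux_abs_mul_le hω (hC ω)) (hCg (Z ω))
      calc ∫ ω, u ω * (T ω * (f + g) (Z ω)) ∂μ
          = ∫ ω, (u ω * (T ω * f (Z ω)) + u ω * (T ω * g (Z ω))) ∂μ := by
            refine integral_congr_ae (Eventually.of_forall fun ω => ?_)
            simp [SimpleFunc.coe_add]; ring
        _ = ∫ ω, u ω * (T ω * f (Z ω)) ∂μ + ∫ ω, u ω * (T ω * g (Z ω)) ∂μ :=
            integral_add intf1 intg1
        _ = ∫ ω, (q ω * u ω) * f (Z ω) ∂μ + ∫ ω, (q ω * u ω) * g (Z ω) ∂μ := by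
            rw [hf, hg]
        _ = ∫ ω, ((q ω * u ω) * f (Z ω) + (q ω * u ω) * g (Z ω)) ∂μ :=
            (integral_add intf2 intg2).symm
        _ = ∫ ω, (q ω * u ω) * (f + g) (Z ω) ∂μ := by
            refine integral_congr_ae (Eventually.of_forall fun ω => ?_)
            simp [SimpleFunc.coe_add]; ring
  -- approximation
  have hmem : (0 : ℝ) ∈ Icc (0 : ℝ) M := ⟨le_refl 0, hM0⟩
  set φn : ℕ → SimpleFunc (ℝ × ℝ) ℝ :=
    fun n => SimpleFunc.approxOn φ hφ (Icc 0 M) 0 hmem n with hφndef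
  have hφn_mem : ∀ n y, φn n y ∈ Icc (0 : ℝ) M :=
    fun n y => SimpleFunc.approxOn_mem hφ hmem n y
  have hφn_tendsto : ∀ y, Tendsto (fun n => φn n y) atTop (nhds (φ y)) :=
    fun y => SimpleFunc.tendsto_approxOn hφ hmem
      (subset_closure (⟨hφ0 y, hφM y⟩ : φ y ∈ Icc (0:ℝ) M))
  have hφn_abs : ∀ n y, |φn n y| ≤ M := fun n y => by
    have := hφn_mem n y
    rw [abs_of_nonneg this.1]; exact this.2
  have hTabs : ∀ ω, |T ω| ≤ 1 := fun ω => by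
    rcases hT01 ω with h | h <;> simp [h]
  have lim1 : Tendsto (fun n => ∫ ω, u ω * (T ω * φn n (Z ω)) ∂μ) atTop
      (nhds (∫ ω, u ω * (T ω * φ (Z ω)) ∂μ)) := by
    refine tendsto_integral_of_dominated_convergence (fun _ => C * (1 * M))
      (fun n => ((hu.mono hm).measurable.mul
        (hT.mul ((φn n).measurable.comp hZ))).aestronglyMeasurable)
      (integrable_const _)
      (fun n => Eventually.of_forall fun ω => by
        rw [Real.norm_eq_abs]
        exact aux_abs_mul_le (hC ω) (aux_abs_mul_le (hTabs ω) (hφn_abs n (Z ω))))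
      (Eventually.of_forall fun ω => ?_)
    exact ((hφn_tendsto (Z ω)).const_mul (T ω)).const_mul (u ω)
  have lim2 : Tendsto (fun n => ∫ ω, (q ω * u ω) * φn n (Z ω) ∂μ) atTop
      (nhds (∫ ω, (q ω * u ω) * φ (Z ω) ∂μ)) := by
    refine tendsto_integral_of_dominated_convergence (fun _ => (1 * C) * M)
      (fun n => (((hqsm.mono hm).measurable.mul
        (hu.mono hm).measurable).mul ((φn n).measurable.comp hZ)).aestronglyMeasurable)
      (integrable_const _)
      (fun n => ?_)
      (Eventually.of_forall fun ω => (hφn_tendsto (Z ω)).const_mul _)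
    filter_upwards [hqabs] with ω hω
    rw [Real.norm_eq_abs]
    exact aux_abs_mul_le (aux_abs_mul_le hω (hC ω)) (hφn_abs n (Z ω))
  have heq : ∫ ω, u ω * (T ω * φ (Z ω)) ∂μ = ∫ ω, (q ω * u ω) * φ (Z ω) ∂μ :=
    tendsto_nhds_unique (by simpa only [hsimple] using lim1) lim2
  rw [heq]
  refine integral_congr_ae ?_
  filter_upwards [hTq] with ω hω
  rw [hω]

end AuxLemmas


/-- The IPW identity: integrating the weighted outcome against a bounded function of `X`
equals integrating the difference of conditional expectations against it. -/
lemma aux_IPW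
    {Ω : Type*} {m : MeasurableSpace Ω} [mΩ : MeasurableSpace Ω] [StandardBorelSpace Ω]
    (μ : Measure Ω) [IsProbabilityMeasure μ] (hm : m ≤ mΩ) {k : ℕ}
    (X : Ω → (Fin k → ℝ)) (hX : Measurable X) (hXm : Measurable[m] X)
    (T : Ω → ℝ) (hT : Measurable T) (hT01 : ∀ ω, T ω = 0 ∨ T ω = 1)
    (Y0 Y1 Y : Ω → ℝ) (hY0 : Measurable Y0) (hY1 : Measurable Y1)
    (hY : ∀ ω, Y ω = T ω * Y1 ω + (1 - T ω) * Y0 ω)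
    (hunconf : CondIndepFun m hm (fun ω => (Y0 ω, Y1 ω)) T μ)
    (ε : ℝ) (hε : 0 < ε) (hε2 : ε ≤ 1 / 2)
    (p : (Fin k → ℝ) → ℝ) (hp : Measurable p)
    (hpX : (fun ω => p (X ω)) =ᵐ[μ] μ[T | m])
    (hoverlap : ∀ᵐ ω ∂μ, ε ≤ p (X ω) ∧ p (X ω) ≤ 1 - ε)
    (hpos0 : ∀ᵐ ω ∂μ, 0 ≤ Y0 ω) (hpos1 : ∀ᵐ ω ∂μ, 0 ≤ Y1 ω)
    (τ : ℝ) (v : (Fin k → ℝ) → ℝ) (hv : Measurable v) (hv1 : ∀ y, |v y| ≤ 1) :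
    ∫ ω, (T ω / p (X ω) - (1 - T ω) / (1 - p (X ω)))
        * (Y ω * (if Y ω ≤ τ then (1 : ℝ) else 0)) * v (X ω) ∂μ
      = ∫ ω, ((μ[(fun ω' => Y1 ω' * (if Y1 ω' ≤ τ then (1 : ℝ) else 0)) | m]) ω
          - (μ[(fun ω' => Y0 ω' * (if Y0 ω' ≤ τ then (1 : ℝ) else 0)) | m]) ω) * v (X ω) ∂μ := by
  classical
  -- clamped propensity score
  set p' : (Fin k → ℝ) → ℝ := fun y => max ε (min (p y) (1 - ε)) with hp'def
  have hp'm : Measurable p' := measurable_const.max (hp.min measurable_const)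
  have hp'lb : ∀ y, ε ≤ p' y := fun y => le_max_left _ _
  have hp'ub : ∀ y, p' y ≤ 1 - ε := fun y => max_le (by linarith) (min_le_right _ _)
  have hp'pos : ∀ y, 0 < p' y := fun y => lt_of_lt_of_le hε (hp'lb y)
  have h1p'lb : ∀ y, ε ≤ 1 - p' y := fun y => by have := hp'ub y; linarith
  have h1p'pos : ∀ y, 0 < 1 - p' y := fun y => lt_of_lt_of_le hε (h1p'lb y)
  have hpp' : (fun ω => p (X ω)) =ᵐ[μ] fun ω => p' (X ω) := by
    filter_upwards [hoverlap] with ω h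
    rw [hp'def]
    simp only [min_eq_left h.2, max_eq_right h.1]
  -- truncated outcome transforms
  set φ1 : ℝ × ℝ → ℝ := fun y => max y.2 0 * (if y.2 ≤ τ then (1 : ℝ) else 0) with hφ1def
  set φ0 : ℝ × ℝ → ℝ := fun y => max y.1 0 * (if y.1 ≤ τ then (1 : ℝ) else 0) with hφ0def
  have hite : Measurable (fun t : ℝ => if t ≤ τ then (1 : ℝ) else 0) :=
    Measurable.ite (measurableSet_le measurable_id measurable_const)
      measurable_const measurable_const
  have hφ1 : Measurable φ1 :=
    (measurable_snd.max measurable_const).mul (hite.comp measurable_snd)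
  have hφ0 : Measurable φ0 :=
    (measurable_fst.max measurable_const).mul (hite.comp measurable_fst)
  set M : ℝ := max τ 0 with hMdef
  have hφ1_0 : ∀ y, 0 ≤ φ1 y := fun y =>
    mul_nonneg (le_max_right _ _) (by split <;> norm_num)
  have hφ0_0 : ∀ y, 0 ≤ φ0 y := fun y =>
    mul_nonneg (le_max_right _ _) (by split <;> norm_num)
  have hφ1_M : ∀ y, φ1 y ≤ M := by
    intro y
    rw [hφ1def, hMdef]
    by_cases h : y.2 ≤ τ
    · simp only [h, if_true, mul_one]
      exact max_le_max h le_rfl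
    · simp only [h, if_false, mul_zero]
      exact le_max_right τ 0
  have hφ0_M : ∀ y, φ0 y ≤ M := by
    intro y
    rw [hφ0def, hMdef]
    by_cases h : y.1 ≤ τ
    · simp only [h, if_true, mul_one]
      exact max_le_max h le_rfl
    · simp only [h, if_false, mul_zero]
      exact le_max_right τ 0
  have hM0 : 0 ≤ M := le_max_right τ 0
  set Z : Ω → ℝ × ℝ := fun ω => (Y0 ω, Y1 ω) with hZdef
  have hZm : Measurable Z := hY0.prodMk hY1
  -- the bounded m-measurable weights
  set u1 : Ω → ℝ := fun ω => v (X ω) / p' (X ω) with hu1def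
  set u2 : Ω → ℝ := fun ω => v (X ω) / (1 - p' (X ω)) with hu2def
  have hu1 : StronglyMeasurable[m] u1 :=
    ((hv.div hp'm).comp hXm).stronglyMeasurable
  have hu2 : StronglyMeasurable[m] u2 :=
    ((hv.div (measurable_const.sub hp'm)).comp hXm).stronglyMeasurable
  have hu1b : ∀ ω, |u1 ω| ≤ 1 / ε := fun ω => by
    rw [hu1def]
    rw [abs_div, abs_of_pos (hp'pos _)]
    exact div_le_div₀ zero_le_one (hv1 _) hε (hp'lb _)
  have hu2b : ∀ ω, |u2 ω| ≤ 1 / ε := fun ω => by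
    rw [hu2def]
    rw [abs_div, abs_of_pos (h1p'pos _)]
    exact div_le_div₀ zero_le_one (hv1 _) hε (h1p'lb _)
  have hεinv0 : (0 : ℝ) ≤ 1 / ε := by positivity
  have hTabs : ∀ ω, |T ω| ≤ 1 := fun ω => by rcases hT01 ω with h | h <;> simp [h]
  have h1Tabs : ∀ ω, |1 - T ω| ≤ 1 := fun ω => by rcases hT01 ω with h | h <;> simp [h]
  -- conditional expectation of T equals p'(X) a.e.
  have hq' : (μ[T|m]) =ᵐ[μ] fun ω => p' (X ω) := hpX.symm.trans hpp'
  -- ambient measurability of the weights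
  have hu1amb : AEStronglyMeasurable u1 μ :=
    ((hu1.mono hm).aestronglyMeasurable)
  have hu2amb : AEStronglyMeasurable u2 μ :=
    ((hu2.mono hm).aestronglyMeasurable)
  -- integrability of all pieces
  have intT1 : Integrable (fun ω => u1 ω * (T ω * φ1 (Z ω))) μ :=
    aux_integrable_of_bound
      ((hu1.mono hm).measurable.mul (hT.mul (hφ1.comp hZm))).aestronglyMeasurable
      ((1 / ε) * (1 * M))
      (Eventually.of_forall fun ω => aux_abs_mul_le (hu1b ω)
        (aux_abs_mul_le (hTabs ω) (by rw [abs_of_nonneg (hφ1_0 _)]; exact hφ1_M _)))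
  have intT2 : Integrable (fun ω => u2 ω * ((1 - T ω) * φ0 (Z ω))) μ :=
    aux_integrable_of_bound
      ((hu2.mono hm).measurable.mul ((measurable_const.sub hT).mul (hφ0.comp hZm))).aestronglyMeasurable
      ((1 / ε) * (1 * M))
      (Eventually.of_forall fun ω => aux_abs_mul_le (hu2b ω)
        (aux_abs_mul_le (h1Tabs ω) (by rw [abs_of_nonneg (hφ0_0 _)]; exact hφ0_M _)))
  have intA2 : Integrable (fun ω => u2 ω * φ0 (Z ω)) μ :=
    aux_integrable_of_bound
      ((hu2.mono hm).measurable.mul (hφ0.comp hZm)).aestronglyMeasurable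
      ((1 / ε) * M)
      (Eventually.of_forall fun ω => aux_abs_mul_le (hu2b ω)
        (by rw [abs_of_nonneg (hφ0_0 _)]; exact hφ0_M _))
  have intB2 : Integrable (fun ω => u2 ω * (T ω * φ0 (Z ω))) μ :=
    aux_integrable_of_bound
      ((hu2.mono hm).measurable.mul (hT.mul (hφ0.comp hZm))).aestronglyMeasurable
      ((1 / ε) * (1 * M))
      (Eventually.of_forall fun ω => aux_abs_mul_le (hu2b ω)
        (aux_abs_mul_le (hTabs ω) (by rw [abs_of_nonneg (hφ0_0 _)]; exact hφ0_M _)))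
  have intφ1Z : Integrable (fun ω => φ1 (Z ω)) μ :=
    aux_integrable_of_bound (hφ1.comp hZm).aestronglyMeasurable M
      (Eventually.of_forall fun ω => by rw [abs_of_nonneg (hφ1_0 _)]; exact hφ1_M _)
  have intφ0Z : Integrable (fun ω => φ0 (Z ω)) μ :=
    aux_integrable_of_bound (hφ0.comp hZm).aestronglyMeasurable M
      (Eventually.of_forall fun ω => by rw [abs_of_nonneg (hφ0_0 _)]; exact hφ0_M _)
  have hvXm : StronglyMeasurable[m] (fun ω => v (X ω)) :=
    (hv.comp hXm).stronglyMeasurable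
  -- chain for the treated term
  have chain1 : ∫ ω, u1 ω * (T ω * φ1 (Z ω)) ∂μ
      = ∫ ω, v (X ω) * (μ[fun ω' => φ1 (Z ω')|m]) ω ∂μ := by
    calc ∫ ω, u1 ω * (T ω * φ1 (Z ω)) ∂μ
        = ∫ ω, ((μ[T|m]) ω * u1 ω) * φ1 (Z ω) ∂μ :=
          aux_key_product hm hZm hT hT01 hunconf hφ1 hφ1_0 hφ1_M hu1 hεinv0 hu1b
      _ = ∫ ω, (p' (X ω) * u1 ω) * φ1 (Z ω) ∂μ := by
          refine integral_congr_ae ?_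
          filter_upwards [hq'] with ω hω
          rw [hω]
      _ = ∫ ω, v (X ω) * φ1 (Z ω) ∂μ := by
          refine integral_congr_ae (Eventually.of_forall fun ω => ?_)
          rw [hu1def]
          have h := (hp'pos (X ω)).ne'
          field_simp
      _ = ∫ ω, v (X ω) * (μ[fun ω' => φ1 (Z ω')|m]) ω ∂μ :=
          aux_integral_mul_condexp hm intφ1Z hvXm (C := 1)
            (Eventually.of_forall fun ω => hv1 _)
  -- chain for the control term
  have chain2 : ∫ ω, u2 ω * ((1 - T ω) * φ0 (Z ω)) ∂μ
      = ∫ ω, v (X ω) * (μ[fun ω' => φ0 (Z ω')|m]) ω ∂μ := by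
    have piece2 : ∫ ω, u2 ω * (T ω * φ0 (Z ω)) ∂μ
        = ∫ ω, ((μ[T|m]) ω * u2 ω) * φ0 (Z ω) ∂μ :=
      aux_key_product hm hZm hT hT01 hunconf hφ0 hφ0_0 hφ0_M hu2 hεinv0 hu2b
    calc ∫ ω, u2 ω * ((1 - T ω) * φ0 (Z ω)) ∂μ
        = ∫ ω, (u2 ω * φ0 (Z ω) - u2 ω * (T ω * φ0 (Z ω))) ∂μ :=
          integral_congr_ae (Eventually.of_forall fun ω => by ring)
      _ = ∫ ω, u2 ω * φ0 (Z ω) ∂μ - ∫ ω, u2 ω * (T ω * φ0 (Z ω)) ∂μ :=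
          integral_sub intA2 intB2
      _ = ∫ ω, u2 ω * φ0 (Z ω) ∂μ - ∫ ω, (p' (X ω) * u2 ω) * φ0 (Z ω) ∂μ := by
          rw [piece2]
          congr 1
          refine integral_congr_ae ?_
          filter_upwards [hq'] with ω hω
          rw [hω]
      _ = ∫ ω, (u2 ω * φ0 (Z ω) - (p' (X ω) * u2 ω) * φ0 (Z ω)) ∂μ := by
          refine (integral_sub intA2 ?_).symm
          exact aux_integrable_of_bound
            (((hp'm.comp hX).mul (hu2.mono hm).measurable).mul (hφ0.comp hZm)).aestronglyMeasurable
            ((1 * (1 / ε)) * M)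
            (Eventually.of_forall fun ω => aux_abs_mul_le
              (aux_abs_mul_le (by rw [abs_of_pos (hp'pos _)]; have := hp'ub (X ω); linarith) (hu2b ω))
              (by rw [abs_of_nonneg (hφ0_0 _)]; exact hφ0_M _))
      _ = ∫ ω, v (X ω) * φ0 (Z ω) ∂μ := by
          refine integral_congr_ae (Eventually.of_forall fun ω => ?_)
          rw [hu2def]
          have h := (h1p'pos (X ω)).ne'
          field_simp
      _ = ∫ ω, v (X ω) * (μ[fun ω' => φ0 (Z ω')|m]) ω ∂μ :=
          aux_integral_mul_condexp hm intφ0Z hvXm (C := 1)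
            (Eventually.of_forall fun ω => hv1 _)
  -- condexp congruences
  have hcong1 : (μ[fun ω' => φ1 (Z ω')|m]) =ᵐ[μ]
      μ[(fun ω' => Y1 ω' * (if Y1 ω' ≤ τ then (1 : ℝ) else 0))|m] := by
    refine condExp_congr_ae ?_
    filter_upwards [hpos1] with ω h
    simp only [hφ1def, hZdef, max_eq_left h]
  have hcong0 : (μ[fun ω' => φ0 (Z ω')|m]) =ᵐ[μ]
      μ[(fun ω' => Y0 ω' * (if Y0 ω' ≤ τ then (1 : ℝ) else 0))|m] := by
    refine condExp_congr_ae ?_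
    filter_upwards [hpos0] with ω h
    simp only [hφ0def, hZdef, max_eq_left h]
  -- rewrite the original integrand
  have horig : ∫ ω, (T ω / p (X ω) - (1 - T ω) / (1 - p (X ω)))
      * (Y ω * (if Y ω ≤ τ then (1 : ℝ) else 0)) * v (X ω) ∂μ
      = ∫ ω, (u1 ω * (T ω * φ1 (Z ω)) - u2 ω * ((1 - T ω) * φ0 (Z ω))) ∂μ := by
    refine integral_congr_ae ?_
    filter_upwards [hpp', hpos0, hpos1] with ω hpe h0 h1
    rcases hT01 ω with h | h
    · have hYe : Y ω = Y0 ω := by rw [hY ω, h]; ring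
      simp only [hu1def, hu2def, hφ1def, hφ0def, hZdef, h, hYe, hpe,
        max_eq_left h0, max_eq_left h1]
      ring
    · have hYe : Y ω = Y1 ω := by rw [hY ω, h]; ring
      simp only [hu1def, hu2def, hφ1def, hφ0def, hZdef, h, hYe, hpe,
        max_eq_left h0, max_eq_left h1]
      ring
  -- put everything together
  have intvg1 : Integrable (fun ω => v (X ω) * (μ[fun ω' => φ1 (Z ω')|m]) ω) μ :=
    integrable_condExp.bdd_mul ((hvXm.mono hm).aestronglyMeasurable)
      (Eventually.of_forall fun ω => by rw [Real.norm_eq_abs]; exact hv1 _)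
  have intvg0 : Integrable (fun ω => v (X ω) * (μ[fun ω' => φ0 (Z ω')|m]) ω) μ :=
    integrable_condExp.bdd_mul ((hvXm.mono hm).aestronglyMeasurable)
      (Eventually.of_forall fun ω => by rw [Real.norm_eq_abs]; exact hv1 _)
  calc ∫ ω, (T ω / p (X ω) - (1 - T ω) / (1 - p (X ω)))
      * (Y ω * (if Y ω ≤ τ then (1 : ℝ) else 0)) * v (X ω) ∂μ
      = ∫ ω, (u1 ω * (T ω * φ1 (Z ω)) - u2 ω * ((1 - T ω) * φ0 (Z ω))) ∂μ := horig
    _ = ∫ ω, u1 ω * (T ω * φ1 (Z ω)) ∂μ - ∫ ω, u2 ω * ((1 - T ω) * φ0 (Z ω)) ∂μ :=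
        integral_sub intT1 intT2
    _ = ∫ ω, v (X ω) * (μ[fun ω' => φ1 (Z ω')|m]) ω ∂μ
        - ∫ ω, v (X ω) * (μ[fun ω' => φ0 (Z ω')|m]) ω ∂μ := by rw [chain1, chain2]
    _ = ∫ ω, (v (X ω) * (μ[fun ω' => φ1 (Z ω')|m]) ω
        - v (X ω) * (μ[fun ω' => φ0 (Z ω')|m]) ω) ∂μ := (integral_sub intvg1 intvg0).symm
    _ = ∫ ω, ((μ[(fun ω' => Y1 ω' * (if Y1 ω' ≤ τ then (1 : ℝ) else 0))|m]) ω
          - (μ[(fun ω' => Y0 ω' * (if Y0 ω' ≤ τ then (1 : ℝ) else 0))|m]) ω) * v (X ω) ∂μ := by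
        refine integral_congr_ae ?_
        filter_upwards [hcong1, hcong0] with ω e1 e0
        rw [e1, e0]
        ring

/-- If an `σ(X)`-measurable integrable function has the same integral as the constant `Δ`
on every lower set `{X ≤ x}` and on the whole space, it equals `Δ` a.e. -/
lemma aux_unique {Ω : Type*} {m : MeasurableSpace Ω} [mΩ : MeasurableSpace Ω]
    (μ : Measure Ω) [IsProbabilityMeasure μ] (hm : m ≤ mΩ) {k : ℕ}
    (X : Ω → (Fin k → ℝ)) (hX : Measurable X)
    (hmeq : m = MeasurableSpace.comap X inferInstance)
    {D : Ω → ℝ} (hDm : StronglyMeasurable[m] D) (hDint : Integrable D μ) (Δ : ℝ)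
    (htot : ∫ ω, D ω ∂μ = Δ)
    (hsets : ∀ x : Fin k → ℝ,
      ∫ ω in X ⁻¹' Set.Iic x, D ω ∂μ = Δ * (μ (X ⁻¹' Set.Iic x)).toReal) :
    D =ᵐ[μ] fun _ => Δ := by
  classical
  haveI := isFiniteMeasure_trim (μ := μ) hm
  set h : Ω → ℝ := fun ω => D ω - Δ with hhdef
  have hDmeas : Measurable D := hDm.measurable.mono hm le_rfl
  have hhmeas : Measurable h := hDmeas.sub measurable_const
  have hhint : Integrable h μ := hDint.sub (integrable_const Δ)
  set ν1 : Measure Ω := μ.withDensity fun ω => ENNReal.ofReal (h ω) with hν1def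
  set ν2 : Measure Ω := μ.withDensity fun ω => ENNReal.ofReal (-h ω) with hν2def
  have hfin : ∀ g : Ω → ℝ, (∀ ω, g ω ≤ |h ω|) →
      (∫⁻ ω, ENNReal.ofReal (g ω) ∂μ) ≠ ⊤ := by
    intro g hg
    refine ne_of_lt (lt_of_le_of_lt ?_ hhint.2)
    refine lintegral_mono fun ω => ?_
    rw [← ofReal_norm, Real.norm_eq_abs]
    exact ENNReal.ofReal_le_ofReal (hg ω)
  haveI hfin1 : IsFiniteMeasure ν1 :=
    isFiniteMeasure_withDensity (hfin h fun ω => le_abs_self _)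
  haveI hfin2 : IsFiniteMeasure ν2 :=
    isFiniteMeasure_withDensity (hfin (fun ω => -h ω) fun ω => neg_le_abs (h ω))
  have hkey : ∀ s : Set Ω, MeasurableSet s →
      ∫ ω in s, h ω ∂μ = (ν1 s).toReal - (ν2 s).toReal := by
    intro s hs
    rw [integral_eq_lintegral_pos_part_sub_lintegral_neg_part hhint.integrableOn,
      hν1def, hν2def, withDensity_apply _ hs, withDensity_apply _ hs]
  have hzero : ∀ s : Set Ω, MeasurableSet s →
      (∫ ω in s, D ω ∂μ = Δ * (μ s).toReal) → ν1 s = ν2 s := by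
    intro s hs hD
    have h0 : ∫ ω in s, h ω ∂μ = 0 := by
      rw [hhdef]
      rw [integral_sub hDint.integrableOn (integrable_const Δ).integrableOn, hD,
        setIntegral_const, smul_eq_mul, measureReal_def]
      ring
    have h1 := hkey s hs
    rw [h0] at h1
    exact (ENNReal.toReal_eq_toReal_iff' (measure_ne_top _ _) (measure_ne_top _ _)).mp
      (by linarith)
  -- the generating π-system
  have hspan : IsCountablySpanning (Set.range (Set.Iic : ℝ → Set ℝ)) :=
    ⟨fun n => Set.Iic n, fun n => Set.mem_range_self _, by
      ext y
      simp only [Set.mem_iUnion, Set.mem_Iic, Set.mem_univ, iff_true]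
      exact exists_nat_ge y⟩
  have hRgen : (inferInstance : MeasurableSpace (Fin k → ℝ)) =
      MeasurableSpace.generateFrom
        (Set.range (Set.Iic : (Fin k → ℝ) → Set (Fin k → ℝ))) := by
    have h1 : MeasurableSpace.generateFrom
        (Set.pi Set.univ '' Set.pi Set.univ fun _ : Fin k =>
          Set.range (Set.Iic : ℝ → Set ℝ)) = MeasurableSpace.pi :=
      generateFrom_eq_pi
        (fun _ => ((BorelSpace.measurable_eq (α := ℝ)).trans
          (borel_eq_generateFrom_Iic ℝ)).symm) (fun _ => hspan)
    have h2 : (Set.pi Set.univ '' Set.pi Set.univ fun _ : Fin k =>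
        Set.range (Set.Iic : ℝ → Set ℝ))
        = Set.range (Set.Iic : (Fin k → ℝ) → Set (Fin k → ℝ)) := by
      ext s
      constructor
      · rintro ⟨t, ht, rfl⟩
        choose x hx using fun j => ht j (Set.mem_univ j)
        exact ⟨fun j => x j, by
          rw [← Set.pi_univ_Iic]
          exact Set.pi_congr rfl fun j _ => hx j⟩
      · rintro ⟨x, rfl⟩
        exact ⟨fun j => Set.Iic (x j), fun j _ => Set.mem_range_self _,
          Set.pi_univ_Iic x⟩
    rw [← h1, h2]
  have hmgen : m = MeasurableSpace.generateFrom
      (Set.preimage X '' Set.range (Set.Iic : (Fin k → ℝ) → Set (Fin k → ℝ))) := by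
    rw [hmeq]
    conv_lhs => rw [hRgen]
    exact MeasurableSpace.comap_generateFrom
  have hπ : IsPiSystem
      (Set.preimage X '' Set.range (Set.Iic : (Fin k → ℝ) → Set (Fin k → ℝ))) := by
    rintro _ ⟨t1, ⟨x1, rfl⟩, rfl⟩ _ ⟨t2, ⟨x2, rfl⟩, rfl⟩ _
    exact ⟨Set.Iic (x1 ⊓ x2), ⟨x1 ⊓ x2, rfl⟩, by
      rw [← Set.preimage_inter, Set.Iic_inter_Iic]⟩
  have hIicm : ∀ x : Fin k → ℝ, MeasurableSet[m] (X ⁻¹' Set.Iic x) := fun x =>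
    hmgen ▸ MeasurableSpace.measurableSet_generateFrom ⟨Set.Iic x, ⟨x, rfl⟩, rfl⟩
  haveI : IsFiniteMeasure (ν1.trim hm) := isFiniteMeasure_trim hm
  haveI : IsFiniteMeasure (ν2.trim hm) := isFiniteMeasure_trim hm
  have htrim : ν1.trim hm = ν2.trim hm := by
    refine ext_of_generate_finite _ hmgen hπ ?_ ?_
    · rintro s ⟨t, ⟨x, rfl⟩, rfl⟩
      rw [trim_measurableSet_eq hm (hIicm x), trim_measurableSet_eq hm (hIicm x)]
      exact hzero _ (hm _ (hIicm x)) (hsets x)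
    · rw [trim_measurableSet_eq hm MeasurableSet.univ,
        trim_measurableSet_eq hm MeasurableSet.univ]
      refine hzero _ MeasurableSet.univ ?_
      rw [Measure.restrict_univ, htot]
      simp
  have hall : ∀ s : Set Ω, MeasurableSet[m] s → ν1 s = ν2 s := by
    intro s hs
    rw [← trim_measurableSet_eq hm hs, ← trim_measurableSet_eq hm hs, htrim]
  have hset_eq : ∀ s : Set Ω, MeasurableSet[m] s →
      ∫ ω in s, D ω ∂μ = ∫ ω in s, (fun _ => Δ) ω ∂μ := by
    intro s hs
    have h1 := hkey s (hm s hs)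
    rw [hall s hs, sub_self] at h1
    rw [hhdef] at h1
    rw [integral_sub hDint.integrableOn (integrable_const Δ).integrableOn] at h1
    have := sub_eq_zero.mp h1
    rw [this]
  exact ae_eq_of_forall_setIntegral_eq_of_sigmaFinite' hm
    (fun s _ _ => hDint.integrableOn)
    (fun s _ _ => (integrable_const Δ).integrableOn)
    (fun s hs _ => hset_eq s hs)
    hDm.aestronglyMeasurable
    (stronglyMeasurable_const.aestronglyMeasurable)

/-- **Characterization of the null of homogeneous restricted conditional average treatment
effect, no censoring** (the identification underlying the paper's Theorem 6): under
unconfoundedness, overlap and nonnegative potential outcomes, for fixed `τ̄` and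
`Δ := E[(T/p(X) − (1−T)/(1−p(X))) · Y · 1{Y ≤ τ̄}]`, there exists a constant `c` with
`E[Y(1)·1{Y(1) ≤ τ̄} | σ(X)] − E[Y(0)·1{Y(0) ≤ τ̄} | σ(X)] = c` a.s. iff
`E[(T/p(X) − (1−T)/(1−p(X))) · Y · 1{Y ≤ τ̄} · 1{X ≤ x}] = Δ · ℙ(X ≤ x)` for every `x`. -/

theorem homogeneous_restricted_CATE_characterization
    {Ω : Type*} [MeasurableSpace Ω] [StandardBorelSpace Ω] [Nonempty Ω]
    (μ : Measure Ω) [IsProbabilityMeasure μ] {k : ℕ}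
    (X : Ω → (Fin k → ℝ)) (hX : Measurable X)
    (T : Ω → ℝ) (hT : Measurable T) (hT01 : ∀ ω, T ω = 0 ∨ T ω = 1)
    (Y0 Y1 Y : Ω → ℝ) (hY0 : Measurable Y0) (hY1 : Measurable Y1)
    (hY : ∀ ω, Y ω = T ω * Y1 ω + (1 - T ω) * Y0 ω)
    (hunconf : CondIndepFun (MeasurableSpace.comap X inferInstance) hX.comap_le
      (fun ω => (Y0 ω, Y1 ω)) T μ)
    (ε : ℝ) (hε : 0 < ε) (hε2 : ε ≤ 1 / 2)
    (p : (Fin k → ℝ) → ℝ) (hp : Measurable p)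
    (hpX : (fun ω => p (X ω)) =ᵐ[μ] μ[T | MeasurableSpace.comap X inferInstance])
    (hoverlap : ∀ᵐ ω ∂μ, ε ≤ p (X ω) ∧ p (X ω) ≤ 1 - ε)
    (hpos0 : ∀ᵐ ω ∂μ, 0 ≤ Y0 ω) (hpos1 : ∀ᵐ ω ∂μ, 0 ≤ Y1 ω)
    (τ : ℝ) (Δ : ℝ)
    (hΔ : Δ = ∫ ω, (T ω / p (X ω) - (1 - T ω) / (1 - p (X ω)))
            * (Y ω * (if Y ω ≤ τ then (1 : ℝ) else 0)) ∂μ) :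
    (∃ c : ℝ,
        (fun ω =>
            (μ[(fun ω' => Y1 ω' * (if Y1 ω' ≤ τ then (1 : ℝ) else 0)) |
                MeasurableSpace.comap X inferInstance]) ω
          - (μ[(fun ω' => Y0 ω' * (if Y0 ω' ≤ τ then (1 : ℝ) else 0)) |
                MeasurableSpace.comap X inferInstance]) ω)
          =ᵐ[μ] (fun _ => c))
      ↔
    (∀ x : Fin k → ℝ,
        (∫ ω, (T ω / p (X ω) - (1 - T ω) / (1 - p (X ω)))
            * (Y ω * (if Y ω ≤ τ then (1 : ℝ) else 0))
            * (if ∀ j, X ω j ≤ x j then (1 : ℝ) else 0) ∂μ)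
          = Δ * (μ {ω | ∀ j, X ω j ≤ x j}).toReal) := by
  classical
  have hm : MeasurableSpace.comap X inferInstance ≤ ‹MeasurableSpace Ω› := hX.comap_le
  have hXm : Measurable[MeasurableSpace.comap X inferInstance] X := fun s hs => ⟨s, hs, rfl⟩
  set D : Ω → ℝ := fun ω =>
      (μ[(fun ω' => Y1 ω' * (if Y1 ω' ≤ τ then (1 : ℝ) else 0)) |
          MeasurableSpace.comap X inferInstance]) ω
    - (μ[(fun ω' => Y0 ω' * (if Y0 ω' ≤ τ then (1 : ℝ) else 0)) |
          MeasurableSpace.comap X inferInstance]) ω with hDdef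
  have hDm : StronglyMeasurable[MeasurableSpace.comap X inferInstance] D :=
    stronglyMeasurable_condExp.sub stronglyMeasurable_condExp
  have hDint : Integrable D μ := integrable_condExp.sub integrable_condExp
  -- the IPW identity for v ≡ 1
  have hΔD : Δ = ∫ ω, D ω ∂μ := by
    have h1 : ∫ ω, (T ω / p (X ω) - (1 - T ω) / (1 - p (X ω)))
        * (Y ω * (if Y ω ≤ τ then (1 : ℝ) else 0)) * (fun _ : Fin k → ℝ => (1:ℝ)) (X ω) ∂μ
        = ∫ ω, D ω * (fun _ : Fin k → ℝ => (1:ℝ)) (X ω) ∂μ :=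
      aux_IPW μ hm X hX hXm T hT hT01 Y0 Y1 Y hY0 hY1 hY hunconf ε hε hε2 p hp hpX
        hoverlap hpos0 hpos1 τ (fun _ => 1) measurable_const (fun y => by norm_num)
    calc Δ = ∫ ω, (T ω / p (X ω) - (1 - T ω) / (1 - p (X ω)))
            * (Y ω * (if Y ω ≤ τ then (1 : ℝ) else 0)) ∂μ := hΔ
      _ = ∫ ω, (T ω / p (X ω) - (1 - T ω) / (1 - p (X ω)))
            * (Y ω * (if Y ω ≤ τ then (1 : ℝ) else 0)) * (fun _ : Fin k → ℝ => (1:ℝ)) (X ω) ∂μ := by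
          refine integral_congr_ae (Eventually.of_forall fun ω => ?_)
          simp
      _ = ∫ ω, D ω * (fun _ : Fin k → ℝ => (1:ℝ)) (X ω) ∂μ := h1
      _ = ∫ ω, D ω ∂μ := by
          refine integral_congr_ae (Eventually.of_forall fun ω => ?_)
          simp
  -- per-x facts
  have hsetx : ∀ x : Fin k → ℝ, MeasurableSet {y : Fin k → ℝ | ∀ j, y j ≤ x j} := by
    intro x
    have : {y : Fin k → ℝ | ∀ j, y j ≤ x j} = ⋂ j, {y | y j ≤ x j} := by
      ext y; simp
    rw [this]
    exact MeasurableSet.iInter fun j =>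
      measurableSet_le (measurable_pi_apply j) measurable_const
  have hIicx : ∀ x : Fin k → ℝ, MeasurableSet (Set.Iic x) := by
    intro x
    have : Set.Iic x = {y : Fin k → ℝ | ∀ j, y j ≤ x j} := by
      ext y; simp [Set.mem_Iic, Pi.le_def]
    rw [this]; exact hsetx x
  have hSx : ∀ x : Fin k → ℝ, {ω | ∀ j, X ω j ≤ x j} = X ⁻¹' Set.Iic x := by
    intro x; ext ω; simp [Set.mem_Iic, Pi.le_def]
  have hIPWx : ∀ x : Fin k → ℝ,
      ∫ ω, (T ω / p (X ω) - (1 - T ω) / (1 - p (X ω)))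
          * (Y ω * (if Y ω ≤ τ then (1 : ℝ) else 0))
          * (if ∀ j, X ω j ≤ x j then (1 : ℝ) else 0) ∂μ
        = ∫ ω in X ⁻¹' Set.Iic x, D ω ∂μ := by
    intro x
    have hv : Measurable (fun y : Fin k → ℝ => if ∀ j, y j ≤ x j then (1 : ℝ) else 0) :=
      Measurable.ite (hsetx x) measurable_const measurable_const
    have hv1 : ∀ y : Fin k → ℝ, |if ∀ j, y j ≤ x j then (1 : ℝ) else 0| ≤ 1 := fun y => by
      split <;> norm_num
    have h1 : ∫ ω, (T ω / p (X ω) - (1 - T ω) / (1 - p (X ω)))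
        * (Y ω * (if Y ω ≤ τ then (1 : ℝ) else 0))
        * (fun y : Fin k → ℝ => if ∀ j, y j ≤ x j then (1 : ℝ) else 0) (X ω) ∂μ
        = ∫ ω, D ω * (fun y : Fin k → ℝ => if ∀ j, y j ≤ x j then (1 : ℝ) else 0) (X ω) ∂μ :=
      aux_IPW μ hm X hX hXm T hT hT01 Y0 Y1 Y hY0 hY1 hY hunconf ε hε hε2 p hp hpX
        hoverlap hpos0 hpos1 τ _ hv hv1
    calc ∫ ω, (T ω / p (X ω) - (1 - T ω) / (1 - p (X ω)))
          * (Y ω * (if Y ω ≤ τ then (1 : ℝ) else 0))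
          * (if ∀ j, X ω j ≤ x j then (1 : ℝ) else 0) ∂μ
        = ∫ ω, D ω * (if ∀ j, X ω j ≤ x j then (1 : ℝ) else 0) ∂μ := h1
      _ = ∫ ω, (X ⁻¹' Set.Iic x).indicator D ω ∂μ := by
          refine integral_congr_ae (Eventually.of_forall fun ω => ?_)
          by_cases h : ∀ j, X ω j ≤ x j <;>
            simp [Set.indicator_apply, h, Set.mem_preimage, Set.mem_Iic, Pi.le_def]
      _ = ∫ ω in X ⁻¹' Set.Iic x, D ω ∂μ := integral_indicator (hX (hIicx x))
  constructor
  · rintro ⟨c, hc⟩ x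
    have hΔc : Δ = c := by
      rw [hΔD, integral_congr_ae hc]
      simp
    calc ∫ ω, (T ω / p (X ω) - (1 - T ω) / (1 - p (X ω)))
          * (Y ω * (if Y ω ≤ τ then (1 : ℝ) else 0))
          * (if ∀ j, X ω j ≤ x j then (1 : ℝ) else 0) ∂μ
        = ∫ ω in X ⁻¹' Set.Iic x, D ω ∂μ := hIPWx x
      _ = ∫ ω in X ⁻¹' Set.Iic x, (fun _ => c) ω ∂μ :=
          integral_congr_ae (ae_restrict_of_ae hc)
      _ = c * (μ (X ⁻¹' Set.Iic x)).toReal := by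
          rw [setIntegral_const, smul_eq_mul, measureReal_def]; ring
      _ = Δ * (μ {ω | ∀ j, X ω j ≤ x j}).toReal := by rw [hΔc, hSx x]
  · intro hR
    refine ⟨Δ, ?_⟩
    refine aux_unique μ hm X hX rfl hDm hDint Δ hΔD.symm ?_
    intro x
    rw [← hIPWx x, hR x, hSx x]
end

section
/- Local treatment effect identification without censoring (the identification underlying the paper's Theorem 7 and Section 4.3): under the instrumental-variable assumptions, for every bounded measurable g : ℝ × ℝ^k → ℝ one has E[g(Y, X) · T · Z / q(X)] − E[g(Y, X) · T · (1 − Z) / (1 − q(X))] = E[g(Y(1), X) · 1{T(1) > T(0)}] and E[g(Y, X) · (1 − T) · (1 − Z) / (1 − q(X))] − E[g(Y, X) · (1 − T) · Z / q(X)] = E[g(Y(0), X) · 1{T(1) > T(0)}]. -/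
open MeasureTheory ProbabilityTheory Filter
open scoped NNReal ENNReal

@[reducible] def mC {Ω : Type*} [MeasurableSpace Ω] {k : ℕ} (X : Ω → (Fin k → ℝ)) : MeasurableSpace Ω :=
  MeasurableSpace.comap X inferInstance

section Helpers

variable {Ω : Type*} [MeasurableSpace Ω] {μ : Measure Ω}

lemma integrable_of_bounded' [IsFiniteMeasure μ] {h : Ω → ℝ}
    (hm : AEStronglyMeasurable h μ) (C : ℝ) (hb : ∀ᵐ ω ∂μ, |h ω| ≤ C) :
    Integrable h μ :=
  (integrable_const C).mono' hm (by simpa using hb)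

end Helpers

/-- Key identification lemma: for a bounded measurable `f`, a `{0,1}`-valued `W`
conditionally independent of `V` given `σ(X)` with conditional mean `r ∘ X`
bounded below by `ε > 0`, reweighting by `W / r(X)` preserves the law of `(V, X)`. -/
lemma key_reweight {Ω : Type*} [MeasurableSpace Ω] [StandardBorelSpace Ω] [Nonempty Ω]
    (μ : Measure Ω) [IsProbabilityMeasure μ] {k : ℕ}
    (X : Ω → (Fin k → ℝ)) (hX : Measurable X)
    (V : Ω → ℝ × ℝ × ℝ × ℝ) (hV : Measurable V)
    (W : Ω → ℝ) (hW : Measurable W) (hW01 : ∀ ω, W ω = 0 ∨ W ω = 1)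
    (hVW : CondIndepFun (MeasurableSpace.comap X inferInstance) hX.comap_le V W μ)
    (ε : ℝ) (hε : 0 < ε)
    (r : (Fin k → ℝ) → ℝ) (hr : Measurable r)
    (hrε : ∀ x, ε ≤ r x) (hr1 : ∀ x, r x ≤ 1)
    (hrW : (fun ω => r (X ω)) =ᵐ[μ] μ[W | MeasurableSpace.comap X inferInstance])
    (f : (ℝ × ℝ × ℝ × ℝ) × (Fin k → ℝ) → ℝ) (hf : Measurable f)
    (M : ℝ) (hM : ∀ p, |f p| ≤ M) :
    ∫ ω, f (V ω, X ω) * W ω / r (X ω) ∂μ = ∫ ω, f (V ω, X ω) ∂μ := by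
  have hm' : (mC X) ≤ ‹MeasurableSpace Ω› := hX.comap_le
  have hXm : @Measurable Ω _ (mC X) _ X := fun s hs => ⟨s, hs, rfl⟩
  have hrm : @Measurable Ω ℝ (mC X) _ (fun ω => r (X ω)) := hr.comp hXm
  have hrpos : ∀ x, 0 < r x := fun x => lt_of_lt_of_le hε (hrε x)
  have hW0 : ∀ ω, 0 ≤ W ω := fun ω => by rcases hW01 ω with h | h <;> simp [h]
  have hWle : ∀ ω, W ω ≤ 1 := fun ω => by rcases hW01 ω with h | h <;> simp [h]
  -- conditional expectation of (indicator of V⁻¹ s) * W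
  have hkey : ∀ s : Set (ℝ × ℝ × ℝ × ℝ), MeasurableSet s →
      μ[fun ω => Set.indicator (V ⁻¹' s) (fun _ => (1:ℝ)) ω * W ω | (mC X)] =ᵐ[μ]
        fun ω => (μ[Set.indicator (V ⁻¹' s) (fun _ => (1:ℝ)) | (mC X)]) ω * r (X ω) := by
    intro s hs
    have h1 : (fun ω => Set.indicator (V ⁻¹' s) (fun _ => (1:ℝ)) ω * W ω)
        = Set.indicator (V ⁻¹' s ∩ W ⁻¹' {1}) (fun _ => (1:ℝ)) := by
      funext ω
      rcases hW01 ω with h | h <;> by_cases hv : ω ∈ V ⁻¹' s <;>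
        simp [Set.indicator_apply, hv, h]
    have h2 := (condIndepFun_iff_condExp_inter_preimage_eq_mul (μ := μ)
      (hm' := hm') hV hW).mp hVW s {1} hs (measurableSet_singleton 1)
    have h3 : μ[Set.indicator (W ⁻¹' {1}) (fun _ => (1:ℝ)) | (mC X)] =ᵐ[μ] fun ω => r (X ω) := by
      have hWi : Set.indicator (W ⁻¹' {1}) (fun _ => (1:ℝ)) = W := by
        funext ω
        rcases hW01 ω with h | h <;> simp [Set.indicator_apply, h]
      rw [hWi]; exact hrW.symm
    calc μ[fun ω => Set.indicator (V ⁻¹' s) (fun _ => (1:ℝ)) ω * W ω | (mC X)]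
        =ᵐ[μ] μ[Set.indicator (V ⁻¹' s ∩ W ⁻¹' {1}) (fun _ => (1:ℝ)) | (mC X)] := by rw [h1]
      _ =ᵐ[μ] fun ω => (μ[Set.indicator (V ⁻¹' s) (fun _ => (1:ℝ)) | (mC X)]) ω
            * (μ[Set.indicator (W ⁻¹' {1}) (fun _ => (1:ℝ)) | (mC X)]) ω := h2
      _ =ᵐ[μ] fun ω => (μ[Set.indicator (V ⁻¹' s) (fun _ => (1:ℝ)) | (mC X)]) ω * r (X ω) := by
          filter_upwards [h3] with ω hω
          rw [hω]
  -- rectangle identity at the level of real integrals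
  have hrect : ∀ s : Set (ℝ × ℝ × ℝ × ℝ), ∀ t : Set (Fin k → ℝ),
      MeasurableSet s → MeasurableSet t →
      ∫ ω, Set.indicator (V ⁻¹' s) (fun _ => (1:ℝ)) ω
          * Set.indicator (X ⁻¹' t) (fun _ => (1:ℝ)) ω * W ω / r (X ω) ∂μ
        = ∫ ω, Set.indicator (V ⁻¹' s) (fun _ => (1:ℝ)) ω
          * Set.indicator (X ⁻¹' t) (fun _ => (1:ℝ)) ω ∂μ := by
    intro s t hs ht
    set IA : Ω → ℝ := Set.indicator (V ⁻¹' s) (fun _ => (1:ℝ)) with hIA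
    set IB : Ω → ℝ := Set.indicator (X ⁻¹' t) (fun _ => (1:ℝ)) with hIB
    have hIA01 : ∀ ω, IA ω = 0 ∨ IA ω = 1 := fun ω => by
      by_cases h : ω ∈ V ⁻¹' s <;> simp [hIA, Set.indicator_apply, h]
    have hIB01 : ∀ ω, IB ω = 0 ∨ IB ω = 1 := fun ω => by
      by_cases h : ω ∈ X ⁻¹' t <;> simp [hIB, Set.indicator_apply, h]
    have hIAmeas : Measurable IA := measurable_const.indicator (hV hs)
    have hIBmeas : @Measurable Ω ℝ (mC X) _ IB := measurable_const.indicator (hXm ht)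
    set c : Ω → ℝ := fun ω => IB ω / r (X ω) with hc
    have hcm : StronglyMeasurable[(mC X)] c := (hIBmeas.div hrm).stronglyMeasurable
    have hcb : ∀ᵐ ω ∂μ, ‖c ω‖ ≤ 1 / ε := by
      refine Eventually.of_forall fun ω => ?_
      have hb1 : 0 ≤ IB ω := by rcases hIB01 ω with h | h <;> simp [h]
      have hb2 : IB ω ≤ 1 := by rcases hIB01 ω with h | h <;> simp [h]
      have h0 : 0 ≤ IB ω / r (X ω) := div_nonneg hb1 (hrpos (X ω)).le
      have h1 : IB ω / r (X ω) ≤ 1 / ε :=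
        div_le_div₀ (by norm_num) hb2 hε (hrε (X ω))
      show ‖IB ω / r (X ω)‖ ≤ 1 / ε
      rw [Real.norm_eq_abs, abs_of_nonneg h0]
      exact h1
    have hg1 : Integrable (fun ω => IA ω * W ω) μ :=
      integrable_of_bounded' ((hIAmeas.mul hW).aestronglyMeasurable) 1
        (Eventually.of_forall fun ω => by
          rcases hIA01 ω with h | h <;> rcases hW01 ω with h' | h' <;> simp [h, h'])
    have hIAint : Integrable IA μ :=
      integrable_of_bounded' hIAmeas.aestronglyMeasurable 1
        (Eventually.of_forall fun ω => by rcases hIA01 ω with h | h <;> simp [h])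
    have hpull := condExp_stronglyMeasurable_mul_of_bound hm' hcm hg1 (1/ε) hcb
    have hpull2 := condExp_stronglyMeasurable_mul_of_bound hm'
      hIBmeas.stronglyMeasurable hIAint 1
      (Eventually.of_forall fun ω => by rcases hIB01 ω with h | h <;> simp [h])
    calc ∫ ω, IA ω * IB ω * W ω / r (X ω) ∂μ
        = ∫ ω, (c * fun ω => IA ω * W ω) ω ∂μ := by
          refine integral_congr_ae (Eventually.of_forall fun ω => ?_)
          show IA ω * IB ω * W ω / r (X ω) = IB ω / r (X ω) * (IA ω * W ω)
          ring
      _ = ∫ ω, (μ[(c * fun ω => IA ω * W ω) | (mC X)]) ω ∂μ := (integral_condExp hm').symm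
      _ = ∫ ω, IB ω * (μ[IA | (mC X)]) ω ∂μ := by
          refine integral_congr_ae ?_
          filter_upwards [hpull, hkey s hs] with ω h1 h2
          rw [h1]
          show c ω * (μ[fun ω => IA ω * W ω | (mC X)]) ω = IB ω * (μ[IA | (mC X)]) ω
          rw [h2]
          have hr0 : r (X ω) ≠ 0 := (hrpos (X ω)).ne'
          show IB ω / r (X ω) * (μ[IA | (mC X)] ω * r (X ω)) = IB ω * μ[IA | (mC X)] ω
          rw [div_mul_eq_mul_div, mul_div_assoc, mul_div_cancel_right₀ _ hr0]
      _ = ∫ ω, (μ[(IB * IA) | (mC X)]) ω ∂μ := by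
          refine (integral_congr_ae ?_).symm
          filter_upwards [hpull2] with ω h1
          rw [h1]
          rfl
      _ = ∫ ω, (IB * IA) ω ∂μ := integral_condExp hm'
      _ = ∫ ω, IA ω * IB ω ∂μ := by
          refine integral_congr_ae (Eventually.of_forall fun ω => ?_)
          show IB ω * IA ω = IA ω * IB ω
          ring
  -- the two pushforward measures agree
  set P : Ω → (ℝ × ℝ × ℝ × ℝ) × (Fin k → ℝ) := fun ω => (V ω, X ω) with hP
  have hPm : Measurable P := hV.prodMk hX
  set w : Ω → ℝ≥0 := fun ω => Real.toNNReal (W ω / r (X ω)) with hw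
  have hwm : Measurable w := (hW.div (hr.comp hX)).real_toNNReal
  have hdivnn : ∀ ω, 0 ≤ W ω / r (X ω) :=
    fun ω => div_nonneg (hW0 ω) (hrpos (X ω)).le
  have hdivb : ∀ ω, W ω / r (X ω) ≤ 1 / ε :=
    fun ω => div_le_div₀ (by norm_num) (hWle ω) hε (hrε (X ω))
  have hwint : Integrable (fun ω => W ω / r (X ω)) μ :=
    integrable_of_bounded' ((hW.div (hr.comp hX)).aestronglyMeasurable) (1/ε)
      (Eventually.of_forall fun ω => by
        rw [abs_of_nonneg (hdivnn ω)]; exact hdivb ω)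
  have hbox : ∀ s : Set (ℝ × ℝ × ℝ × ℝ), ∀ t : Set (Fin k → ℝ),
      MeasurableSet s → MeasurableSet t →
      ((μ.withDensity fun ω => ((w ω : ℝ≥0) : ℝ≥0∞)).map P) (s ×ˢ t)
        = (μ.map P) (s ×ˢ t) := by
    intro s t hs ht
    have hst : MeasurableSet (s ×ˢ t) := hs.prod ht
    have hpre : P ⁻¹' (s ×ˢ t) = V ⁻¹' s ∩ X ⁻¹' t := by
      ext ω; simp [hP, Set.mem_prod]
    have hEm : MeasurableSet (V ⁻¹' s ∩ X ⁻¹' t) := (hV hs).inter (hX ht)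
    rw [Measure.map_apply hPm hst, Measure.map_apply hPm hst, hpre,
      withDensity_apply _ hEm]
    set E := V ⁻¹' s ∩ X ⁻¹' t with hE
    have l1 : ∫⁻ ω in E, ((w ω : ℝ≥0) : ℝ≥0∞) ∂μ
        = ENNReal.ofReal (∫ ω, Set.indicator E (fun ω => W ω / r (X ω)) ω ∂μ) := by
      rw [← lintegral_indicator hEm]
      rw [ofReal_integral_eq_lintegral_ofReal (hwint.indicator hEm)
        (Eventually.of_forall fun ω => by
          by_cases h : ω ∈ E <;> simp [Set.indicator_apply, h, hdivnn ω])]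
      refine lintegral_congr fun ω => ?_
      by_cases h : ω ∈ E <;>
        simp [Set.indicator_apply, h, hw, ENNReal.ofReal]
    have l2 : (fun ω => Set.indicator E (fun ω => W ω / r (X ω)) ω) = fun ω =>
        Set.indicator (V ⁻¹' s) (fun _ => (1:ℝ)) ω
          * Set.indicator (X ⁻¹' t) (fun _ => (1:ℝ)) ω * W ω / r (X ω) := by
      funext ω
      by_cases h1 : ω ∈ V ⁻¹' s <;> by_cases h2 : ω ∈ X ⁻¹' t <;>
        simp [Set.indicator_apply, hE, h1, h2]
    have l3 : (fun ω => Set.indicator (V ⁻¹' s) (fun _ => (1:ℝ)) ω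
        * Set.indicator (X ⁻¹' t) (fun _ => (1:ℝ)) ω) = Set.indicator E (fun _ => (1:ℝ)) := by
      funext ω
      by_cases h1 : ω ∈ V ⁻¹' s <;> by_cases h2 : ω ∈ X ⁻¹' t <;>
        simp [Set.indicator_apply, hE, h1, h2]
    rw [l1, l2, hrect s t hs ht, l3, integral_indicator_const (1:ℝ) hEm]
    simp [ENNReal.ofReal_toReal (measure_ne_top μ E)]
  haveI : IsFiniteMeasure (μ.withDensity fun ω => ((w ω : ℝ≥0) : ℝ≥0∞)) := by
    constructor
    rw [withDensity_apply _ MeasurableSet.univ, setLIntegral_univ]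
    calc ∫⁻ ω, ((w ω : ℝ≥0) : ℝ≥0∞) ∂μ
        ≤ ∫⁻ _, ENNReal.ofReal (1/ε) ∂μ := by
          refine lintegral_mono fun ω => ?_
          have : ((w ω : ℝ≥0) : ℝ≥0∞) = ENNReal.ofReal (W ω / r (X ω)) := by
            simp [hw, ENNReal.ofReal]
          rw [this]
          exact ENNReal.ofReal_le_ofReal (hdivb ω)
      _ < ⊤ := by simp [lintegral_const]
  have hmeq : (μ.withDensity fun ω => ((w ω : ℝ≥0) : ℝ≥0∞)).map P = μ.map P := by
    refine ext_of_generate_finite _ generateFrom_prod.symm isPiSystem_prod ?_ ?_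
    · rintro _ ⟨s, hs, t, ht, rfl⟩
      exact hbox s t hs ht
    · have := hbox Set.univ Set.univ MeasurableSet.univ MeasurableSet.univ
      simpa [Set.univ_prod_univ] using this
  have e2 : ∫ ω, f (V ω, X ω) ∂μ = ∫ p, f p ∂(μ.map P) :=
    (integral_map hPm.aemeasurable hf.aestronglyMeasurable).symm
  have e1 : ∫ ω, f (V ω, X ω) * W ω / r (X ω) ∂μ
      = ∫ p, f p ∂((μ.withDensity fun ω => ((w ω : ℝ≥0) : ℝ≥0∞)).map P) := by
    rw [integral_map hPm.aemeasurable hf.aestronglyMeasurable,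
      integral_withDensity_eq_integral_smul hwm (fun ω => f (P ω))]
    refine integral_congr_ae (Eventually.of_forall fun ω => ?_)
    have : (w ω : ℝ) = W ω / r (X ω) := Real.coe_toNNReal _ (hdivnn ω)
    show f (V ω, X ω) * W ω / r (X ω) = w ω • f (P ω)
    rw [NNReal.smul_def, this, smul_eq_mul]
    ring
  rw [e1, e2, hmeq]

/-- **Local treatment effect identification, no censoring** (the identification underlying
the paper's Theorem 7 and Section 4.3): under the instrumental-variable assumptions, for
every bounded measurable `g`,
`E[g(Y,X)·T·Z/q(X)] − E[g(Y,X)·T·(1−Z)/(1−q(X))] = E[g(Y(1),X)·1{T(1) > T(0)}]` and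
`E[g(Y,X)·(1−T)·(1−Z)/(1−q(X))] − E[g(Y,X)·(1−T)·Z/q(X)] = E[g(Y(0),X)·1{T(1) > T(0)}]`. -/
theorem late_identification_no_censoring
    {Ω : Type*} [MeasurableSpace Ω] [StandardBorelSpace Ω] [Nonempty Ω]
    (μ : Measure Ω) [IsProbabilityMeasure μ] {k : ℕ}
    (X : Ω → (Fin k → ℝ)) (hX : Measurable X)
    (Z : Ω → ℝ) (hZ : Measurable Z) (hZ01 : ∀ ω, Z ω = 0 ∨ Z ω = 1)
    (T0 T1 : Ω → ℝ) (hT0 : Measurable T0) (hT1 : Measurable T1)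
    (hT001 : ∀ ω, T0 ω = 0 ∨ T0 ω = 1) (hT101 : ∀ ω, T1 ω = 0 ∨ T1 ω = 1)
    (Y0 Y1 : Ω → ℝ) (hY0 : Measurable Y0) (hY1 : Measurable Y1)
    (T : Ω → ℝ) (hT : ∀ ω, T ω = Z ω * T1 ω + (1 - Z ω) * T0 ω)
    (Y : Ω → ℝ) (hY : ∀ ω, Y ω = T ω * Y1 ω + (1 - T ω) * Y0 ω)
    (hiv : CondIndepFun (MeasurableSpace.comap X inferInstance) hX.comap_le
      (fun ω => (Y0 ω, Y1 ω, T0 ω, T1 ω)) Z μ)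
    (ε : ℝ) (hε : 0 < ε) (hε2 : ε ≤ 1 / 2)
    (q : (Fin k → ℝ) → ℝ) (hq : Measurable q)
    (hqX : (fun ω => q (X ω)) =ᵐ[μ] μ[Z | MeasurableSpace.comap X inferInstance])
    (hoverlap : ∀ᵐ ω ∂μ, ε ≤ q (X ω) ∧ q (X ω) ≤ 1 - ε)
    (hmono : ∀ᵐ ω ∂μ, T0 ω ≤ T1 ω)
    (g : ℝ × (Fin k → ℝ) → ℝ) (hg : Measurable g)
    (M : ℝ) (hM : ∀ z, |g z| ≤ M) :
    ((∫ ω, g (Y ω, X ω) * T ω * Z ω / q (X ω) ∂μ)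
        - (∫ ω, g (Y ω, X ω) * T ω * (1 - Z ω) / (1 - q (X ω)) ∂μ)
      = ∫ ω, g (Y1 ω, X ω) * (if T0 ω < T1 ω then (1 : ℝ) else 0) ∂μ) ∧
    ((∫ ω, g (Y ω, X ω) * (1 - T ω) * (1 - Z ω) / (1 - q (X ω)) ∂μ)
        - (∫ ω, g (Y ω, X ω) * (1 - T ω) * Z ω / q (X ω) ∂μ)
      = ∫ ω, g (Y0 ω, X ω) * (if T0 ω < T1 ω then (1 : ℝ) else 0) ∂μ) := by
  have hm' : MeasurableSpace.comap X inferInstance ≤ ‹MeasurableSpace Ω› := hX.comap_le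
  set V : Ω → ℝ × ℝ × ℝ × ℝ := fun ω => (Y0 ω, Y1 ω, T0 ω, T1 ω) with hVdef
  have hV : Measurable V := hY0.prodMk (hY1.prodMk (hT0.prodMk hT1))
  have hε' : ε ≤ 1 - ε := by linarith
  set q' : (Fin k → ℝ) → ℝ := fun x => max ε (min (q x) (1 - ε)) with hq'def
  have hq'm : Measurable q' := measurable_const.max (hq.min measurable_const)
  have hq'lb : ∀ x, ε ≤ q' x := fun x => le_max_left _ _
  have hq'ub : ∀ x, q' x ≤ 1 - ε := fun x => max_le hε' (min_le_right _ _)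
  have hq'1 : ∀ x, q' x ≤ 1 := fun x => by linarith [hq'ub x]
  have h1q'lb : ∀ x, ε ≤ 1 - q' x := fun x => by linarith [hq'ub x]
  have h1q'1 : ∀ x, 1 - q' x ≤ 1 := fun x => by linarith [hq'lb x]
  have hqq' : ∀ᵐ ω ∂μ, q' (X ω) = q (X ω) := by
    filter_upwards [hoverlap] with ω h
    show max ε (min (q (X ω)) (1 - ε)) = q (X ω)
    rw [min_eq_left h.2, max_eq_right h.1]
  have hq'q : (fun ω => q' (X ω)) =ᵐ[μ] fun ω => q (X ω) := hqq'
  have hq'X : (fun ω => q' (X ω)) =ᵐ[μ] μ[Z | MeasurableSpace.comap X inferInstance] :=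
    hq'q.trans hqX
  have hZint : Integrable Z μ := integrable_of_bounded' hZ.aestronglyMeasurable 1
    (Eventually.of_forall fun ω => by rcases hZ01 ω with h | h <;> simp [h])
  have hZ'01 : ∀ ω, 1 - Z ω = 0 ∨ 1 - Z ω = 1 := fun ω => by
    rcases hZ01 ω with h | h
    · right; rw [h]; ring
    · left; rw [h]; ring
  have h1q'X : (fun ω => 1 - q' (X ω))
      =ᵐ[μ] μ[(fun ω => 1 - Z ω) | MeasurableSpace.comap X inferInstance] := by
    have hsub : μ[(fun _ => (1:ℝ)) - Z | MeasurableSpace.comap X inferInstance]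
        =ᵐ[μ] μ[(fun _ => (1:ℝ)) | MeasurableSpace.comap X inferInstance]
          - μ[Z | MeasurableSpace.comap X inferInstance] :=
      condExp_sub (integrable_const 1) hZint _
    filter_upwards [hsub, hq'X] with ω h1 h2
    show 1 - q' (X ω) = (μ[(fun ω => 1 - Z ω) | MeasurableSpace.comap X inferInstance]) ω
    have heq : (μ[(fun ω => 1 - Z ω) | MeasurableSpace.comap X inferInstance]) ω
        = (μ[(fun _ => (1:ℝ)) - Z | MeasurableSpace.comap X inferInstance]) ω := rfl
    rw [heq, h1, Pi.sub_apply, condExp_const hm', ← h2]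
  have hiv2 : CondIndepFun (MeasurableSpace.comap X inferInstance) hX.comap_le
      V (fun ω => 1 - Z ω) μ :=
    hiv.comp measurable_id (measurable_const.sub measurable_id)
  have hM0 : 0 ≤ M := le_trans (abs_nonneg _) (hM (0, 0))
  set f₁ : (ℝ × ℝ × ℝ × ℝ) × (Fin k → ℝ) → ℝ :=
    fun p => if p.1.2.2.2 = 1 then g (p.1.2.1, p.2) else 0 with hf₁def
  set f₂ : (ℝ × ℝ × ℝ × ℝ) × (Fin k → ℝ) → ℝ :=
    fun p => if p.1.2.2.1 = 1 then g (p.1.2.1, p.2) else 0 with hf₂def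
  set f₃ : (ℝ × ℝ × ℝ × ℝ) × (Fin k → ℝ) → ℝ :=
    fun p => if p.1.2.2.1 = 0 then g (p.1.1, p.2) else 0 with hf₃def
  set f₄ : (ℝ × ℝ × ℝ × ℝ) × (Fin k → ℝ) → ℝ :=
    fun p => if p.1.2.2.2 = 0 then g (p.1.1, p.2) else 0 with hf₄def
  have hf₁ : Measurable f₁ :=
    Measurable.ite (measurable_fst.snd.snd.snd (measurableSet_singleton 1))
      (hg.comp (measurable_fst.snd.fst.prodMk measurable_snd)) measurable_const
  have hf₂ : Measurable f₂ :=
    Measurable.ite (measurable_fst.snd.snd.fst (measurableSet_singleton 1))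
      (hg.comp (measurable_fst.snd.fst.prodMk measurable_snd)) measurable_const
  have hf₃ : Measurable f₃ :=
    Measurable.ite (measurable_fst.snd.snd.fst (measurableSet_singleton 0))
      (hg.comp (measurable_fst.fst.prodMk measurable_snd)) measurable_const
  have hf₄ : Measurable f₄ :=
    Measurable.ite (measurable_fst.snd.snd.snd (measurableSet_singleton 0))
      (hg.comp (measurable_fst.fst.prodMk measurable_snd)) measurable_const
  have hMf₁ : ∀ p, |f₁ p| ≤ M := fun p => by
    by_cases h : p.1.2.2.2 = 1 <;> simp [hf₁def, h, hM _, hM0]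
  have hMf₂ : ∀ p, |f₂ p| ≤ M := fun p => by
    by_cases h : p.1.2.2.1 = 1 <;> simp [hf₂def, h, hM _, hM0]
  have hMf₃ : ∀ p, |f₃ p| ≤ M := fun p => by
    by_cases h : p.1.2.2.1 = 0 <;> simp [hf₃def, h, hM _, hM0]
  have hMf₄ : ∀ p, |f₄ p| ≤ M := fun p => by
    by_cases h : p.1.2.2.2 = 0 <;> simp [hf₄def, h, hM _, hM0]
  have k1 : ∫ ω, f₁ (V ω, X ω) * Z ω / q' (X ω) ∂μ = ∫ ω, f₁ (V ω, X ω) ∂μ :=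
    key_reweight μ X hX V hV Z hZ hZ01 hiv ε hε q' hq'm hq'lb hq'1 hq'X f₁ hf₁ M hMf₁
  have k2 : ∫ ω, f₂ (V ω, X ω) * (1 - Z ω) / (1 - q' (X ω)) ∂μ = ∫ ω, f₂ (V ω, X ω) ∂μ :=
    key_reweight μ X hX V hV (fun ω => 1 - Z ω) (measurable_const.sub hZ) hZ'01 hiv2 ε hε
      (fun x => 1 - q' x) (measurable_const.sub hq'm) h1q'lb h1q'1 h1q'X f₂ hf₂ M hMf₂
  have k3 : ∫ ω, f₃ (V ω, X ω) * (1 - Z ω) / (1 - q' (X ω)) ∂μ = ∫ ω, f₃ (V ω, X ω) ∂μ :=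
    key_reweight μ X hX V hV (fun ω => 1 - Z ω) (measurable_const.sub hZ) hZ'01 hiv2 ε hε
      (fun x => 1 - q' x) (measurable_const.sub hq'm) h1q'lb h1q'1 h1q'X f₃ hf₃ M hMf₃
  have k4 : ∫ ω, f₄ (V ω, X ω) * Z ω / q' (X ω) ∂μ = ∫ ω, f₄ (V ω, X ω) ∂μ :=
    key_reweight μ X hX V hV Z hZ hZ01 hiv ε hε q' hq'm hq'lb hq'1 hq'X f₄ hf₄ M hMf₄
  have t1 : ∫ ω, g (Y ω, X ω) * T ω * Z ω / q (X ω) ∂μ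
      = ∫ ω, f₁ (V ω, X ω) * Z ω / q' (X ω) ∂μ := by
    refine integral_congr_ae ?_
    filter_upwards [hqq'] with ω hqe
    rw [← hqe]
    congr 1
    rcases hZ01 ω with h | h
    · simp [h]
    · have hTT : T ω = T1 ω := by rw [hT ω, h]; ring
      rcases hT101 ω with h1 | h1
      · simp [hf₁def, hVdef, h, hTT, h1]
      · have hYY : Y ω = Y1 ω := by rw [hY ω, hTT, h1]; ring
        simp [hf₁def, hVdef, h, hTT, h1, hYY]
  have t2 : ∫ ω, g (Y ω, X ω) * T ω * (1 - Z ω) / (1 - q (X ω)) ∂μ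
      = ∫ ω, f₂ (V ω, X ω) * (1 - Z ω) / (1 - q' (X ω)) ∂μ := by
    refine integral_congr_ae ?_
    filter_upwards [hqq'] with ω hqe
    rw [← hqe]
    congr 1
    rcases hZ01 ω with h | h
    · have hTT : T ω = T0 ω := by rw [hT ω, h]; ring
      rcases hT001 ω with h0 | h0
      · simp [hf₂def, hVdef, h, hTT, h0]
      · have hYY : Y ω = Y1 ω := by rw [hY ω, hTT, h0]; ring
        simp [hf₂def, hVdef, h, hTT, h0, hYY]
    · simp [h]
  have t3 : ∫ ω, g (Y ω, X ω) * (1 - T ω) * (1 - Z ω) / (1 - q (X ω)) ∂μ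
      = ∫ ω, f₃ (V ω, X ω) * (1 - Z ω) / (1 - q' (X ω)) ∂μ := by
    refine integral_congr_ae ?_
    filter_upwards [hqq'] with ω hqe
    rw [← hqe]
    congr 1
    rcases hZ01 ω with h | h
    · have hTT : T ω = T0 ω := by rw [hT ω, h]; ring
      rcases hT001 ω with h0 | h0
      · have hYY : Y ω = Y0 ω := by rw [hY ω, hTT, h0]; ring
        simp [hf₃def, hVdef, h, hTT, h0, hYY]
      · simp [hf₃def, hVdef, h, hTT, h0]
    · simp [h]
  have t4 : ∫ ω, g (Y ω, X ω) * (1 - T ω) * Z ω / q (X ω) ∂μ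
      = ∫ ω, f₄ (V ω, X ω) * Z ω / q' (X ω) ∂μ := by
    refine integral_congr_ae ?_
    filter_upwards [hqq'] with ω hqe
    rw [← hqe]
    congr 1
    rcases hZ01 ω with h | h
    · simp [h]
    · have hTT : T ω = T1 ω := by rw [hT ω, h]; ring
      rcases hT101 ω with h1 | h1
      · have hYY : Y ω = Y0 ω := by rw [hY ω, hTT, h1]; ring
        simp [hf₄def, hVdef, h, hTT, h1, hYY]
      · simp [hf₄def, hVdef, h, hTT, h1]
  have hIf : ∀ (f : (ℝ × ℝ × ℝ × ℝ) × (Fin k → ℝ) → ℝ), Measurable f → (∀ p, |f p| ≤ M) →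
      Integrable (fun ω => f (V ω, X ω)) μ := fun f hf hMf =>
    integrable_of_bounded' ((hf.comp (hV.prodMk hX)).aestronglyMeasurable) M
      (Eventually.of_forall fun ω => hMf _)
  constructor
  · rw [t1, t2, k1, k2, ← integral_sub (hIf f₁ hf₁ hMf₁) (hIf f₂ hf₂ hMf₂)]
    refine integral_congr_ae ?_
    filter_upwards [hmono] with ω hmω
    show f₁ (V ω, X ω) - f₂ (V ω, X ω) = g (Y1 ω, X ω) * (if T0 ω < T1 ω then (1:ℝ) else 0)
    rcases hT001 ω with h0 | h0 <;> rcases hT101 ω with h1 | h1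
    · simp [hf₁def, hf₂def, hVdef, h0, h1]
    · simp [hf₁def, hf₂def, hVdef, h0, h1]
    · exfalso; rw [h0, h1] at hmω; linarith
    · simp [hf₁def, hf₂def, hVdef, h0, h1]
  · rw [t3, t4, k3, k4, ← integral_sub (hIf f₃ hf₃ hMf₃) (hIf f₄ hf₄ hMf₄)]
    refine integral_congr_ae ?_
    filter_upwards [hmono] with ω hmω
    show f₃ (V ω, X ω) - f₄ (V ω, X ω) = g (Y0 ω, X ω) * (if T0 ω < T1 ω then (1:ℝ) else 0)
    rcases hT001 ω with h0 | h0 <;> rcases hT101 ω with h1 | h1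
    · simp [hf₃def, hf₄def, hVdef, h0, h1]
    · simp [hf₃def, hf₄def, hVdef, h0, h1]
    · exfalso; rw [h0, h1] at hmω; linarith
    · simp [hf₃def, hf₄def, hVdef, h0, h1]
end
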